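/- arXiv:0903.0518 — 8 statements merged into one kernel-verified Lean document; each statement's English description precedes it below -/
import Mathlib

section
/- Fix N ≥ 2 and t with 0 < t ≤ 2N/3. If X is a real random variable whose distribution is symmetric (invariant under x ↦ −x), unimodal at 0, supported on [−N, N], and satisfies Var(X) = 1, then P(X ≥ t) ≤ 1/2 − t/(2√3) when 0 < t ≤ 2/√3, and P(X ≥ t) ≤ 2/(9t²) when 2/√3 < t ≤ 2N/3. -/
open MeasureTheory ProbabilityTheory


def UnimodalAt (μ : Measure ℝ) (m : ℝ) : Prop :=
  ConvexOn ℝ (Set.Iio m) (fun x => (μ (Set.Iic x)).toReal) ∧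
  ConcaveOn ℝ (Set.Ioi m) (fun x => (μ (Set.Iic x)).toReal)

def SymmetricDist (μ : Measure ℝ) : Prop :=
  μ.map (fun x => -x) = μ

lemma gauss_alg2 (a b t : ℝ) (ha : 0 ≤ a) (hb : 0 ≤ b) (ht : 0 < t)
    (hab : 2*a^3 ≤ 3*b^2) : a - b*t ≤ 2/(9*t^2) := by
  have ht2 : (0:ℝ) < 9*t^2 := by positivity
  have key : 9*a*t^2 ≤ 9*b*t^3 + 2 := by
    have hcube : (9*a*t^2)^3 ≤ (9*b*t^3 + 2)^3 := by
      nlinarith [mul_nonneg (sq_nonneg ((9/2)*b*t^3 - 2)) (show (0:ℝ) ≤ 8*((9/2)*b*t^3) + 2 by positivity),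
        pow_pos ht 2, pow_pos ht 3, pow_pos (pow_pos ht 2) 3, sq_nonneg t, sq_nonneg b,
        mul_nonneg (mul_nonneg hb (pow_pos ht 3).le) (sq_nonneg (a*t^2)),
        mul_le_mul_of_nonneg_right hab (pow_pos (pow_pos ht 3) 2).le]
    have h1 : (0:ℝ) ≤ 9*a*t^2 := by positivity
    have h2 : (0:ℝ) ≤ 9*b*t^3 + 2 := by positivity
    exact (pow_le_pow_iff_left₀ h1 h2 (by norm_num)).mp hcube
  rw [le_div_iff₀ ht2]
  nlinarith

lemma gauss_alg1 (a b t : ℝ) (ha0 : 0 ≤ a) (hb : 0 ≤ b) (ht : 0 < t)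
    (ha : a ≤ 1/2) (hab : 2*a^3 ≤ 3*b^2) (htc : t ≤ 2 / Real.sqrt 3) :
    a - b*t ≤ 1/2 - t/(2*Real.sqrt 3) := by
  have h3 : (0:ℝ) < Real.sqrt 3 := Real.sqrt_pos.mpr (by norm_num)
  have h3sq : Real.sqrt 3 ^ 2 = 3 := Real.sq_sqrt (by norm_num)
  set r := Real.sqrt 3 with hr
  have hr2 : 1 < r := by nlinarith
  rcases le_or_gt b (1/(2*r)) with hb2 | hb2
  · -- small-slope branch : show a ≤ 1/6 + 2*b/r first
    have hkey : a ≤ 1/6 + 2*b/r := by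
      rcases le_or_gt (6*a) 1 with h6 | h6
      · have : 0 ≤ 2*b/r := by positivity
        linarith
      · have h8 : (0:ℝ) ≤ 8*a - 1 := by linarith
        have hsq : (6*a-1)^2 ≤ (4*r*b)^2 := by
          nlinarith [mul_nonneg (sq_nonneg (2*a-1)) h8]
        have h4rb : (0:ℝ) ≤ 4*r*b := by positivity
        have h6a : 6*a - 1 ≤ 4*r*b := by nlinarith
        have : 2*b/r = 2*r*b/3 := by
          rw [div_eq_div_iff h3.ne' (by norm_num)]
          nlinarith
        rw [this]; linarith
    -- now: t*(b - 1/(2r)) ≥ (2/r)*(b - 1/(2r))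
    have hneg : b - 1/(2*r) ≤ 0 := by linarith
    have ht2r : t ≤ 2/r := htc
    have hmul : (2/r)*(b - 1/(2*r)) ≤ t*(b - 1/(2*r)) := by
      apply mul_le_mul_of_nonpos_right ht2r hneg
    have hexp : (2/r)*(b - 1/(2*r)) = 2*b/r - 1/3 := by
      field_simp
      nlinarith
    have hgoal : t/(2*r) = t*(1/(2*r)) := by ring
    rw [hgoal]
    nlinarith [hmul, hexp, hkey]
  · have hpos : 0 ≤ (b - 1/(2*r))*t := mul_nonneg (by linarith) ht.le
    have : t/(2*r) = t*(1/(2*r)) := by ring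
    rw [this]; nlinarith

open Set


section aux
variable {μ : Measure ℝ} [IsProbabilityMeasure μ]

lemma symm_Ici_eq_Iic (hsymm : μ.map (fun x => -x) = μ) (s : ℝ) :
    μ (Set.Ici s) = μ (Set.Iic (-s)) := by
  conv_lhs => rw [← hsymm]
  rw [Measure.map_apply measurable_neg measurableSet_Ici]
  congr 1
  ext x; simp [le_neg]

lemma symm_half (hsymm : μ.map (fun x => -x) = μ) {s : ℝ} (hs : 0 < s) :
    (μ (Set.Iic (-s))).toReal ≤ 1/2 := by
  have hd : Disjoint (Set.Iic (-s)) (Set.Ici s) :=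
    Set.Iic_disjoint_Ici.mpr (by intro h; linarith)
  have hu : μ (Set.Iic (-s)) + μ (Set.Ici s) ≤ 1 := by
    rw [← measure_union hd measurableSet_Ici]
    calc μ (Set.Iic (-s) ∪ Set.Ici s) ≤ μ Set.univ := measure_mono (Set.subset_univ _)
      _ = 1 := measure_univ
  rw [symm_Ici_eq_Iic hsymm] at hu
  have hfin : μ (Set.Iic (-s)) ≠ ⊤ := measure_ne_top μ _
  have h2 := ENNReal.toReal_mono (by norm_num) hu
  rw [ENNReal.toReal_add hfin hfin, ENNReal.toReal_one] at h2
  linarith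

lemma layercake_neg :
    ∫⁻ x in Set.Iio 0, ENNReal.ofReal (x^2) ∂μ
      = ∫⁻ s in Set.Ioi 0, μ (Set.Iic (-s)) * ENNReal.ofReal (2*s) := by
  have f_nn : 0 ≤ᵐ[μ.restrict (Set.Iio 0)] (fun x : ℝ => -x) := by
    refine (ae_restrict_iff' measurableSet_Iio).2 (ae_of_all _ fun x hx => ?_)
    simp only [Set.mem_Iio] at hx
    simp only [Pi.zero_apply]
    linarith
  have g_nn : ∀ᵐ t ∂(volume.restrict (Set.Ioi (0:ℝ))), 0 ≤ (fun s : ℝ => 2*s) t := by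
    refine (ae_restrict_iff' measurableSet_Ioi).2 (ae_of_all _ fun s hs => ?_)
    simp only [Set.mem_Ioi] at hs
    show (0:ℝ) ≤ 2*s
    linarith
  have key := lintegral_comp_eq_lintegral_meas_le_mul (μ.restrict (Set.Iio 0))
    (f := fun x : ℝ => -x) (g := fun s : ℝ => 2*s) f_nn
    measurable_neg.aemeasurable
    (fun t _ => (continuous_const.mul continuous_id).intervalIntegrable 0 t) g_nn
  have hLHS : ∀ x : ℝ, ENNReal.ofReal (∫ s in (0:ℝ)..(-x), 2*s) = ENNReal.ofReal (x^2) := by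
    intro x
    congr 1
    open intervalIntegral in rw [intervalIntegral.integral_const_mul, integral_id]
    ring
  simp only [hLHS] at key
  rw [key]
  refine setLIntegral_congr_fun measurableSet_Ioi (fun s hs => ?_)
  simp only [Set.mem_Ioi] at hs
  beta_reduce
  have hset : {a : ℝ | s ≤ -a} = Set.Iic (-s) := by ext x; simp [le_neg]
  rw [hset, Measure.restrict_apply measurableSet_Iic,
    Set.inter_eq_left.mpr (fun x hx => by simp only [Set.mem_Iic] at hx; simp only [Set.mem_Iio]; linarith)]

lemma second_moment_half (hsymm : μ.map (fun x => -x) = μ)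
    (hint : Integrable (fun x : ℝ => x^2) μ) (h1 : ∫ x, x^2 ∂μ = 1) :
    ∫⁻ x in Set.Iio 0, ENNReal.ofReal (x^2) ∂μ = ENNReal.ofReal (1/2) := by
  have hmble : Measurable (fun x : ℝ => ENNReal.ofReal (x^2)) :=
    (measurable_id.pow_const 2).ennreal_ofReal
  have htot : ∫⁻ x, ENNReal.ofReal (x^2) ∂μ = ENNReal.ofReal 1 := by
    rw [← h1, ← ofReal_integral_eq_lintegral_ofReal hint (ae_of_all _ fun x => sq_nonneg x)]
  have hAB : ∫⁻ x in Set.Iio 0, ENNReal.ofReal (x^2) ∂μ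
      = ∫⁻ x in Set.Ioi 0, ENNReal.ofReal (x^2) ∂μ := by
    conv_lhs => rw [← hsymm]
    rw [Measure.restrict_map measurable_neg measurableSet_Iio,
      lintegral_map hmble measurable_neg]
    have hpre : (fun x : ℝ => -x) ⁻¹' (Set.Iio 0) = Set.Ioi 0 := by ext x; simp
    rw [hpre]
    simp [neg_sq]
  have hIci : ∫⁻ x in Set.Ici 0, ENNReal.ofReal (x^2) ∂μ
      = ∫⁻ x in Set.Ioi 0, ENNReal.ofReal (x^2) ∂μ := by
    rw [← Set.Ioi_union_left, lintegral_union (measurableSet_singleton 0)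
      (Set.disjoint_singleton_right.mpr (by simp)), lintegral_singleton]
    simp
  have hsplit : ∫⁻ x in Set.Iio 0, ENNReal.ofReal (x^2) ∂μ
      + ∫⁻ x in Set.Iio 0, ENNReal.ofReal (x^2) ∂μ = ENNReal.ofReal 1 := by
    have hsum := lintegral_add_compl (μ := μ) (fun x : ℝ => ENNReal.ofReal (x^2)) (measurableSet_Iio (a := (0:ℝ)))
    rw [compl_Iio, hIci, ← hAB, htot] at hsum
    exact hsum
  set A := ∫⁻ x in Set.Iio 0, ENNReal.ofReal (x^2) ∂μ with hA
  have hAfin : A ≠ ⊤ := by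
    intro h
    rw [h] at hsplit
    simp at hsplit
  have h3 := congrArg ENNReal.toReal hsplit
  rw [ENNReal.toReal_add hAfin hAfin, ENNReal.toReal_ofReal (by norm_num)] at h3
  rw [← ENNReal.ofReal_toReal hAfin]
  congr 1
  linarith

end aux

section core
variable {μ : Measure ℝ} [IsProbabilityMeasure μ]

lemma gauss_main (hsymm : μ.map (fun x => -x) = μ)
    (hconv : ConvexOn ℝ (Set.Iio 0) (fun x => (μ (Set.Iic x)).toReal))
    (N t : ℝ) (hN : 0 < N) (ht : 0 < t)
    (hsupp : μ (Set.Icc (-N) N)ᶜ = 0)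
    (hint : Integrable (fun x : ℝ => x^2) μ) (h1 : ∫ x, x^2 ∂μ = 1) :
    ∃ a b : ℝ, 0 ≤ a ∧ 0 ≤ b ∧ a ≤ 1/2 ∧ 2*a^3 ≤ 3*b^2 ∧
      (μ (Set.Iic (-t))).toReal = a - b*t := by
  set F : ℝ → ℝ := fun x => (μ (Set.Iic x)).toReal with hFdef
  have hLC : ∫⁻ s in Set.Ioi 0, μ (Set.Iic (-s)) * ENNReal.ofReal (2*s)
      = ENNReal.ofReal (1/2) := by
    rw [← layercake_neg]
    exact second_moment_half hsymm hint h1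
  -- convexity of s ↦ F (-s) on Ioi 0
  have hgconv : ConvexOn ℝ (Set.Ioi (0:ℝ)) (fun s => F (-s)) := by
    obtain ⟨hc, hineq⟩ := hconv
    refine ⟨convex_Ioi 0, fun x hx y hy p q hp hq hpq => ?_⟩
    have hx' : -x ∈ Set.Iio 0 := by
      simp only [Set.mem_Ioi] at hx; simp only [Set.mem_Iio]; linarith
    have hy' : -y ∈ Set.Iio 0 := by
      simp only [Set.mem_Ioi] at hy; simp only [Set.mem_Iio]; linarith
    have h := hineq hx' hy' hp hq hpq
    have harg : p • (-x) + q • (-y) = -(p • x + q • y) := by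
      simp only [smul_eq_mul]; ring
    rw [harg] at h
    exact h
  have hub : ∀ s : ℝ, 0 < s → F (-s) ≤ 1/2 := fun s hs => symm_half hsymm hs
  have hnn : ∀ s : ℝ, 0 ≤ F s := fun s => ENNReal.toReal_nonneg
  have hgzero : ∀ s : ℝ, N < s → F (-s) = 0 := by
    intro s hs
    have h0 : μ (Set.Iic (-s)) = 0 := by
      refine measure_mono_null (fun x hx => ?_) hsupp
      simp only [Set.mem_Iic] at hx
      simp only [Set.mem_compl_iff, Set.mem_Icc, not_and_or, not_le]
      left; linarith
    simp only [hFdef, h0, ENNReal.toReal_zero]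
  -- supporting slope at t
  set S : Set ℝ := (fun s => (F (-t) - F (-s))/(t - s)) '' (Set.Ioo 0 t) with hSdef
  have hslope : ∀ s u : ℝ, 0 < s → s < t → t < u →
      (F (-t) - F (-s))/(t - s) ≤ (F (-u) - F (-t))/(u - t) :=
    fun s u hs hst htu => hgconv.slope_mono_adjacent (Set.mem_Ioi.mpr hs)
      (Set.mem_Ioi.mpr (ht.trans htu)) hst htu
  have hSne : S.Nonempty := ⟨_, ⟨t/2, ⟨by positivity, by linarith⟩, rfl⟩⟩
  have hSbdd : BddAbove S := by
    refine ⟨(F (-(t+1)) - F (-t))/((t+1) - t), ?_⟩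
    rintro v ⟨s, hs, rfl⟩
    exact hslope s (t+1) hs.1 hs.2 (lt_add_one t)
  set σ : ℝ := sSup S with hσdef
  have hσle : ∀ u : ℝ, t < u → σ ≤ (F (-u) - F (-t))/(u - t) := by
    intro u hu
    refine csSup_le hSne ?_
    rintro v ⟨s, hs, rfl⟩
    exact hslope s u hs.1 hs.2 hu
  have hL : ∀ s : ℝ, 0 < s → F (-t) + σ * (s - t) ≤ F (-s) := by
    intro s hs
    rcases lt_trichotomy s t with h | h | h
    · have hmem : (F (-t) - F (-s))/(t - s) ∈ S := ⟨s, ⟨hs, h⟩, rfl⟩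
      have h2 := le_csSup hSbdd hmem
      rw [div_le_iff₀ (by linarith)] at h2
      have hring : σ * (s - t) = -(σ * (t - s)) := by ring
      linarith
    · subst h; simp
    · have h2 := hσle s h
      rw [le_div_iff₀ (by linarith)] at h2
      linarith
  have hσ0 : σ ≤ 0 := by
    have hNt : t < N + t + 1 := by linarith
    have h2 := hσle (N + t + 1) hNt
    rw [hgzero (N + t + 1) (by linarith)] at h2
    have h3 : (0 - F (-t))/(N + t + 1 - t) ≤ 0 :=
      div_nonpos_of_nonpos_of_nonneg (by linarith [hnn (-t)]) (by linarith)
    linarith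
  set b : ℝ := -σ with hbdef
  have hbnn : 0 ≤ b := by simp only [hbdef]; linarith
  set a : ℝ := F (-t) + b * t with hadef
  have hann : 0 ≤ a := by nlinarith [hnn (-t), mul_nonneg hbnn ht.le]
  have hFt : F (-t) = a - b*t := by simp only [hadef]; ring
  have hσb : σ = -b := by simp only [hbdef]; ring
  clear_value S σ b a
  have hL' : ∀ s : ℝ, 0 < s → a - b*s ≤ F (-s) := by
    intro s hs
    have h2 := hL s hs
    have : F (-t) + σ * (s - t) = a - b*s := by rw [hFt, hσb]; ring
    linarith
  -- a ≤ 1/2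
  have ha12 : a ≤ 1/2 := by
    by_contra hc
    push_neg at hc
    have hden : (0:ℝ) < 2*b+1 := by linarith
    set s₀ : ℝ := (a - 1/2)/(2*b+1) with hs₀def
    have hs₀pos : 0 < s₀ := div_pos (by linarith) hden
    have h2 : a - b*s₀ ≤ 1/2 := le_trans (hL' s₀ hs₀pos) (hub s₀ hs₀pos)
    have h3 : b*s₀ ≤ (a - 1/2)/2 := by
      rw [hs₀def, mul_div_assoc', div_le_div_iff₀ hden (by norm_num : (0:ℝ) < 2)]
      nlinarith
    linarith
  -- main inequality 2a³ ≤ 3b²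
  have h2a3 : 2*a^3 ≤ 3*b^2 := by
    rcases eq_or_lt_of_le hbnn with hb0 | hbpos
    · -- b = 0 : then a = 0
      have hσ0' : σ = 0 := by simp only [hbdef] at hb0; linarith
      have hNt : t < N + t + 1 := by linarith
      have h2 := hσle (N + t + 1) hNt
      rw [hgzero (N + t + 1) (by linarith), hσ0'] at h2
      rw [le_div_iff₀ (by linarith : (0:ℝ) < N + t + 1 - t)] at h2
      have hFt0 : F (-t) = 0 := le_antisymm (by linarith) (hnn (-t))
      have ha0 : a = 0 := by rw [hadef, hFt0, ← hb0]; ring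
      rw [ha0, ← hb0]; norm_num
    · set x₀ : ℝ := a/b with hx₀def
      have hapos : 0 < a := by nlinarith [hnn (-t)]
      have hx₀pos : 0 < x₀ := div_pos hapos hbpos
      have hbx₀ : b * x₀ = a := by
        rw [hx₀def]; field_simp
      clear_value x₀
      have hIoc : ∀ s ∈ Set.Ioc 0 x₀,
          ENNReal.ofReal (2*s*(a - b*s)) ≤ μ (Set.Iic (-s)) * ENNReal.ofReal (2*s) := by
        intro s hs
        obtain ⟨hs0, hsx⟩ := hs
        have hFs := hL' s hs0
        calc ENNReal.ofReal (2*s*(a - b*s))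
            ≤ ENNReal.ofReal (F (-s) * (2*s)) := ENNReal.ofReal_le_ofReal (by nlinarith)
          _ = ENNReal.ofReal (F (-s)) * ENNReal.ofReal (2*s) :=
              ENNReal.ofReal_mul (hnn (-s))
          _ = μ (Set.Iic (-s)) * ENNReal.ofReal (2*s) := by
              rw [hFdef]
              simp only []
              rw [ENNReal.ofReal_toReal (measure_ne_top μ _)]
      have hmble : Measurable (fun s : ℝ => μ (Set.Iic (-s)) * ENNReal.ofReal (2*s)) := by
        have h1m : Antitone (fun s : ℝ => μ (Set.Iic (-s))) := by
          intro u v huv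
          exact measure_mono (Set.Iic_subset_Iic.mpr (by linarith))
        exact h1m.measurable.mul ((measurable_const.mul measurable_id).ennreal_ofReal)
      have hcont : Continuous (fun s : ℝ => 2*s*(a - b*s)) := by fun_prop
      have hintble : IntegrableOn (fun s : ℝ => 2*s*(a - b*s)) (Set.Ioc 0 x₀) volume :=
        hcont.integrableOn_Ioc
      have hnnIoc : 0 ≤ᵐ[volume.restrict (Set.Ioc 0 x₀)] (fun s : ℝ => 2*s*(a - b*s)) := by
        refine (ae_restrict_iff' measurableSet_Ioc).2 (ae_of_all _ fun s hs => ?_)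
        obtain ⟨hs0, hsx⟩ := hs
        have : b*s ≤ a := by
          have := mul_le_mul_of_nonneg_left hsx hbnn
          rw [hbx₀] at this; linarith
        have h2s : (0:ℝ) ≤ 2*s := by linarith
        show (0:ℝ) ≤ 2*s*(a - b*s)
        nlinarith
      have hstep : ENNReal.ofReal (∫ s in (0:ℝ)..x₀, 2*s*(a - b*s)) ≤ ENNReal.ofReal (1/2) := by
        rw [intervalIntegral.integral_of_le hx₀pos.le]
        calc ENNReal.ofReal (∫ s in Set.Ioc 0 x₀, 2*s*(a - b*s))
            = ∫⁻ s in Set.Ioc 0 x₀, ENNReal.ofReal (2*s*(a - b*s)) :=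
              ofReal_integral_eq_lintegral_ofReal hintble hnnIoc
          _ ≤ ∫⁻ s in Set.Ioc 0 x₀, μ (Set.Iic (-s)) * ENNReal.ofReal (2*s) :=
              setLIntegral_mono hmble hIoc
          _ ≤ ∫⁻ s in Set.Ioi 0, μ (Set.Iic (-s)) * ENNReal.ofReal (2*s) :=
              lintegral_mono_set Set.Ioc_subset_Ioi_self
          _ = ENNReal.ofReal (1/2) := hLC
      have hval : ∫ s in (0:ℝ)..x₀, 2*s*(a - b*s) = a^3/(3*b^2) := by
        have hrw : ∀ s : ℝ, (2*s)*(a - b*s) = (2*a)*s - (2*b)*s^2 := fun s => by ring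
        simp only [hrw]
        rw [intervalIntegral.integral_sub (Continuous.intervalIntegrable (by fun_prop) _ _)
            (Continuous.intervalIntegrable (by fun_prop) _ _),
          intervalIntegral.integral_const_mul, intervalIntegral.integral_const_mul]
        open intervalIntegral in rw [integral_id, integral_pow]
        rw [hx₀def]
        have hbne : b ≠ 0 := ne_of_gt hbpos
        field_simp
        have hb3 : b ^ 3 * (a / b) ^ 3 = a ^ 3 := by rw [div_pow]; field_simp
        linear_combination (-6) * hb3
      rw [hval] at hstep
      have hreal : a^3/(3*b^2) ≤ 1/2 :=
        (ENNReal.ofReal_le_ofReal_iff (by norm_num)).mp hstep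
      rw [div_le_iff₀ (by positivity)] at hreal
      linarith
  exact ⟨a, b, hann, hbnn, ha12, h2a3, hFt⟩

end core


theorem stmt_1 {Ω : Type*} {mΩ : MeasurableSpace Ω} (P : Measure Ω)
    [IsProbabilityMeasure P] (X : Ω → ℝ) (hX : Measurable X)
    (N t : ℝ) (hN : 2 ≤ N) (ht : 0 < t) (htN : t ≤ 2 * N / 3)
    (hsymm : SymmetricDist (P.map X)) (huni : UnimodalAt (P.map X) 0)
    (hsupp : (P.map X) (Set.Icc (-N) N)ᶜ = 0)
    (hvar : variance X P = 1) :
    (t ≤ 2 / Real.sqrt 3 →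
      (P {ω | t ≤ X ω}).toReal ≤ 1 / 2 - t / (2 * Real.sqrt 3)) ∧
    (2 / Real.sqrt 3 < t →
      (P {ω | t ≤ X ω}).toReal ≤ 2 / (9 * t ^ 2)) := by
  have hμprob : IsProbabilityMeasure (P.map X) := Measure.isProbabilityMeasure_map hX.aemeasurable
  set μ : Measure ℝ := P.map X with hμdef
  have hsymm' : μ.map (fun x => -x) = μ := hsymm
  have hconv : ConvexOn ℝ (Set.Iio 0) (fun x => (μ (Set.Iic x)).toReal) := huni.1
  -- a.e. boundedness
  have haeμ : ∀ᵐ x ∂μ, x ∈ Set.Icc (-N) N := by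
    rw [ae_iff]
    exact hsupp
  have hXae : ∀ᵐ ω ∂P, X ω ∈ Set.Icc (-N) N :=
    (ae_map_iff hX.aemeasurable measurableSet_Icc).mp haeμ
  -- integrability of x² under μ
  have hint2 : Integrable (fun x : ℝ => x^2) μ := by
    refine memLp_one_iff_integrable.mp
      (MemLp.of_bound ((continuous_pow 2).aestronglyMeasurable) (N^2) ?_)
    filter_upwards [haeμ] with x hx
    rw [Real.norm_eq_abs, abs_of_nonneg (sq_nonneg x)]
    simp only [Set.mem_Icc] at hx
    nlinarith [hx.1, hx.2]
  have hmem : MemLp X 2 P := by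
    refine MemLp.of_bound hX.aestronglyMeasurable N ?_
    filter_upwards [hXae] with ω h
    rw [Real.norm_eq_abs, abs_le]
    exact ⟨h.1, h.2⟩
  -- mean zero
  have hEXmap : ∫ x, x ∂μ = ∫ ω, X ω ∂P := integral_map hX.aemeasurable aestronglyMeasurable_id
  have hEX : ∫ ω, X ω ∂P = 0 := by
    have h2 : ∫ x, x ∂μ = - ∫ x, x ∂μ := by
      have ha : ∫ x, x ∂(μ.map (fun x : ℝ => -x)) = ∫ x, -x ∂μ :=
        integral_map measurable_neg.aemeasurable aestronglyMeasurable_id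
      conv_lhs => rw [← hsymm']
      rw [ha]
      exact integral_neg fun x => x
    linarith [hEXmap, h2]
  -- second moment one
  have hEX2P : ∫ ω, (X ω)^2 ∂P = 1 := by
    have hv := variance_eq_sub hmem
    rw [hvar] at hv
    have hnot : P[X ^ 2] = ∫ ω, (X ω)^2 ∂P := by
      apply integral_congr_ae
      exact ae_of_all _ fun ω => by simp [Pi.pow_apply]
    have hnot1 : P[X] = ∫ ω, X ω ∂P := rfl
    rw [hnot, hnot1, hEX] at hv
    nlinarith [hv]
  have hEX2 : ∫ x, x^2 ∂μ = 1 := by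
    rw [integral_map hX.aemeasurable ((continuous_pow 2).aestronglyMeasurable)]
    exact hEX2P
  -- core estimate
  obtain ⟨a, b, hann, hbnn, ha12, h2a3, hFt⟩ :=
    gauss_main hsymm' hconv N t (by linarith) ht hsupp hint2 hEX2
  -- rewrite the target probability
  have htarget : (P {ω | t ≤ X ω}).toReal = (μ (Set.Iic (-t))).toReal := by
    have hset : {ω | t ≤ X ω} = X ⁻¹' (Set.Ici t) := rfl
    rw [hset, ← Measure.map_apply hX measurableSet_Ici, ← hμdef,
      symm_Ici_eq_Iic hsymm' t]
  constructor
  · intro htc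
    rw [htarget, hFt]
    exact gauss_alg1 a b t hann hbnn ht ha12 h2a3 htc
  · intro htc
    rw [htarget, hFt]
    exact gauss_alg2 a b t hann hbnn ht h2a3
end

section
/- Fix t ≥ 2/√3 and set β_t = 4/(3t²). Let X have the mixture distribution (1−β_t)·δ₀ + β_t·(uniform distribution on (−3t/2, 3t/2)), i.e., its absolutely continuous part has density β_t/(3t) on (−3t/2, 3t/2). Then X has a symmetric distribution that is unimodal at 0 with Var(X) = 1, and P(X ≥ t) = 2/(9t²). -/
open MeasureTheory ProbabilityTheory

lemma aux_convexOn_congr {s : Set ℝ} {f g : ℝ → ℝ} (hf : ConvexOn ℝ s f)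
    (h : ∀ x ∈ s, f x = g x) : ConvexOn ℝ s g :=
  ⟨hf.1, fun x hx y hy a b ha hb hab => by
    rw [← h _ hx, ← h _ hy, ← h _ (hf.1 hx hy ha hb hab)]
    exact hf.2 hx hy ha hb hab⟩

lemma aux_concaveOn_congr {s : Set ℝ} {f g : ℝ → ℝ} (hf : ConcaveOn ℝ s f)
    (h : ∀ x ∈ s, f x = g x) : ConcaveOn ℝ s g :=
  ⟨hf.1, fun x hx y hy a b ha hb hab => by
    rw [← h _ hx, ← h _ hy, ← h _ (hf.1 hx hy ha hb hab)]
    exact hf.2 hx hy ha hb hab⟩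

lemma aux_affine_convexOn (k c : ℝ) {s : Set ℝ} (hs : Convex ℝ s) :
    ConvexOn ℝ s (fun x => k * x + c) :=
  ⟨hs, fun x _ y _ a b _ _ hab => by
    simp only [smul_eq_mul]
    have h : k * (a * x + b * y) + c = a * (k * x + c) + b * (k * y + c) := by
      linear_combination c * hab.symm
    exact h.le⟩

lemma aux_affine_concaveOn (k c : ℝ) {s : Set ℝ} (hs : Convex ℝ s) :
    ConcaveOn ℝ s (fun x => k * x + c) :=
  ⟨hs, fun x _ y _ a b _ _ hab => by
    simp only [smul_eq_mul]
    have h : a * (k * x + c) + b * (k * y + c) = k * (a * x + b * y) + c := by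
      linear_combination c * hab
    exact h.le⟩

theorem stmt_3 {Ω : Type*} {mΩ : MeasurableSpace Ω} (P : Measure Ω)
    [IsProbabilityMeasure P] (X : Ω → ℝ) (hX : Measurable X)
    (t : ℝ) (ht : 2 / Real.sqrt 3 ≤ t)
    (hlaw : P.map X = ENNReal.ofReal (1 - 4 / (3 * t ^ 2)) • Measure.dirac 0 +
      ENNReal.ofReal (4 / (3 * t ^ 2)) • (ENNReal.ofReal (3 * t))⁻¹ •
        volume.restrict (Set.Ioo (-(3 * t / 2)) (3 * t / 2))) :
    SymmetricDist (P.map X) ∧ UnimodalAt (P.map X) 0 ∧ variance X P = 1 ∧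
    (P {ω | t ≤ X ω}).toReal = 2 / (9 * t ^ 2) := by
  have h3 : (0:ℝ) < Real.sqrt 3 := Real.sqrt_pos.mpr (by norm_num)
  have ht0 : 0 < t := lt_of_lt_of_le (div_pos two_pos h3) ht
  have ht2 : (4:ℝ)/3 ≤ t^2 := by
    have h1 : (2 / Real.sqrt 3)^2 ≤ t^2 :=
      pow_le_pow_left₀ (le_of_lt (div_pos two_pos h3)) ht 2
    calc (4:ℝ)/3 = (2/Real.sqrt 3)^2 := by
          rw [div_pow, Real.sq_sqrt (by norm_num : (0:ℝ) ≤ 3)]; norm_num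
      _ ≤ t^2 := h1
  set β : ℝ := 4 / (3 * t ^ 2) with hβdef
  set L : ℝ := 3 * t / 2 with hLdef
  have hL0 : 0 < L := by positivity
  have hβ0 : 0 < β := by positivity
  have hβ1 : β ≤ 1 := by
    rw [hβdef, div_le_one (by positivity)]; nlinarith
  have h3t : (0:ℝ) < 3 * t := by positivity
  set k : ℝ := β / (3 * t) with hkdef
  have hk0 : 0 < k := by positivity
  have hIoo : MeasurableSet (Set.Ioo (-L) L) := measurableSet_Ioo
  -- volume of Iic x ∩ Ioo (-L) L
  have hvol : ∀ x : ℝ, volume (Set.Iic x ∩ Set.Ioo (-L) L) = ENNReal.ofReal (min x L + L) := by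
    intro x
    rcases le_or_gt x (-L) with hx | hx
    · have he : Set.Iic x ∩ Set.Ioo (-L) L = ∅ := by
        ext y; simp only [Set.mem_inter_iff, Set.mem_Iic, Set.mem_Ioo, Set.mem_empty_iff_false,
          iff_false, not_and, and_imp]
        intro h1 h2; linarith
      rw [he, measure_empty, Eq.comm, ENNReal.ofReal_eq_zero]
      have : min x L = x := min_eq_left (by linarith)
      rw [this]; linarith
    · rcases lt_or_ge x L with hxL | hxL
      · have he : Set.Iic x ∩ Set.Ioo (-L) L = Set.Ioc (-L) x := by
          ext y; simp only [Set.mem_inter_iff, Set.mem_Iic, Set.mem_Ioo, Set.mem_Ioc]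
          constructor
          · rintro ⟨h1, h2, h3⟩; exact ⟨h2, h1⟩
          · rintro ⟨h1, h2⟩; exact ⟨h2, h1, lt_of_le_of_lt h2 hxL⟩
        rw [he, Real.volume_Ioc, min_eq_left hxL.le, sub_neg_eq_add]
      · have he : Set.Iic x ∩ Set.Ioo (-L) L = Set.Ioo (-L) L := by
          rw [Set.inter_eq_right]
          intro y hy; exact le_trans hy.2.le hxL
        rw [he, Real.volume_Ioo, min_eq_right hxL, sub_neg_eq_add]
  -- CDF formula
  have hcdf : ∀ x : ℝ, ((P.map X) (Set.Iic x)).toReal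
      = (if (0:ℝ) ≤ x then 1 - β else 0) + k * max (min x L + L) 0 := by
    intro x
    rw [hlaw]
    simp only [Measure.add_apply, Measure.smul_apply, smul_eq_mul,
      Measure.restrict_apply measurableSet_Iic, Measure.dirac_apply]
    rw [hvol x]
    rw [ENNReal.toReal_add, ENNReal.toReal_mul, ENNReal.toReal_mul, ENNReal.toReal_mul]
    · rw [ENNReal.toReal_inv, ENNReal.toReal_ofReal (by linarith : (0:ℝ) ≤ 1 - β),
        ENNReal.toReal_ofReal hβ0.le, ENNReal.toReal_ofReal h3t.le,
        ENNReal.toReal_ofReal' ]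
      congr 1
      · by_cases h0 : (0:ℝ) ≤ x
        · simp [Set.indicator_of_mem (Set.mem_Iic.mpr h0), h0]
        · simp [Set.indicator_of_notMem (fun h => h0 (Set.mem_Iic.mp h)), h0]
      · rw [hkdef]; ring
    · refine ENNReal.mul_ne_top ENNReal.ofReal_ne_top ?_
      simp [Set.indicator]; split <;> simp
    · refine ENNReal.mul_ne_top ENNReal.ofReal_ne_top
        (ENNReal.mul_ne_top ?_ ENNReal.ofReal_ne_top)
      simp [ENNReal.inv_ne_top]
      exact ht0
  have hkL : k * L = β / 2 := by
    rw [hkdef, hLdef]; field_simp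
  -- symmetry
  have hneg : Measurable (fun x : ℝ => -x) := measurable_neg
  have hsym : SymmetricDist (P.map X) := by
    rw [SymmetricDist, hlaw]
    rw [Measure.map_add _ _ hneg, Measure.map_smul, Measure.map_smul, Measure.map_smul,
      Measure.map_dirac' hneg]
    have hpre : (fun x : ℝ => -x) ⁻¹' Set.Ioo (-L) L = Set.Ioo (-L) L := by
      ext y
      simp only [Set.mem_preimage, Set.mem_Ioo]
      constructor <;> rintro ⟨h1, h2⟩ <;> constructor <;> linarith
    have hrmap : Measure.map (fun x : ℝ => -x) (volume.restrict (Set.Ioo (-L) L))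
        = volume.restrict (Set.Ioo (-L) L) := by
      calc Measure.map (fun x : ℝ => -x) (volume.restrict (Set.Ioo (-L) L))
          = Measure.map (fun x : ℝ => -x)
            (volume.restrict ((fun x : ℝ => -x) ⁻¹' Set.Ioo (-L) L)) := by rw [hpre]
        _ = (Measure.map (fun x : ℝ => -x) volume).restrict (Set.Ioo (-L) L) :=
            (Measure.restrict_map hneg hIoo).symm
        _ = volume.restrict (Set.Ioo (-L) L) := by
            rw [show Measure.map (fun x : ℝ => -x) (volume : Measure ℝ) = volume from
              (Measure.measurePreserving_neg volume).map_eq]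
    rw [hrmap]
    norm_num
  -- unimodality
  have hconv : ConvexOn ℝ (Set.Iio (0:ℝ)) (fun x => ((P.map X) (Set.Iic x)).toReal) := by
    have hg : ConvexOn ℝ (Set.Iio (0:ℝ)) ((fun x => k * x + k * L) ⊔ fun _ => 0) :=
      (aux_affine_convexOn k (k * L) (convex_Iio 0)).sup (convexOn_const 0 (convex_Iio 0))
    refine aux_convexOn_congr hg ?_
    intro x hx
    have hx0 : x < 0 := hx
    rw [Pi.sup_apply, hcdf x, if_neg (not_le.mpr hx0), min_eq_left (by linarith : x ≤ L)]
    rcases le_total (x + L) 0 with h | h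
    · rw [max_eq_right h, max_eq_right (by nlinarith : k * x + k * L ≤ 0)]; ring
    · rw [max_eq_left h, max_eq_left (by nlinarith : (0:ℝ) ≤ k * x + k * L)]; ring
  have hconc : ConcaveOn ℝ (Set.Ioi (0:ℝ)) (fun x => ((P.map X) (Set.Iic x)).toReal) := by
    have hg : ConcaveOn ℝ (Set.Ioi (0:ℝ)) ((fun x => k * x + (1 - β + k * L)) ⊓ fun _ => 1) :=
      (aux_affine_concaveOn k (1 - β + k * L) (convex_Ioi 0)).inf
        (concaveOn_const 1 (convex_Ioi 0))
    refine aux_concaveOn_congr hg ?_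
    intro x hx
    have hx0 : (0:ℝ) < x := hx
    rw [Pi.inf_apply, hcdf x, if_pos hx0.le]
    have hmin : (0:ℝ) < min x L := lt_min hx0 hL0
    rw [max_eq_left (by linarith : (0:ℝ) ≤ min x L + L)]
    rcases le_total x L with h | h
    · rw [min_eq_left h, min_eq_left (by nlinarith : k * x + (1 - β + k * L) ≤ 1)]; ring
    · rw [min_eq_right h, min_eq_right (by nlinarith : (1:ℝ) ≤ k * x + (1 - β + k * L))]
      linarith
  -- variance
  have hsmeas : MeasurableSet {x : ℝ | L < |x|} :=
    measurableSet_lt measurable_const measurable_abs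
  have hzero : (P.map X) {x : ℝ | L < |x|} = 0 := by
    rw [hlaw]
    simp only [Measure.add_apply, Measure.smul_apply, smul_eq_mul,
      Measure.restrict_apply hsmeas, Measure.dirac_apply]
    have h1 : (0:ℝ) ∉ {x : ℝ | L < |x|} := by
      simp only [Set.mem_setOf_eq, abs_zero, not_lt]; exact hL0.le
    have h2 : {x : ℝ | L < |x|} ∩ Set.Ioo (-L) L = ∅ := by
      ext y
      simp only [Set.mem_inter_iff, Set.mem_setOf_eq, Set.mem_Ioo, Set.mem_empty_iff_false,
        iff_false, not_and, and_imp]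
      intro hy h1' h2'
      exact absurd (abs_lt.mpr ⟨h1', h2'⟩) (not_lt.mpr hy.le)
    rw [Set.indicator_of_notMem h1, h2, measure_empty]
    simp
  have hae : ∀ᵐ ω ∂P, ‖X ω‖ ≤ L := by
    rw [ae_iff]
    have hset : {ω | ¬ ‖X ω‖ ≤ L} = X ⁻¹' {x : ℝ | L < |x|} := by
      ext ω; simp [Real.norm_eq_abs, not_le]
    rw [hset, ← Measure.map_apply hX hsmeas, hzero]
  have hmem : MemLp X 2 P := MemLp.of_bound hX.aestronglyMeasurable L hae
  -- integrability pieces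
  have hconst_ne : ENNReal.ofReal (1 - β) ≠ ⊤ := ENNReal.ofReal_ne_top
  have hb_ne : ENNReal.ofReal β ≠ ⊤ := ENNReal.ofReal_ne_top
  have hc_ne : (ENNReal.ofReal (3 * t))⁻¹ ≠ ⊤ := by
    simp only [ne_eq, ENNReal.inv_eq_top, ENNReal.ofReal_eq_zero, not_le]
    linarith
  have hint_dirac : ∀ f : ℝ → ℝ, Integrable f (Measure.dirac (0:ℝ)) := fun f =>
    (integrable_const (f 0)).congr (ae_eq_dirac f).symm
  have hint_restrict : ∀ n : ℕ, Integrable (fun x : ℝ => x ^ n)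
      (volume.restrict (Set.Ioo (-L) L)) := fun n =>
    ((continuous_pow n).integrableOn_Icc).mono_set Set.Ioo_subset_Icc_self
  have hIi : ∀ n : ℕ, Integrable (fun x : ℝ => x ^ n)
      (ENNReal.ofReal (1 - β) • Measure.dirac 0 +
        ENNReal.ofReal β • (ENNReal.ofReal (3 * t))⁻¹ •
          volume.restrict (Set.Ioo (-L) L)) := by
    intro n
    refine Integrable.add_measure ?_ ?_
    · exact (hint_dirac _).smul_measure hconst_ne
    · exact (((hint_restrict n).smul_measure hc_ne).smul_measure hb_ne)
  have hintIoo : ∀ n : ℕ, ∫ x in Set.Ioo (-L) L, x ^ n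
      = (L ^ (n + 1) - (-L) ^ (n + 1)) / (n + 1) := by
    intro n
    rw [← integral_Ioc_eq_integral_Ioo,
      ← intervalIntegral.integral_of_le (by linarith : -L ≤ L),
      integral_pow]
  have hmoment : ∀ n : ℕ, ∫ x : ℝ, x ^ n ∂(P.map X)
      = (if n = 0 then (1 - β) else 0)
        + β * (3 * t)⁻¹ * ((L ^ (n + 1) - (-L) ^ (n + 1)) / (n + 1)) := by
    intro n
    rw [hlaw, integral_add_measure ((hint_dirac _).smul_measure hconst_ne)
        (((hint_restrict n).smul_measure hc_ne).smul_measure hb_ne),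
      integral_smul_measure, integral_smul_measure, integral_smul_measure,
      integral_dirac, hintIoo n]
    rw [ENNReal.toReal_ofReal (by linarith : (0:ℝ) ≤ 1 - β),
      ENNReal.toReal_inv, ENNReal.toReal_ofReal hβ0.le, ENNReal.toReal_ofReal h3t.le]
    simp only [smul_eq_mul]
    by_cases hn : n = 0
    · subst hn; simp; ring
    · rw [if_neg hn, zero_pow hn]; ring
  have hEX : ∫ ω, X ω ∂P = 0 := by
    have h1 : ∫ ω, X ω ∂P = ∫ x : ℝ, x ^ 1 ∂(P.map X) := by
      rw [integral_map hX.aemeasurable]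
      · simp
      · exact (measurable_id.pow_const 1).aestronglyMeasurable
    rw [h1, hmoment 1]
    norm_num
  have hEX2 : ∫ ω, (X ω) ^ 2 ∂P = 1 := by
    have h1 : ∫ ω, (X ω) ^ 2 ∂P = ∫ x : ℝ, x ^ 2 ∂(P.map X) := by
      rw [integral_map hX.aemeasurable]
      exact (measurable_id.pow_const 2).aestronglyMeasurable
    rw [h1, hmoment 2]
    rw [if_neg (by norm_num)]
    rw [hβdef, hLdef]
    have ht' : t ≠ 0 := ht0.ne'
    field_simp
    ring
  have hvar : variance X P = 1 := by
    rw [variance_eq_sub hmem]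
    have h2 : ∫ ω, (X ^ 2) ω ∂P = ∫ ω, (X ω) ^ 2 ∂P := by
      congr 1
    rw [h2, hEX2, hEX]
    norm_num
  -- tail
  have htail : (P {ω | t ≤ X ω}).toReal = 2 / (9 * t ^ 2) := by
    have hset : {ω | t ≤ X ω} = X ⁻¹' Set.Ici t := rfl
    rw [hset, ← Measure.map_apply hX measurableSet_Ici, hlaw]
    simp only [Measure.add_apply, Measure.smul_apply, smul_eq_mul,
      Measure.restrict_apply measurableSet_Ici, Measure.dirac_apply]
    have h1 : (0:ℝ) ∉ Set.Ici t := by simp only [Set.mem_Ici, not_le]; exact ht0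
    have h2 : Set.Ici t ∩ Set.Ioo (-L) L = Set.Ico t L := by
      ext y
      simp only [Set.mem_inter_iff, Set.mem_Ici, Set.mem_Ioo, Set.mem_Ico]
      constructor
      · rintro ⟨h1', h2', h3'⟩; exact ⟨h1', h3'⟩
      · rintro ⟨h1', h2'⟩
        refine ⟨h1', by nlinarith, h2'⟩
    rw [Set.indicator_of_notMem h1, h2, Real.volume_Ico, mul_zero, zero_add,
      ENNReal.toReal_mul, ENNReal.toReal_mul, ENNReal.toReal_inv,
      ENNReal.toReal_ofReal hβ0.le, ENNReal.toReal_ofReal h3t.le,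
      ENNReal.toReal_ofReal (by rw [hLdef]; linarith : (0:ℝ) ≤ L - t)]
    rw [hβdef, hLdef]
    have ht' : t ≠ 0 := ht0.ne'
    field_simp
    ring
  exact ⟨hsym, ⟨hconv, hconc⟩, hvar, htail⟩
end

section
/- Let X ≥ 0 almost surely be a real random variable whose distribution is unimodal at 0, with mean μ_X and Var(X) = 1. Then for every t > 0: P(X > t) ≤ 1 − t/(√3·(1 + μ_X²)^{1/2}) if 0 < t < 2(1 + μ_X²)^{1/2}/√3, and P(X > t) ≤ 4(1 + μ_X²)/(9t²) if t ≥ 2(1 + μ_X²)^{1/2}/√3. -/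
open MeasureTheory ProbabilityTheory

private lemma stmt8_alg1 {a q k t : ℝ} (ha : 0 ≤ a) (hq : 0 ≤ q) (hq1 : q ≤ 1) (ht : 0 < t)
    (hchain : q^3 * t ≤ k * (q^2 - a)) (hkt : 3*t ≤ 2*k) :
    t ≤ k*(1-a) := by
  nlinarith [mul_nonneg (mul_nonneg ht.le (sq_nonneg (1-q))) hq, sq_nonneg (1-q),
    mul_nonneg ht.le (sq_nonneg (1-q)), mul_le_mul_of_nonneg_right hkt (sub_nonneg.2 hq1),
    mul_nonneg (sub_nonneg.2 hq1) ht.le]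

private lemma stmt8_alg2 {a b r t T : ℝ} (ha : 0 ≤ a) (hb : a + r*t = b) (hr : 0 < r)
    (ht : 0 < t) (key : b^3 ≤ 3*r^2*T) : 9*t^2*a ≤ 4*T := by
  subst hb
  have h4 : 27*a*(r*t)^2 ≤ 4*(a+r*t)^3 := by nlinarith [sq_nonneg ((a+r*t)-3*a), mul_pos hr ht]
  have h5 : 27*a*t^2*r^2 ≤ 12*T*r^2 := by nlinarith
  have hr2 : (0:ℝ) < r^2 := by positivity
  nlinarith [mul_pos hr2 (mul_pos ht ht)]

set_option maxHeartbeats 1000000 in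
theorem stmt_8 {Ω : Type*} {mΩ : MeasurableSpace Ω} (P : Measure Ω)
    [IsProbabilityMeasure P] (X : Ω → ℝ) (hX : Measurable X)
    (hpos : ∀ᵐ ω ∂P, 0 ≤ X ω)
    (huni : UnimodalAt (P.map X) 0) (hvar : variance X P = 1)
    (m : ℝ) (hm : m = ∫ ω, X ω ∂P) (t : ℝ) (ht : 0 < t) :
    (t < 2 * Real.sqrt (1 + m ^ 2) / Real.sqrt 3 →
      (P {ω | t < X ω}).toReal ≤
        1 - t / (Real.sqrt 3 * Real.sqrt (1 + m ^ 2))) ∧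
    (2 * Real.sqrt (1 + m ^ 2) / Real.sqrt 3 ≤ t →
      (P {ω | t < X ω}).toReal ≤ 4 * (1 + m ^ 2) / (9 * t ^ 2)) := by
  -- X is in L² and E[X²] = 1 + m²
  have hmem : MemLp X 2 P := by
    by_contra hc
    have h1 : evariance X P = ⊤ := evariance_eq_top hX.aestronglyMeasurable hc
    have : variance X P = 0 := by rw [variance, h1]; simp
    rw [hvar] at this; norm_num at this
  have hint2 : Integrable (fun ω => X ω ^ 2) P := by
    have := hmem.integrable_sq
    simpa [Pi.pow_apply] using this
  have hEX2 : ∫ ω, X ω ^ 2 ∂P = 1 + m ^ 2 := by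
    have h := variance_eq_sub hmem
    rw [hvar] at h
    have h2 : (∫ ω, (X ^ 2) ω ∂P) = ∫ ω, X ω ^ 2 ∂P := by
      apply integral_congr_ae; filter_upwards with ω; simp
    rw [h2, ← hm] at h
    linarith
  -- The survival function G
  set ν := P.map X with hν
  haveI : IsProbabilityMeasure ν := Measure.isProbabilityMeasure_map hX.aemeasurable
  set F : ℝ → ℝ := fun u => (ν (Set.Iic u)).toReal with hF
  set G : ℝ → ℝ := fun u => 1 - F u with hG
  have hGconv : ConvexOn ℝ (Set.Ioi (0:ℝ)) G := by
    have h := huni.2.neg.add_const 1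
    have e : G = (-fun x => (ν (Set.Iic x)).toReal) + fun x => 1 := by
      funext u; simp [hG, hF]; ring
    rw [e]; exact h
  have hprob : ∀ u : ℝ, ν (Set.Iic u) + P {ω | u < X ω} = 1 := by
    intro u
    have h1 : ν (Set.Iic u) = P (X ⁻¹' Set.Iic u) := Measure.map_apply hX measurableSet_Iic
    have h2 : (X ⁻¹' Set.Iic u)ᶜ = {ω | u < X ω} := by
      ext ω; simp [Set.preimage, not_le]
    rw [h1, ← h2, measure_add_measure_compl (hX measurableSet_Iic), measure_univ]
  have hGeq : ∀ u : ℝ, (P {ω | u < X ω}).toReal = G u := by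
    intro u
    have h := hprob u
    have h1 : (ν (Set.Iic u)).toReal + (P {ω | u < X ω}).toReal = 1 := by
      rw [← ENNReal.toReal_add (measure_ne_top _ _) (measure_ne_top _ _), h]; simp
    simp only [hG, hF]; linarith
  have hGanti : ∀ u v : ℝ, u ≤ v → G v ≤ G u := by
    intro u v huv
    have : F u ≤ F v :=
      ENNReal.toReal_mono (measure_ne_top _ _) (measure_mono (Set.Iic_subset_Iic.2 huv))
    simp only [hG]; linarith
  have hG1 : ∀ u, G u ≤ 1 := by
    intro u; simp only [hG, hF]
    have : (0:ℝ) ≤ (ν (Set.Iic u)).toReal := ENNReal.toReal_nonneg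
    linarith
  -- the probability in question
  set a := (P {ω | t < X ω}).toReal with ha_def
  have haG : a = G t := hGeq t
  have ha0 : 0 ≤ a := ENNReal.toReal_nonneg
  -- supporting line of G at t
  obtain ⟨s, hs0, hsuppG⟩ : ∃ s : ℝ, s ≤ 0 ∧ ∀ u, 0 < u → G t + s * (u - t) ≤ G u := by
    set S : Set ℝ := (fun u => (G u - G t) / (u - t)) '' Set.Ioi t with hS
    have hne : S.Nonempty := ⟨_, ⟨t + 1, by simp, rfl⟩⟩
    have ht2 : t/2 ∈ Set.Ioi (0:ℝ) := by simp; linarith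
    have hlow : ∀ x ∈ S, (G t - G (t/2)) / (t - t/2) ≤ x := by
      rintro x ⟨u, hu, rfl⟩
      have := hGconv.slope_mono_adjacent ht2 (Set.mem_Ioi.2 (lt_trans ht hu))
        (by linarith : t/2 < t) (hu : t < u)
      simpa [slope, div_eq_mul_inv] using this
    have hbdd : BddBelow S := ⟨_, hlow⟩
    refine ⟨sInf S, ?_, ?_⟩
    · have h1 : sInf S ≤ (G (t+1) - G t) / (t + 1 - t) := csInf_le hbdd ⟨t + 1, by simp, rfl⟩
      have h2 : G (t+1) ≤ G t := hGanti t (t+1) (by linarith)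
      have : (G (t+1) - G t) / (t + 1 - t) ≤ 0 := by
        apply div_nonpos_of_nonpos_of_nonneg <;> linarith
      linarith
    · intro u hu
      rcases lt_trichotomy u t with hlt | rfl | hgt
      · have hle : (G t - G u) / (t - u) ≤ sInf S := by
          apply le_csInf hne
          rintro x ⟨w, hw, rfl⟩
          have := hGconv.slope_mono_adjacent (Set.mem_Ioi.2 hu)
            (Set.mem_Ioi.2 (lt_trans ht hw)) hlt hw
          simpa [slope, div_eq_mul_inv] using this
        have h3 : G t - G u ≤ sInf S * (t - u) := by
          rw [div_le_iff₀ (by linarith)] at hle; linarith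
        nlinarith
      · simp
      · have hle : sInf S ≤ (G u - G t) / (u - t) := csInf_le hbdd ⟨u, hgt, rfl⟩
        rw [le_div_iff₀ (by linarith)] at hle
        linarith
  have hsupp : ∀ u, 0 < u → a + s * (u - t) ≤ (P {ω | u < X ω}).toReal := by
    intro u hu
    rw [hGeq u, haG]
    exact hsuppG u hu
  -- the integral bound
  have hbound : ∀ c : ℝ, 0 < c → (∀ u, 0 < u → u < c → 0 ≤ a + s*(u-t)) →
      (a - s*t)*c^2 + (2*s/3)*c^3 ≤ 1 + m^2 := by
    have hlayer : ∫⁻ u in Set.Ioi (0:ℝ), P {ω | u < X ω} * ENNReal.ofReal (2*u)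
        = ENNReal.ofReal (1+m^2) := by
      have h := lintegral_comp_eq_lintegral_meas_lt_mul P hpos hX.aemeasurable
          (g := fun u => 2*u)
          (fun r hr => (by fun_prop : Continuous fun u:ℝ => 2*u).intervalIntegrable 0 r)
          (by filter_upwards [ae_restrict_mem measurableSet_Ioi] with u hu
              simp only [Set.mem_Ioi] at hu; positivity)
      rw [← h]
      have h2 : ∀ ω, (∫ u in (0:ℝ)..(X ω), 2*u) = X ω^2 := by
        intro ω
        rw [intervalIntegral.integral_const_mul, integral_id]
        ring
      simp_rw [h2]
      rw [← ofReal_integral_eq_lintegral_ofReal hint2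
        (hpos.mono fun ω h => by positivity), hEX2]
    intro c hc hnn
    have hcont : Continuous (fun u : ℝ => 2*u*(a+s*(u-t))) := by fun_prop
    have hIcalc : ∫ u in (0:ℝ)..c, 2*u*(a+s*(u-t)) = (a - s*t)*c^2 + (2*s/3)*c^3 := by
      have heq : (fun u:ℝ => 2*u*(a+s*(u-t))) = fun u => (2*(a-s*t))*u + (2*s)*u^2 := by
        funext u; ring
      rw [heq, intervalIntegral.integral_add
          ((by fun_prop : Continuous fun u:ℝ => (2*(a-s*t))*u).intervalIntegrable 0 c)
          ((by fun_prop : Continuous fun u:ℝ => (2*s)*u^2).intervalIntegrable 0 c),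
        intervalIntegral.integral_const_mul, intervalIntegral.integral_const_mul,
        integral_id, integral_pow]
      ring
    have hIoo : (∫ u in (0:ℝ)..c, 2*u*(a+s*(u-t)))
        = ∫ u in Set.Ioo 0 c, 2*u*(a+s*(u-t)) := by
      rw [intervalIntegral.integral_of_le hc.le, integral_Ioc_eq_integral_Ioo]
    have hIntOn : IntegrableOn (fun u : ℝ => 2*u*(a+s*(u-t))) (Set.Ioo 0 c) volume :=
      (hcont.integrableOn_Icc).mono_set Set.Ioo_subset_Icc_self
    have h1 : ENNReal.ofReal (∫ u in Set.Ioo 0 c, 2*u*(a+s*(u-t)))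
        = ∫⁻ u in Set.Ioo 0 c, ENNReal.ofReal (2*u*(a+s*(u-t))) := by
      apply ofReal_integral_eq_lintegral_ofReal hIntOn
      filter_upwards [ae_restrict_mem measurableSet_Ioo] with u hu
      have h0 := hnn u hu.1 hu.2
      have : (0:ℝ) < u := hu.1
      positivity
    have h2 : (∫⁻ u in Set.Ioo 0 c, ENNReal.ofReal (2*u*(a+s*(u-t))))
        ≤ ∫⁻ u in Set.Ioo 0 c, P {ω | u < X ω} * ENNReal.ofReal (2*u) := by
      apply lintegral_mono_ae
      filter_upwards [ae_restrict_mem measurableSet_Ioo] with u hu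
      have h0 := hnn u hu.1 hu.2
      have heq : 2*u*(a+s*(u-t)) = (a+s*(u-t))*(2*u) := by ring
      rw [heq, ENNReal.ofReal_mul h0]
      have hP : ENNReal.ofReal (a+s*(u-t)) ≤ P {ω | u < X ω} := by
        rw [← ENNReal.ofReal_toReal (measure_ne_top P _)]
        exact ENNReal.ofReal_le_ofReal (hsupp u hu.1)
      exact mul_le_mul_left hP _
    have h3 : (∫⁻ u in Set.Ioo 0 c, P {ω | u < X ω} * ENNReal.ofReal (2*u))
        ≤ ∫⁻ u in Set.Ioi 0, P {ω | u < X ω} * ENNReal.ofReal (2*u) :=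
      lintegral_mono_set Set.Ioo_subset_Ioi_self
    have hfin : ENNReal.ofReal ((a - s*t)*c^2 + (2*s/3)*c^3) ≤ ENNReal.ofReal (1+m^2) := by
      rw [← hIcalc, hIoo, h1]
      exact le_trans h2 (h3.trans hlayer.le)
    exact (ENNReal.ofReal_le_ofReal_iff (by positivity)).1 hfin
  -- basic constants
  have hτpos : (0:ℝ) < Real.sqrt (1+m^2) := Real.sqrt_pos.2 (by positivity)
  have hτ2 : Real.sqrt (1+m^2) ^ 2 = 1+m^2 := Real.sq_sqrt (by positivity)
  have h3pos : (0:ℝ) < Real.sqrt 3 := Real.sqrt_pos.2 (by norm_num)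
  have h33 : Real.sqrt 3 * Real.sqrt 3 = 3 := Real.mul_self_sqrt (by norm_num)
  have hkpos : (0:ℝ) < Real.sqrt 3 * Real.sqrt (1+m^2) := by positivity
  set r := -s with hr_def
  have hr0 : 0 ≤ r := by simp [hr_def]; linarith
  set b := a + r*t with hb_def
  have hb1 : b ≤ 1 := by
    apply le_of_forall_pos_le_add
    intro ε hε
    set u := min (t/2) (ε/(r+1)) with hu_def
    have hu0 : 0 < u := lt_min (by linarith) (by positivity)
    have hut : u < t := lt_of_le_of_lt (min_le_left _ _) (by linarith)
    have h5 := hsuppG u hu0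
    have h6 : G u ≤ 1 := hG1 u
    have hru : r * u ≤ ε := by
      have h7 : u ≤ ε/(r+1) := min_le_right _ _
      have h8 : r * u ≤ r * (ε/(r+1)) := mul_le_mul_of_nonneg_left h7 hr0
      have h9 : r * (ε/(r+1)) ≤ ε := by
        rw [mul_div_assoc']
        rw [div_le_iff₀ (by linarith)]
        nlinarith
      exact h8.trans h9
    have : G t + s*(u - t) = b - r*u := by simp [hb_def, hr_def, ← haG]; ring
    rw [this] at h5
    linarith
  rcases eq_or_lt_of_le hr0 with hr | hrpos
  · -- slope is zero: a = 0
    have hs_eq : s = 0 := by simp [hr_def] at hr; linarith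
    have ha_eq : a = 0 := by
      by_contra hne
      have hapos : 0 < a := lt_of_le_of_ne ha0 (Ne.symm hne)
      set c := Real.sqrt ((2+m^2)/a) with hc_def
      have hcpos : 0 < c := Real.sqrt_pos.2 (by positivity)
      have hc2 : c^2 = (2+m^2)/a := Real.sq_sqrt (by positivity)
      have h := hbound c hcpos (fun u hu huc => by rw [hs_eq]; simpa using ha0)
      rw [hs_eq] at h
      have : a * c^2 = 2+m^2 := by rw [hc2]; field_simp
      nlinarith
    constructor
    · intro htlt
      rw [ha_eq]
      have h10 : t * Real.sqrt 3 < 2 * Real.sqrt (1+m^2) := by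
        rw [← lt_div_iff₀ h3pos]; linarith
      have h11 : t < Real.sqrt 3 * Real.sqrt (1+m^2) := by nlinarith
      have : t / (Real.sqrt 3 * Real.sqrt (1+m^2)) ≤ 1 := by
        rw [div_le_one hkpos]; linarith
      linarith
    · intro _
      rw [ha_eq]
      positivity
  · -- positive slope magnitude
    have hbpos : 0 < b := by
      have : 0 < r * t := mul_pos hrpos ht
      simp only [hb_def]; linarith
    have hkey : b^3 ≤ 3*r^2*(1+m^2) := by
      have hnn : ∀ u, 0 < u → u < b/r → 0 ≤ a + s*(u-t) := by
        intro u hu huc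
        have : a + s*(u-t) = b - r*u := by simp [hb_def, hr_def]; ring
        rw [this]
        rw [lt_div_iff₀ hrpos] at huc
        nlinarith
      have h := hbound (b/r) (by positivity) hnn
      have heq : (a - s*t)*(b/r)^2 + (2*s/3)*(b/r)^3 = b^3/(3*r^2) := by
        have hb' : a - s*t = b := by simp [hb_def, hr_def]; ring
        rw [hb']
        field_simp
        ring
      rw [heq, div_le_iff₀ (by positivity)] at h
      linarith
    constructor
    · intro htlt
      set q := Real.sqrt b with hq_def
      have hq0 : 0 ≤ q := Real.sqrt_nonneg b
      have hq2 : q^2 = b := Real.sq_sqrt hbpos.le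
      have hq1 : q ≤ 1 := by
        rw [hq_def]
        calc Real.sqrt b ≤ Real.sqrt 1 := Real.sqrt_le_sqrt hb1
        _ = 1 := Real.sqrt_one
      have h6 : q^3 ≤ Real.sqrt 3 * Real.sqrt (1+m^2) * r := by
        have h7 : (q^3)^2 ≤ (Real.sqrt 3 * Real.sqrt (1+m^2) * r)^2 := by
          have e1 : (q^3)^2 = b^3 := by rw [← hq2]; ring
          have e2 : (Real.sqrt 3 * Real.sqrt (1+m^2) * r)^2 = 3*r^2*(1+m^2) := by
            have h3 : Real.sqrt 3 ^ 2 = 3 := by rw [sq]; exact h33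
            rw [mul_pow, mul_pow, h3, hτ2]; ring
          rw [e1, e2]; exact hkey
        nlinarith [pow_nonneg hq0 3, mul_nonneg (mul_nonneg h3pos.le hτpos.le) hr0]
      have hchain : q^3 * t ≤ Real.sqrt 3 * Real.sqrt (1+m^2) * (q^2 - a) := by
        have e3 : q^2 - a = r*t := by rw [hq2]; simp [hb_def]
        rw [e3, ← mul_assoc]
        calc q^3 * t ≤ Real.sqrt 3 * Real.sqrt (1+m^2) * r * t :=
          mul_le_mul_of_nonneg_right h6 ht.le
        _ = Real.sqrt 3 * Real.sqrt (1+m^2) * r * t := rfl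
      have hkt : 3*t ≤ 2*(Real.sqrt 3 * Real.sqrt (1+m^2)) := by
        have h10 : t * Real.sqrt 3 < 2 * Real.sqrt (1+m^2) := by
          rw [← lt_div_iff₀ h3pos]; linarith
        nlinarith
      have : t / (Real.sqrt 3 * Real.sqrt (1+m^2)) ≤ 1 - a := by
        rw [div_le_iff₀ hkpos]
        nlinarith [stmt8_alg1 ha0 hq0 hq1 ht hchain hkt]
      linarith
    · intro _
      have h9 := stmt8_alg2 ha0 hb_def.symm hrpos ht hkey
      rw [le_div_iff₀ (by positivity)]
      linarith
end

section
/- Let X be a real random variable whose distribution is unimodal at 0 with Var(X) = 1. Then there exists a real random variable S with S ≥ 0 almost surely, whose distribution is unimodal at 0 with Var(S) = 1, such that P(S > t) ≥ P(X > t) for every t > 0. -/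
open MeasureTheory ProbabilityTheory

open Filter Topology Set in
lemma cdf_Iio_eq_Iic {μ : Measure ℝ} [IsFiniteMeasure μ]
    (hconv : ConvexOn ℝ (Set.Iio 0) (fun x => (μ (Set.Iic x)).toReal)) {a : ℝ} (ha : a < 0) :
    μ (Set.Iio a) = μ (Set.Iic a) := by
  set F : ℝ → ℝ := fun x => (μ (Set.Iic x)).toReal with hF
  have hcont : ContinuousOn F (Set.Iio 0) := hconv.continuousOn isOpen_Iio
  set s : ℕ → Set ℝ := fun n => Set.Iic (a - ((n : ℝ) + 1)⁻¹) with hs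
  have hmono : Monotone s := by
    intro m n hmn
    refine Set.Iic_subset_Iic.2 (sub_le_sub_left ?_ a)
    have : (m:ℝ) + 1 ≤ (n:ℝ) + 1 := by exact_mod_cast Nat.succ_le_succ hmn
    gcongr
  have hUnion : ⋃ n, s n = Set.Iio a := by
    ext x
    simp only [hs, Set.mem_iUnion, Set.mem_Iic, Set.mem_Iio]
    constructor
    · rintro ⟨n, hn⟩
      have : (0:ℝ) < ((n:ℝ)+1)⁻¹ := by positivity
      linarith
    · intro hx
      obtain ⟨n, hn⟩ := exists_nat_one_div_lt (sub_pos.2 hx)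
      exact ⟨n, by rw [one_div] at hn; linarith⟩
  have h1 : Tendsto (fun n => μ (s n)) atTop (𝓝 (μ (Set.Iio a))) := by
    rw [← hUnion]; exact tendsto_measure_iUnion_atTop hmono
  have h1' : Tendsto (fun n => (μ (s n)).toReal) atTop (𝓝 ((μ (Set.Iio a)).toReal)) :=
    (ENNReal.tendsto_toReal (measure_ne_top μ _)).comp h1
  have hseq : Tendsto (fun n : ℕ => a - ((n : ℝ) + 1)⁻¹) atTop (𝓝 a) := by
    have h0 : Tendsto (fun n : ℕ => ((n : ℝ) + 1)⁻¹) atTop (𝓝 0) := by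
      simpa [one_div] using tendsto_one_div_add_atTop_nhds_zero_nat (𝕜 := ℝ)
    simpa using (tendsto_const_nhds : Tendsto (fun _ : ℕ => a) atTop (𝓝 a)).sub h0
  have h2 : Tendsto (fun n : ℕ => F (a - ((n : ℝ) + 1)⁻¹)) atTop (𝓝 (F a)) :=
    ((hcont.continuousAt (Iio_mem_nhds ha)).tendsto).comp hseq
  have heq : (μ (Set.Iio a)).toReal = F a := tendsto_nhds_unique h1' h2
  exact (ENNReal.toReal_eq_toReal_iff' (measure_ne_top μ _) (measure_ne_top μ _)).1 heq

open Filter Topology Set in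
lemma variance_id_map {Ω : Type*} {mΩ : MeasurableSpace Ω} (P : Measure Ω)
    (S : Ω → ℝ) (hS : Measurable S) : variance id (P.map S) = variance S P := by
  rw [variance, variance, evariance, evariance]
  have hm : (P.map S)[id] = P[S] := by
    rw [integral_map hS.aemeasurable aestronglyMeasurable_id]
    rfl
  rw [hm]
  rw [lintegral_map (by measurability) hS]
  rfl

open Filter Topology Set in
lemma degenerate_absurd {Ω : Type*} {mΩ : MeasurableSpace Ω} (P : Measure Ω)
    [IsProbabilityMeasure P] (X : Ω → ℝ) (hX : Measurable X)
    (huni : UnimodalAt (P.map X) 0) {a : ℝ} (ha : 0 < a)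
    (habs : (fun ω => |X ω|) =ᵐ[P] fun _ => a) : False := by
  have hmap : ∀ y : ℝ, (P.map X) (Set.Iic y) = P {ω | X ω ≤ y} := by
    intro y
    rw [Measure.map_apply hX measurableSet_Iic]
    rfl
  set p : ℝ := (P {ω | X ω ≤ -(a/2)}).toReal with hp
  -- values of CDF
  have hmid : ∀ y : ℝ, -a ≤ y → y < a → (P.map X) (Set.Iic y) = P {ω | X ω ≤ -(a/2)} := by
    intro y hy1 hy2
    rw [hmap]
    apply measure_congr
    apply Filter.eventuallyEq_set.2
    filter_upwards [habs] with ω hω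
    rcases (abs_eq ha.le).1 hω with h | h <;> simp only [Set.mem_setOf_eq, h] <;>
      constructor <;> intro <;> linarith
  have h0 : (P.map X) (Set.Iic (-(2*a))) = 0 := by
    rw [hmap]
    refine measure_eq_zero_iff_ae_notMem.2 ?_
    filter_upwards [habs] with ω hω
    rcases (abs_eq ha.le).1 hω with h | h <;> simp only [Set.mem_setOf_eq, h, not_le] <;> linarith
  have h1 : (P.map X) (Set.Iic (2*a)) = 1 := by
    rw [hmap]
    have : {ω | X ω ≤ 2*a} =ᵐ[P] (Set.univ : Set Ω) := by
      apply Filter.eventuallyEq_set.2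
      filter_upwards [habs] with ω hω
      rcases (abs_eq ha.le).1 hω with h | h <;> simp only [Set.mem_setOf_eq, h, Set.mem_univ, iff_true] <;> linarith
    rw [measure_congr this, measure_univ]
  -- concavity inequality
  have hconc := huni.2.2 (show a/2 ∈ Set.Ioi (0:ℝ) by simp; linarith)
    (show 2*a ∈ Set.Ioi (0:ℝ) by simp; linarith)
    (show (0:ℝ) ≤ 5/6 by norm_num) (show (0:ℝ) ≤ 1/6 by norm_num) (by norm_num)
  simp only [smul_eq_mul] at hconc
  rw [show (5/6 : ℝ) * (a/2) + (1/6 : ℝ) * (2*a) = 3*a/4 by ring] at hconc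
  have e1 : (P.map X) (Set.Iic (3*a/4)) = P {ω | X ω ≤ -(a/2)} := hmid _ (by linarith) (by linarith)
  have e2 : (P.map X) (Set.Iic (a/2)) = P {ω | X ω ≤ -(a/2)} := hmid _ (by linarith) (by linarith)
  rw [e1, e2, h1] at hconc
  -- convexity inequality
  have hconv := huni.1.2 (show -(2*a) ∈ Set.Iio (0:ℝ) by simp; linarith)
    (show -(a/2) ∈ Set.Iio (0:ℝ) by simp; linarith)
    (show (0:ℝ) ≤ 1/6 by norm_num) (show (0:ℝ) ≤ 5/6 by norm_num) (by norm_num)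
  simp only [smul_eq_mul] at hconv
  rw [show (1/6 : ℝ) * (-(2*a)) + (5/6 : ℝ) * (-(a/2)) = -(3*a/4) by ring] at hconv
  have e3 : (P.map X) (Set.Iic (-(3*a/4))) = P {ω | X ω ≤ -(a/2)} := hmid _ (by linarith) (by linarith)
  have e4 : (P.map X) (Set.Iic (-(a/2))) = P {ω | X ω ≤ -(a/2)} := hmid _ (by linarith) (by linarith)
  rw [e3, e4, h0] at hconv
  simp only [ENNReal.toReal_one, ENNReal.toReal_zero] at hconc hconv
  rw [← hp] at hconc hconv
  linarith

open Filter Topology Set in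
theorem stmt_9 {Ω : Type*} {mΩ : MeasurableSpace Ω} (P : Measure Ω)
    [IsProbabilityMeasure P] (X : Ω → ℝ) (hX : Measurable X)
    (huni : UnimodalAt (P.map X) 0) (hvar : variance X P = 1) :
    ∃ ν : Measure ℝ, IsProbabilityMeasure ν ∧ UnimodalAt ν 0 ∧
      ν {x | x < 0} = 0 ∧ variance id ν = 1 ∧
      ∀ t : ℝ, 0 < t → P {ω | t < X ω} ≤ ν {x | t < x} := by
  have hXev : evariance X P ≠ ⊤ := by
    intro h
    rw [variance, h] at hvar
    simp at hvar
  have hX2 : MemLp X 2 P :=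
    (evariance_lt_top_iff_memLp hX.aestronglyMeasurable).1 (lt_top_iff_ne_top.2 hXev)
  have hAmeas : Measurable fun ω => |X ω| := hX.abs
  have hA2 : MemLp (fun ω => |X ω|) 2 P := by
    simpa [Real.norm_eq_abs] using hX2.norm
  set σ2 := variance (fun ω => |X ω|) P with hσ2
  have hσ2_le : σ2 ≤ 1 := by
    rw [hσ2, variance_eq_sub hA2]
    rw [variance_eq_sub hX2] at hvar
    have hsq : (P[(fun ω => |X ω|) ^ 2]) = P[X ^ 2] := by
      refine integral_congr_ae (ae_of_all _ fun ω => ?_)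
      simp [sq_abs]
    have habs : |∫ ω, X ω ∂P| ≤ ∫ ω, |X ω| ∂P := by
      simpa [Real.norm_eq_abs] using norm_integral_le_integral_norm (f := X) (μ := P)
    have h2 : (∫ ω, X ω ∂P) ^ 2 ≤ (∫ ω, |X ω| ∂P) ^ 2 := by
      rw [← sq_abs (∫ ω, X ω ∂P)]
      exact pow_le_pow_left₀ (abs_nonneg _) habs 2
    have hIX : P[X] = ∫ ω, X ω ∂P := rfl
    have hIA : (P[fun ω => |X ω|]) = ∫ ω, |X ω| ∂P := rfl
    rw [hsq]
    linarith [hvar, h2]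
  have hσ2_pos : 0 < σ2 := by
    rcases (variance_nonneg (fun ω => |X ω|) P).lt_or_eq with h | h
    · exact h
    exfalso
    have hev : evariance (fun ω => |X ω|) P = 0 := by
      have hlt := hA2.evariance_lt_top
      rw [variance] at h
      rcases (ENNReal.toReal_eq_zero_iff _).1 h.symm with h' | h'
      · exact h'
      · exact absurd h' hlt.ne
    have habs : (fun ω => |X ω|) =ᵐ[P] fun _ => P[fun ω => |X ω|] :=
      (evariance_eq_zero_iff hAmeas.aemeasurable).1 hev
    set a := P[fun ω => |X ω|] with ha_def
    have ha_nonneg : 0 ≤ a := integral_nonneg fun ω => abs_nonneg _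
    have hX2int : P[X ^ 2] = a ^ 2 := by
      have heq : (X ^ 2 : Ω → ℝ) =ᵐ[P] fun _ => a ^ 2 := by
        filter_upwards [habs] with ω hω
        simp only [Pi.pow_apply, ← sq_abs (X ω)]
        rw [hω]
      rw [integral_congr_ae heq, integral_const]
      simp
    have hvle : (1 : ℝ) ≤ a ^ 2 := by
      have hle := variance_le_expectation_sq (μ := P) (X := X) hX.aestronglyMeasurable
      rw [hvar, hX2int] at hle
      exact hle
    have ha_pos : 0 < a := by nlinarith
    exact degenerate_absurd P X hX huni ha_pos habs
  set c : ℝ := (Real.sqrt σ2)⁻¹ with hc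
  have hsqrt_pos : 0 < Real.sqrt σ2 := Real.sqrt_pos.2 hσ2_pos
  have hc_pos : 0 < c := inv_pos.2 hsqrt_pos
  have hc_one : 1 ≤ c := by
    rw [hc]
    refine one_le_inv_iff₀.2 ⟨hsqrt_pos, ?_⟩
    rw [show (1:ℝ) = Real.sqrt 1 from (Real.sqrt_one).symm]
    exact Real.sqrt_le_sqrt hσ2_le
  set S : Ω → ℝ := fun ω => c * |X ω| with hSdef
  have hSmeas : Measurable S := hAmeas.const_mul c
  have hmapS : ∀ s : Set ℝ, MeasurableSet s → (P.map S) s = P (S ⁻¹' s) := fun s hs =>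
    Measure.map_apply hSmeas hs
  refine ⟨P.map S, Measure.isProbabilityMeasure_map hSmeas.aemeasurable, ?_, ?_, ?_, ?_⟩
  · constructor
    · -- convex on Iio 0 : CDF vanishes there
      refine (convexOn_const 0 (convex_Iio 0)).congr ?_
      intro x hx
      have hempty : S ⁻¹' Set.Iic x = (∅ : Set Ω) := by
        ext ω
        simp only [Set.mem_preimage, Set.mem_Iic, Set.mem_empty_iff_false, iff_false, not_le,
          hSdef]
        have h0 : 0 ≤ c * |X ω| := by positivity
        have : x < 0 := hx
        linarith
      simp [hmapS _ measurableSet_Iic, hempty]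
    · -- concave on Ioi 0
      set F : ℝ → ℝ := fun y => ((P.map X) (Set.Iic y)).toReal with hFdef
      have : IsProbabilityMeasure (P.map X) := Measure.isProbabilityMeasure_map hX.aemeasurable
      have hconc1 : ConcaveOn ℝ (Set.Ioi 0) (fun x : ℝ => F (x / c)) := by
        refine ⟨convex_Ioi 0, fun x hx y hy a b ha hb hab => ?_⟩
        have h1 : x / c ∈ Set.Ioi (0:ℝ) := div_pos hx hc_pos
        have h2 : y / c ∈ Set.Ioi (0:ℝ) := div_pos hy hc_pos
        have key := huni.2.2 h1 h2 ha hb hab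
        simp only [smul_eq_mul] at key ⊢
        rw [show (a * x + b * y) / c = a * (x / c) + b * (y / c) by ring]
        exact key
      have hconv2 : ConvexOn ℝ (Set.Ioi 0) (fun x : ℝ => F (-(x / c))) := by
        refine ⟨convex_Ioi 0, fun x hx y hy a b ha hb hab => ?_⟩
        have h1 : -(x / c) ∈ Set.Iio (0:ℝ) := by
          simp only [Set.mem_Iio, neg_neg, neg_lt_zero]
          exact div_pos hx hc_pos
        have h2 : -(y / c) ∈ Set.Iio (0:ℝ) := by
          simp only [Set.mem_Iio, neg_neg, neg_lt_zero]
          exact div_pos hy hc_pos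
        have key := huni.1.2 h1 h2 ha hb hab
        simp only [smul_eq_mul] at key ⊢
        rw [show -((a * x + b * y) / c) = a * -(x / c) + b * -(y / c) by ring]
        exact key
      have hcs : ConcaveOn ℝ (Set.Ioi 0)
          ((fun x : ℝ => F (x / c)) - fun x : ℝ => F (-(x / c))) := hconc1.sub hconv2
      refine hcs.congr ?_
      intro x hx
      have hx0 : (0:ℝ) < x := hx
      have hb0 : 0 < x / c := div_pos hx0 hc_pos
      have hset : S ⁻¹' Set.Iic x = X ⁻¹' Set.Icc (-(x / c)) (x / c) := by
        ext ω
        simp only [Set.mem_preimage, Set.mem_Iic, Set.mem_Icc, hSdef, ← abs_le]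
        rw [le_div_iff₀ hc_pos, mul_comm]
      have hsub : Set.Iio (-(x / c)) ⊆ Set.Iic (x / c) := fun y hy => by
        simp only [Set.mem_Iio] at hy
        simp only [Set.mem_Iic]
        linarith
      have hdiff : Set.Iic (x / c) \ Set.Iio (-(x / c)) = Set.Icc (-(x / c)) (x / c) := by
        ext y
        simp only [Set.mem_diff, Set.mem_Iic, Set.mem_Iio, Set.mem_Icc, not_lt]
        tauto
      have hIcc : (P.map X) (Set.Icc (-(x / c)) (x / c)) =
          (P.map X) (Set.Iic (x / c)) - (P.map X) (Set.Iio (-(x / c))) := by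
        rw [← hdiff]
        exact measure_diff hsub measurableSet_Iio.nullMeasurableSet (measure_ne_top _ _)
      have hnoatom : (P.map X) (Set.Iio (-(x / c))) = (P.map X) (Set.Iic (-(x / c))) :=
        cdf_Iio_eq_Iic huni.1 (by linarith)
      have : ((P.map S) (Set.Iic x)).toReal = F (x / c) - F (-(x / c)) := by
        rw [hmapS _ measurableSet_Iic, hset, ← Measure.map_apply hX measurableSet_Icc, hIcc,
          hnoatom, ENNReal.toReal_sub_of_le
            (measure_mono (Set.Iic_subset_Iic.2 (by linarith))) (measure_ne_top _ _)]
      exact this.symm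
  · rw [hmapS _ (by exact measurableSet_Iio : MeasurableSet {x : ℝ | x < 0})]
    have hempty : S ⁻¹' {x : ℝ | x < 0} = (∅ : Set Ω) := by
      ext ω
      simp only [Set.mem_preimage, Set.mem_setOf_eq, Set.mem_empty_iff_false, iff_false, not_lt,
        hSdef]
      positivity
    rw [hempty, measure_empty]
  · rw [variance_id_map P S hSmeas, hSdef, variance_const_mul c (fun ω => |X ω|) P, ← hσ2]
    rw [hc, inv_pow, Real.sq_sqrt hσ2_pos.le]
    field_simp
  · intro t ht
    rw [hmapS _ (by exact measurableSet_Ioi : MeasurableSet {x : ℝ | t < x})]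
    apply measure_mono
    intro ω hω
    have hω' : t < X ω := hω
    simp only [Set.mem_preimage, Set.mem_setOf_eq, hSdef]
    calc t < X ω := hω'
      _ ≤ |X ω| := le_abs_self _
      _ ≤ c * |X ω| := le_mul_of_one_le_left (abs_nonneg _) hc_one
end

section
/- Fix u ≥ 2/√3 and let Y have the distribution (1 − 4/(3u²))·δ₀ + (the absolutely continuous measure with density 8(u²−1)^{1/2}/(9u⁴) on the interval (0, 3u²/(2(u²−1)^{1/2})) and 0 elsewhere). Then this is a probability distribution that is unimodal at 0, with mean E[Y] = 1/(u²−1)^{1/2} and Var(Y) = 1, and for every t with (2/√3)·(u²/(u²−1))^{1/2} ≤ t ≤ 3u²/(2(u²−1)^{1/2}), P(Y > t) = (4/(3u²))·(1 − 2t(u²−1)^{1/2}/(3u²)). -/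
open MeasureTheory ProbabilityTheory

set_option maxHeartbeats 1000000 in
theorem stmt_11 (u : ℝ) (hu : 2 / Real.sqrt 3 ≤ u) (μ : Measure ℝ)
    (hμ : μ = ENNReal.ofReal (1 - 4 / (3 * u ^ 2)) • Measure.dirac 0 +
      ENNReal.ofReal (8 * Real.sqrt (u ^ 2 - 1) / (9 * u ^ 4)) •
        volume.restrict (Set.Ioo 0 (3 * u ^ 2 / (2 * Real.sqrt (u ^ 2 - 1))))) :
    IsProbabilityMeasure μ ∧ UnimodalAt μ 0 ∧
    (∫ x, x ∂μ) = 1 / Real.sqrt (u ^ 2 - 1) ∧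
    variance id μ = 1 ∧
    ∀ t : ℝ, (2 / Real.sqrt 3) * Real.sqrt (u ^ 2 / (u ^ 2 - 1)) ≤ t →
      t ≤ 3 * u ^ 2 / (2 * Real.sqrt (u ^ 2 - 1)) →
      (μ (Set.Ioi t)).toReal =
        (4 / (3 * u ^ 2)) * (1 - 2 * t * Real.sqrt (u ^ 2 - 1) / (3 * u ^ 2)) := by
  have h3 : Real.sqrt 3 ^ 2 = 3 := Real.sq_sqrt (by norm_num)
  have h3pos : (0:ℝ) < Real.sqrt 3 := Real.sqrt_pos.2 (by norm_num)
  have hupos : 0 < u := lt_of_lt_of_le (by positivity) hu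
  have hu2 : (4:ℝ)/3 ≤ u ^ 2 := by
    have h := pow_le_pow_left₀ (by positivity : (0:ℝ) ≤ 2 / Real.sqrt 3) hu 2
    calc (4:ℝ)/3 = (2 / Real.sqrt 3) ^ 2 := by rw [div_pow, h3]; norm_num
    _ ≤ u ^ 2 := h
  have hs2 : 0 < u ^ 2 - 1 := by linarith
  set s := Real.sqrt (u ^ 2 - 1) with hsdef
  have hs : 0 < s := Real.sqrt_pos.2 hs2
  have hss : s ^ 2 = u ^ 2 - 1 := Real.sq_sqrt hs2.le
  set b := 3 * u ^ 2 / (2 * s) with hbdef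
  set c := 8 * s / (9 * u ^ 4) with hcdef
  set p := 1 - 4 / (3 * u ^ 2) with hpdef
  have hb : 0 < b := by positivity
  have hc : 0 < c := by positivity
  have hp : 0 ≤ p := by
    have h1 : 4 / (3 * u ^ 2) ≤ 1 := by
      rw [div_le_one (by positivity)]; linarith
    rw [hpdef]; linarith
  have hcb : c * b = 4 / (3 * u ^ 2) := by
    rw [hcdef, hbdef]; field_simp; ring
  have hpcb : p + c * b = 1 := by rw [hcb, hpdef]; ring
  -- measure formula
  have happ : ∀ S : Set ℝ, MeasurableSet S →
      μ S = ENNReal.ofReal p * Measure.dirac 0 S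
        + ENNReal.ofReal c * volume (S ∩ Set.Ioo 0 b) := by
    intro S hS
    rw [hμ, Measure.add_apply, Measure.smul_apply, Measure.smul_apply,
      Measure.restrict_apply hS, smul_eq_mul, smul_eq_mul]
  -- probability measure
  have hprob : IsProbabilityMeasure μ := by
    constructor
    rw [happ _ MeasurableSet.univ]
    have hv : volume ((Set.univ : Set ℝ) ∩ Set.Ioo 0 b) = ENNReal.ofReal b := by
      rw [Set.univ_inter, Real.volume_Ioo, sub_zero]
    rw [hv, measure_univ, mul_one, ← ENNReal.ofReal_mul hc.le,
      ← ENNReal.ofReal_add hp (by positivity), hpcb, ENNReal.ofReal_one]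
  -- CDF values
  have hIic_neg : ∀ x : ℝ, x < 0 → μ (Set.Iic x) = 0 := by
    intro x hx
    rw [happ _ measurableSet_Iic]
    have h1 : Measure.dirac (0:ℝ) (Set.Iic x) = 0 := by
      rw [Measure.dirac_apply' _ measurableSet_Iic]
      simp [Set.indicator_of_notMem, hx.not_ge]
    have h2 : Set.Iic x ∩ Set.Ioo 0 b = ∅ := by
      ext y
      simp only [Set.mem_inter_iff, Set.mem_Iic, Set.mem_Ioo, Set.mem_empty_iff_false, iff_false,
        not_and]
      intro hyx hy0; linarith
    rw [h1, h2]; simp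
  have hIic_pos : ∀ x : ℝ, 0 < x → (μ (Set.Iic x)).toReal = p + c * min x b := by
    intro x hx
    have hminpos : 0 < min x b := lt_min hx hb
    have hvol : volume (Set.Iic x ∩ Set.Ioo 0 b) = ENNReal.ofReal (min x b) := by
      rcases le_or_gt b x with h | h
      · have he : Set.Iic x ∩ Set.Ioo 0 b = Set.Ioo 0 b := by
          apply Set.inter_eq_self_of_subset_right
          intro y hy; exact le_trans hy.2.le h
        rw [he, Real.volume_Ioo, sub_zero, min_eq_right h]
      · have he : Set.Iic x ∩ Set.Ioo 0 b = Set.Ioc 0 x := by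
          ext y
          simp only [Set.mem_inter_iff, Set.mem_Iic, Set.mem_Ioo, Set.mem_Ioc]
          constructor
          · rintro ⟨h1, h2, h3⟩; exact ⟨h2, h1⟩
          · rintro ⟨h1, h2⟩; exact ⟨h2, h1, lt_of_le_of_lt h2 h⟩
        rw [he, Real.volume_Ioc, sub_zero, min_eq_left h.le]
    have hd : Measure.dirac (0:ℝ) (Set.Iic x) = 1 := by
      rw [Measure.dirac_apply' _ measurableSet_Iic]
      simp [Set.indicator_of_mem, hx.le]
    rw [happ _ measurableSet_Iic, hd, mul_one, hvol, ← ENNReal.ofReal_mul hc.le,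
      ← ENNReal.ofReal_add hp (by positivity),
      ENNReal.toReal_ofReal (by positivity)]
  -- unimodality
  have huni : UnimodalAt μ 0 := by
    constructor
    · refine ⟨convex_Iio 0, ?_⟩
      intro x hx y hy a a' ha ha' hab
      have hx0 : x < 0 := hx
      have hy0 : y < 0 := hy
      have hcomb : a • x + a' • y < 0 := (convex_Iio (0:ℝ)) hx hy ha ha' hab
      simp only []
      rw [hIic_neg x hx0, hIic_neg y hy0, hIic_neg _ hcomb]
      simp
    · refine ⟨convex_Ioi 0, ?_⟩
      intro x hx y hy a a' ha ha' hab
      have hx0 : (0:ℝ) < x := hx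
      have hy0 : (0:ℝ) < y := hy
      have hcomb : 0 < a • x + a' • y := (convex_Ioi (0:ℝ)) hx hy ha ha' hab
      simp only []
      rw [hIic_pos x hx0, hIic_pos y hy0, hIic_pos _ hcomb]
      simp only [smul_eq_mul]
      have h1 : a * min x b + a' * min y b ≤ min (a * x + a' * y) b := by
        refine le_min ?_ ?_
        · gcongr
          · exact min_le_left _ _
          · exact min_le_left _ _
        · calc a * min x b + a' * min y b ≤ a * b + a' * b := by
                gcongr
                · exact min_le_right _ _
                · exact min_le_right _ _
          _ = b := by rw [← add_mul, hab, one_mul]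
      nlinarith [mul_le_mul_of_nonneg_left h1 hc.le]
  -- integrability pieces
  have hdint : ∀ f : ℝ → ℝ, Integrable f (Measure.dirac (0:ℝ)) := fun f =>
    (integrable_const (f 0)).congr (ae_eq_dirac f).symm
  have hIOint : IntegrableOn (fun x : ℝ => x) (Set.Ioo 0 b) volume :=
    (continuous_id.integrableOn_Icc).mono_set Set.Ioo_subset_Icc_self
  have hIOint2 : IntegrableOn (fun x : ℝ => x ^ 2) (Set.Ioo 0 b) volume :=
    ((continuous_pow 2).integrableOn_Icc).mono_set Set.Ioo_subset_Icc_self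
  have hint1 : ∀ f : ℝ → ℝ, IntegrableOn f (Set.Ioo 0 b) volume →
      Integrable f μ := by
    intro f hf
    rw [hμ]
    refine Integrable.add_measure ?_ ?_
    · exact ((hdint f).smul_measure ENNReal.ofReal_ne_top)
    · exact hf.smul_measure ENNReal.ofReal_ne_top
  have hIoo : ∫ x in Set.Ioo 0 b, x = b ^ 2 / 2 := by
    rw [← integral_Ioc_eq_integral_Ioo, ← intervalIntegral.integral_of_le hb.le,
      integral_id]
    ring
  have hIoo2 : ∫ x in Set.Ioo 0 b, x ^ 2 = b ^ 3 / 3 := by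
    rw [← integral_Ioc_eq_integral_Ioo, ← intervalIntegral.integral_of_le hb.le,
      integral_pow]
    norm_num
  -- mean
  have hmean : (∫ x, x ∂μ) = 1 / s := by
    rw [hμ, integral_add_measure ((hdint _).smul_measure ENNReal.ofReal_ne_top)
      (hIOint.smul_measure ENNReal.ofReal_ne_top),
      integral_smul_measure, integral_smul_measure, integral_dirac, hIoo]
    simp only [smul_eq_mul, mul_zero, zero_add, ENNReal.toReal_ofReal hc.le]
    rw [hcdef, hbdef]
    field_simp
    ring
  -- second moment
  have hm2 : (∫ x, x ^ 2 ∂μ) = u ^ 2 / s ^ 2 := by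
    rw [hμ, integral_add_measure ((hdint _).smul_measure ENNReal.ofReal_ne_top)
      (hIOint2.smul_measure ENNReal.ofReal_ne_top),
      integral_smul_measure, integral_smul_measure, integral_dirac, hIoo2]
    simp only [smul_eq_mul, ENNReal.toReal_ofReal hc.le]
    norm_num
    rw [hcdef, hbdef]
    rw [div_pow]
    field_simp
    ring
  -- variance
  have hvar : variance id μ = 1 := by
    haveI := hprob
    have hmem : MemLp (id : ℝ → ℝ) 2 μ := by
      rw [memLp_two_iff_integrable_sq aestronglyMeasurable_id]
      exact hint1 _ hIOint2
    rw [variance_eq_sub hmem]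
    have e1 : μ[(id : ℝ → ℝ) ^ 2] = ∫ x, x ^ 2 ∂μ := by
      apply integral_congr_ae
      filter_upwards with x
      simp
    have e2 : μ[(id : ℝ → ℝ)] = ∫ x, x ∂μ := rfl
    rw [e1, e2, hm2, hmean]
    have hsne : s ≠ 0 := hs.ne'
    field_simp
    linarith [hss]
  refine ⟨hprob, huni, hmean, hvar, ?_⟩
  -- tail
  intro t ht1 ht2
  have hfrac : 0 < u ^ 2 / (u ^ 2 - 1) := div_pos (by positivity) hs2
  have ht0 : 0 < t :=
    lt_of_lt_of_le (mul_pos (by positivity) (Real.sqrt_pos.2 hfrac)) ht1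
  have hIoi : Set.Ioi t ∩ Set.Ioo 0 b = Set.Ioo t b := by
    ext y
    simp only [Set.mem_inter_iff, Set.mem_Ioi, Set.mem_Ioo]
    constructor
    · rintro ⟨h1, h2, h3⟩; exact ⟨h1, h3⟩
    · rintro ⟨h1, h2⟩; exact ⟨h1, lt_trans ht0 h1, h2⟩
  have hd0 : Measure.dirac (0:ℝ) (Set.Ioi t) = 0 := by
    rw [Measure.dirac_apply' _ measurableSet_Ioi]
    simp [Set.indicator_of_notMem, ht0.not_gt, Set.mem_Ioi]
  rw [happ _ measurableSet_Ioi, hd0, mul_zero, zero_add, hIoi, Real.volume_Ioo,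
    ← ENNReal.ofReal_mul hc.le, ENNReal.toReal_ofReal (by nlinarith)]
  rw [hcdef, hbdef, hsdef]
  field_simp
  ring
end

section
/- Let X and Y be independent real random variables, each with a unimodal distribution, with means μ_X = μ_Y = 0 and standard deviations σ_X = σ_Y = 1, and assume the distribution of X − Y is unimodal at some mode m with |m| ≤ √6 (as holds when at least one of X, Y is strong unimodal). Then for μ ≥ √6: P(X ≤ Y + μ) ≥ (μ − √6)/(2√6) if √6 ≤ μ ≤ √6 + 4√(2/3), and P(X ≤ Y + μ) ≥ 1 − 32/(9(μ − √6)²) if μ > √6 + 4√(2/3). -/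
open MeasureTheory ProbabilityTheory

theorem stmt_12 {Ω : Type*} {mΩ : MeasurableSpace Ω} (P : Measure Ω)
    [IsProbabilityMeasure P] (X Y : Ω → ℝ) (hX : Measurable X) (hY : Measurable Y)
    (hindep : IndepFun X Y P)
    (huniX : ∃ a : ℝ, UnimodalAt (P.map X) a)
    (huniY : ∃ a : ℝ, UnimodalAt (P.map Y) a)
    (hmeanX : ∫ ω, X ω ∂P = 0) (hmeanY : ∫ ω, Y ω ∂P = 0)
    (hvarX : variance X P = 1) (hvarY : variance Y P = 1)
    (m : ℝ) (hm : |m| ≤ Real.sqrt 6)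
    (huniXY : UnimodalAt (P.map (fun ω => X ω - Y ω)) m)
    (μ : ℝ) (hμ : Real.sqrt 6 ≤ μ) :
    (μ ≤ Real.sqrt 6 + 4 * Real.sqrt (2 / 3) →
      (μ - Real.sqrt 6) / (2 * Real.sqrt 6) ≤
        (P {ω | X ω ≤ Y ω + μ}).toReal) ∧
    (Real.sqrt 6 + 4 * Real.sqrt (2 / 3) < μ →
      1 - 32 / (9 * (μ - Real.sqrt 6) ^ 2) ≤
        (P {ω | X ω ≤ Y ω + μ}).toReal) := by
  have h6 : Real.sqrt 6 ^ 2 = 6 := Real.sq_sqrt (by norm_num)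
  have h6pos : (0:ℝ) < Real.sqrt 6 := Real.sqrt_pos.mpr (by norm_num)
  have hμpos : (0:ℝ) < μ := lt_of_lt_of_le h6pos hμ
  -- Memℒp from finite variance
  have hXm : MemLp X 2 P := by
    rw [← evariance_lt_top_iff_memLp hX.aestronglyMeasurable]
    by_contra h
    have : evariance X P = ⊤ := by simpa using h
    rw [variance, this] at hvarX
    simp at hvarX
  have hYm : MemLp Y 2 P := by
    rw [← evariance_lt_top_iff_memLp hY.aestronglyMeasurable]
    by_contra h
    have : evariance Y P = ⊤ := by simpa using h
    rw [variance, this] at hvarY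
    simp at hvarY
  set Z : Ω → ℝ := fun ω => X ω - Y ω with hZ
  have hZm : MemLp Z 2 P := hXm.sub hYm
  have hZmean : ∫ ω, Z ω ∂P = 0 := by
    rw [hZ]
    rw [integral_sub (hXm.integrable one_le_two) (hYm.integrable one_le_two),
      hmeanX, hmeanY]
    ring
  have hvarnegY : variance (fun ω => -Y ω) P = 1 := by
    have := variance_const_mul (-1 : ℝ) Y P
    simpa [hvarY] using this
  have hZvar : variance Z P = 2 := by
    have hind : IndepFun X (fun ω => -Y ω) P := hindep.comp measurable_id measurable_neg
    have : variance (X + fun ω => -Y ω) P = variance X P + variance (fun ω => -Y ω) P :=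
      hind.variance_add hXm (hYm.neg)
    have hEq : Z = X + fun ω => -Y ω := by funext ω; simp [hZ, sub_eq_add_neg]
    rw [hEq, this, hvarX, hvarnegY]; norm_num
  -- Chebyshev
  have hcheb : P {ω | μ ≤ |Z ω - ∫ ω, Z ω ∂P|} ≤ ENNReal.ofReal (2 / μ ^ 2) := by
    have := meas_ge_le_variance_div_sq hZm hμpos
    rwa [hZvar] at this
  set s : Set Ω := {ω | X ω ≤ Y ω + μ} with hs
  have hsm : MeasurableSet s := measurableSet_le hX (hY.add_const μ)
  have hsub : sᶜ ⊆ {ω | μ ≤ |Z ω - ∫ ω, Z ω ∂P|} := by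
    intro ω hω
    simp only [hs, Set.mem_compl_iff, Set.mem_setOf_eq, not_le] at hω
    simp only [Set.mem_setOf_eq, hZmean, sub_zero, hZ]
    have : μ < X ω - Y ω := by linarith
    exact le_trans this.le (by rw [show (∫ ω, X ω - Y ω ∂P) = 0 from hZmean, sub_zero]; exact le_abs_self _)
  have hcompl : P sᶜ ≤ ENNReal.ofReal (2 / μ ^ 2) :=
    le_trans (measure_mono hsub) hcheb
  have hPs : 1 - 2 / μ ^ 2 ≤ (P s).toReal := by
    have h1 : (P s).toReal = 1 - (P sᶜ).toReal := by
      have hc := measure_compl hsm (measure_ne_top P s)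
      rw [measure_univ] at hc
      have hx : (P s).toReal ≤ 1 := by
        simpa using ENNReal.toReal_mono ENNReal.one_ne_top prob_le_one
      rw [hc, ENNReal.toReal_sub_of_le prob_le_one ENNReal.one_ne_top, ENNReal.toReal_one]
      linarith
    have h2 : (P sᶜ).toReal ≤ 2 / μ ^ 2 := by
      have := ENNReal.toReal_mono (by simp) hcompl
      rwa [ENNReal.toReal_ofReal (by positivity)] at this
    rw [h1]; linarith
  have key : 1 - 2 / μ ^ 2 ≥ 2 / 3 := by
    have hμ2 : (6:ℝ) ≤ μ ^ 2 := by nlinarith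
    have : 2 / μ ^ 2 ≤ 2 / 6 := by
      apply div_le_div_of_nonneg_left (by norm_num) (by norm_num) hμ2
    linarith
  -- relation between sqrt (2/3) and sqrt 6
  have hprod : Real.sqrt (2/3) * Real.sqrt 6 = 2 := by
    rw [← Real.sqrt_mul (by norm_num)]
    rw [show (2/3 : ℝ) * 6 = 2 ^ 2 by norm_num]
    exact Real.sqrt_sq (by norm_num)
  have h23 : Real.sqrt (2/3) = Real.sqrt 6 / 3 := by
    have := Real.sq_sqrt (show (0:ℝ) ≤ 2/3 by norm_num)
    nlinarith [Real.sqrt_nonneg (2/3 : ℝ)]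
  constructor
  · intro h1
    have : (μ - Real.sqrt 6) / (2 * Real.sqrt 6) ≤ 2 / 3 := by
      rw [div_le_iff₀ (by positivity)]
      rw [h23] at h1
      nlinarith
    linarith
  · intro h2
    have hd : 0 < μ - Real.sqrt 6 := by
      have : 0 < 4 * Real.sqrt (2/3) := by positivity
      linarith
    have : 2 / μ ^ 2 ≤ 32 / (9 * (μ - Real.sqrt 6) ^ 2) := by
      rw [div_le_div_iff₀ (by positivity) (by positivity)]
      nlinarith
    linarith
end

section
/- Let A, B, C ⊆ ℝ be Borel sets of finite Lebesgue measure, and for a Borel set S of finite Lebesgue measure let S* denote its symmetric rearrangement, i.e., the open interval centered at 0 with the same Lebesgue measure as S. Then ∫∫ 1_A(x)·1_B(x−y)·1_C(y) dx dy ≤ ∫∫ 1_{A*}(x)·1_{B*}(x−y)·1_{C*}(y) dx dy, where the double integrals are over ℝ × ℝ with respect to Lebesgue measure. -/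
open MeasureTheory Set
open scoped ENNReal

namespace RieszAux

noncomputable def mcdf (D : Set ℝ) (x : ℝ) : ℝ := (volume (D ∩ Iic x)).toReal

variable {D : Set ℝ}

lemma mcdf_nonneg (D : Set ℝ) (x : ℝ) : 0 ≤ mcdf D x := ENNReal.toReal_nonneg

lemma volume_inter_Iic_ne_top (hDf : volume D ≠ ⊤) (x : ℝ) : volume (D ∩ Iic x) ≠ ⊤ :=
  fun h => hDf (eq_top_iff.2 (h ▸ measure_mono inter_subset_left))

lemma ofReal_mcdf (hDf : volume D ≠ ⊤) (x : ℝ) :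
    ENNReal.ofReal (mcdf D x) = volume (D ∩ Iic x) :=
  ENNReal.ofReal_toReal (volume_inter_Iic_ne_top hDf x)

lemma mcdf_mono (hDf : volume D ≠ ⊤) : Monotone (mcdf D) := by
  intro x y hxy
  exact ENNReal.toReal_mono (volume_inter_Iic_ne_top hDf y)
    (measure_mono (inter_subset_inter_right _ (Iic_subset_Iic.2 hxy)))

lemma mcdf_le (hDf : volume D ≠ ⊤) (x : ℝ) : mcdf D x ≤ (volume D).toReal :=
  ENNReal.toReal_mono hDf (measure_mono inter_subset_left)

lemma mcdf_add_le (hDf : volume D ≠ ⊤) {x y : ℝ} (hxy : x ≤ y) :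
    mcdf D y ≤ mcdf D x + (y - x) := by
  have h1 : D ∩ Iic y ⊆ (D ∩ Iic x) ∪ Ioc x y := by
    intro z hz
    rcases le_or_gt z x with h | h
    · exact Or.inl ⟨hz.1, h⟩
    · exact Or.inr ⟨h, hz.2⟩
  have h2 : volume (D ∩ Iic y) ≤ volume (D ∩ Iic x) + ENNReal.ofReal (y - x) := by
    calc volume (D ∩ Iic y) ≤ volume ((D ∩ Iic x) ∪ Ioc x y) := measure_mono h1
    _ ≤ volume (D ∩ Iic x) + volume (Ioc x y) := measure_union_le _ _
    _ = volume (D ∩ Iic x) + ENNReal.ofReal (y - x) := by rw [Real.volume_Ioc]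
  have h3 := ENNReal.toReal_mono (by
      exact ENNReal.add_ne_top.2 ⟨volume_inter_Iic_ne_top hDf x, ENNReal.ofReal_ne_top⟩) h2
  rw [ENNReal.toReal_add (volume_inter_Iic_ne_top hDf x) ENNReal.ofReal_ne_top,
    ENNReal.toReal_ofReal (by linarith)] at h3
  exact h3

lemma mcdf_continuous (hDf : volume D ≠ ⊤) : Continuous (mcdf D) := by
  have : LipschitzWith 1 (mcdf D) := by
    apply LipschitzWith.of_dist_le_mul
    intro x y
    rw [Real.dist_eq, Real.dist_eq]
    rcases le_total x y with h | h
    · have h1 := mcdf_add_le hDf h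
      have h2 := mcdf_mono hDf h
      rw [abs_le]; constructor <;> [skip; skip] <;> rw [abs_of_nonpos (by linarith)] <;> push_cast <;> linarith
    · have h1 := mcdf_add_le hDf h
      have h2 := mcdf_mono hDf h
      rw [abs_le]; constructor <;> rw [abs_of_nonneg (by linarith)] <;> push_cast <;> linarith
  exact this.continuous

lemma exists_mcdf_lt (hD : MeasurableSet D) (hDf : volume D ≠ ⊤) {s : ℝ} (hs : 0 < s) :
    ∃ x : ℝ, mcdf D x < s := by
  have h : Filter.Tendsto (fun n : ℕ => volume (D ∩ Iic (-(n:ℝ)))) Filter.atTop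
      (nhds (volume (⋂ n : ℕ, D ∩ Iic (-(n:ℝ))))) := by
    apply tendsto_measure_iInter_atTop
    · exact fun n => (hD.inter measurableSet_Iic).nullMeasurableSet
    · intro m n hmn
      have : (m:ℝ) ≤ (n:ℝ) := Nat.cast_le.2 hmn
      exact inter_subset_inter_right _ (Iic_subset_Iic.2 (by linarith))
    · exact ⟨0, volume_inter_Iic_ne_top hDf (-(0:ℕ))⟩
  have hempty : (⋂ n : ℕ, D ∩ Iic (-(n:ℝ))) = ∅ := by
    ext z; simp only [mem_iInter, mem_inter_iff, mem_Iic, mem_empty_iff_false, iff_false]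
    intro h'
    obtain ⟨n, hn⟩ := exists_nat_gt (-z)
    exact absurd ((h' n).2) (by push_cast; linarith)
  rw [hempty, measure_empty] at h
  have hlt : (0:ℝ≥0∞) < ENNReal.ofReal s := ENNReal.ofReal_pos.2 hs
  have hev := h.eventually_lt_const hlt
  obtain ⟨n, hn⟩ := hev.exists
  refine ⟨-(n:ℝ), ?_⟩
  have h2 : mcdf D (-(n:ℝ)) < (ENNReal.ofReal s).toReal :=
    ENNReal.toReal_strict_mono ENNReal.ofReal_ne_top hn
  rwa [ENNReal.toReal_ofReal hs.le] at h2

lemma exists_lt_mcdf (hD : MeasurableSet D) (hDf : volume D ≠ ⊤) {s : ℝ}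
    (hs : s < (volume D).toReal) : ∃ x : ℝ, s < mcdf D x := by
  rcases lt_or_ge s 0 with hneg | hpos
  · exact ⟨0, lt_of_lt_of_le hneg (mcdf_nonneg D 0)⟩
  have h : Filter.Tendsto (fun n : ℕ => volume (D ∩ Iic (n:ℝ))) Filter.atTop
      (nhds (volume (⋃ n : ℕ, D ∩ Iic (n:ℝ)))) := by
    apply tendsto_measure_iUnion_atTop
    intro m n hmn
    have : (m:ℝ) ≤ (n:ℝ) := Nat.cast_le.2 hmn
    exact inter_subset_inter_right _ (Iic_subset_Iic.2 this)
  have hfull : (⋃ n : ℕ, D ∩ Iic (n:ℝ)) = D := by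
    ext z
    simp only [mem_iUnion, mem_inter_iff, mem_Iic]
    constructor
    · rintro ⟨n, hn, -⟩; exact hn
    · intro hz
      obtain ⟨n, hn⟩ := exists_nat_gt z
      exact ⟨n, hz, hn.le⟩
  rw [hfull] at h
  have hlt : ENNReal.ofReal s < volume D := by
    rcases le_or_gt (volume D) (ENNReal.ofReal s) with hc | hc
    · exfalso
      have := ENNReal.toReal_mono ENNReal.ofReal_ne_top hc
      rw [ENNReal.toReal_ofReal hpos] at this
      linarith
    · exact hc
  have hev := h.eventually_const_lt hlt
  obtain ⟨n, hn⟩ := hev.exists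
  refine ⟨(n:ℝ), ?_⟩
  have h2 : (ENNReal.ofReal s).toReal < mcdf D (n:ℝ) :=
    ENNReal.toReal_strict_mono (volume_inter_Iic_ne_top hDf _) hn
  rwa [ENNReal.toReal_ofReal hpos] at h2

/-- The quantile function of a finite-measure set. -/
noncomputable def mquant (D : Set ℝ) (s : ℝ) : ℝ :=
  if 0 < s ∧ s < (volume D).toReal then sInf {x | s ≤ mcdf D x} else 0

section Quant

variable (hD : MeasurableSet D) (hDf : volume D ≠ ⊤)

lemma mquant_eq {s : ℝ} (hs0 : 0 < s) (hsd : s < (volume D).toReal) :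
    mquant D s = sInf {x | s ≤ mcdf D x} := if_pos ⟨hs0, hsd⟩

lemma quant_set_nonempty (hD : MeasurableSet D) (hDf : volume D ≠ ⊤) {s : ℝ}
    (hsd : s < (volume D).toReal) : {x | s ≤ mcdf D x}.Nonempty := by
  obtain ⟨x, hx⟩ := exists_lt_mcdf hD hDf hsd
  exact ⟨x, hx.le⟩

lemma quant_set_bddBelow (hD : MeasurableSet D) (hDf : volume D ≠ ⊤) {s : ℝ}
    (hs0 : 0 < s) : BddBelow {x | s ≤ mcdf D x} := by
  obtain ⟨x0, hx0⟩ := exists_mcdf_lt hD hDf hs0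
  refine ⟨x0, fun y hy => ?_⟩
  by_contra hc
  push_neg at hc
  exact absurd (le_trans hy (mcdf_mono hDf hc.le)) (not_le.2 hx0)

lemma quant_set_closed (hDf : volume D ≠ ⊤) (s : ℝ) : IsClosed {x | s ≤ mcdf D x} :=
  isClosed_le continuous_const (mcdf_continuous hDf)

lemma mcdf_mquant (hD : MeasurableSet D) (hDf : volume D ≠ ⊤) {s : ℝ}
    (hs0 : 0 < s) (hsd : s < (volume D).toReal) : mcdf D (mquant D s) = s := by
  rw [mquant_eq hs0 hsd]
  have hmem : sInf {x | s ≤ mcdf D x} ∈ {x | s ≤ mcdf D x} :=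
    (quant_set_closed hDf s).csInf_mem (quant_set_nonempty hD hDf hsd)
      (quant_set_bddBelow hD hDf hs0)
  have h1 : s ≤ mcdf D (sInf {x | s ≤ mcdf D x}) := hmem
  refine le_antisymm ?_ h1
  by_contra hc
  push_neg at hc
  -- s < mcdf at the inf; by continuity some point slightly left is still ≥ s
  set m := sInf {x | s ≤ mcdf D x} with hm
  have hcont := (mcdf_continuous hDf).continuousAt (x := m)
  have hev : ∀ᶠ y in nhds m, s < mcdf D y := hcont.eventually_const_lt hc
  obtain ⟨ε, hε, hball⟩ := Metric.eventually_nhds_iff.1 hev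
  have hmem2 : m - ε/2 ∈ {x | s ≤ mcdf D x} := by
    have : dist (m - ε/2) m < ε := by
      rw [Real.dist_eq]; rw [abs_of_nonpos (by linarith)]; linarith
    exact (hball this).le
  have := csInf_le (quant_set_bddBelow hD hDf hs0) hmem2
  rw [← hm] at this
  linarith

lemma mquant_le_iff (hD : MeasurableSet D) (hDf : volume D ≠ ⊤) {s x : ℝ}
    (hs0 : 0 < s) (hsd : s < (volume D).toReal) :
    mquant D s ≤ x ↔ s ≤ mcdf D x := by
  constructor
  · intro h
    calc s = mcdf D (mquant D s) := (mcdf_mquant hD hDf hs0 hsd).symm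
    _ ≤ mcdf D x := mcdf_mono hDf h
  · intro h
    rw [mquant_eq hs0 hsd]
    exact csInf_le (quant_set_bddBelow hD hDf hs0) h

lemma measurable_mquant (hD : MeasurableSet D) (hDf : volume D ≠ ⊤) :
    Measurable (mquant D) := by
  apply measurable_of_Iic
  intro x
  have hset : mquant D ⁻¹' Iic x =
      (Ioo 0 (volume D).toReal ∩ Iic (mcdf D x)) ∪
      ((Ioo 0 (volume D).toReal)ᶜ ∩ (if (0:ℝ) ≤ x then univ else ∅)) := by
    ext s
    simp only [mem_preimage, mem_Iic, mem_union, mem_inter_iff, mem_Ioo, mem_compl_iff]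
    by_cases hs : 0 < s ∧ s < (volume D).toReal
    · rw [(mquant_le_iff hD hDf hs.1 hs.2 (x := x))]
      constructor
      · intro h; exact Or.inl ⟨hs, h⟩
      · rintro (⟨-, h⟩ | ⟨hns, -⟩)
        · exact h
        · exact absurd hs hns
    · have h0 : mquant D s = 0 := if_neg hs
      rw [h0]
      constructor
      · intro h; right; exact ⟨hs, by rw [if_pos h]; trivial⟩
      · rintro (⟨h1, -⟩ | ⟨-, h2⟩)
        · exact absurd h1 hs
        · by_contra hx
          push_neg at hx
          rw [if_neg (not_le.2 hx)] at h2
          exact h2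
  rw [hset]
  refine MeasurableSet.union (measurableSet_Ioo.inter measurableSet_Iic)
    (measurableSet_Ioo.compl.inter ?_)
  split_ifs
  · exact MeasurableSet.univ
  · exact MeasurableSet.empty

lemma measurable_mcdf (hDf : volume D ≠ ⊤) : Measurable (mcdf D) :=
  (mcdf_continuous hDf).measurable

/-- Pushforward of Lebesgue on `(0, |D|)` under the quantile map is Lebesgue restricted to `D`. -/
lemma map_mquant (hD : MeasurableSet D) (hDf : volume D ≠ ⊤) :
    Measure.map (mquant D) (volume.restrict (Ioo 0 (volume D).toReal)) =
      volume.restrict D := by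
  have hfin : IsFiniteMeasure (volume.restrict (Ioo (0:ℝ) (volume D).toReal)) := by
    constructor
    rw [Measure.restrict_apply_univ]
    exact lt_of_le_of_lt (le_of_eq (Real.volume_Ioo)) ENNReal.ofReal_lt_top
  have hmapfin : IsFiniteMeasure
      (Measure.map (mquant D) (volume.restrict (Ioo 0 (volume D).toReal))) := by
    constructor
    rw [Measure.map_apply (measurable_mquant hD hDf) MeasurableSet.univ]
    simp only [preimage_univ]
    rw [Measure.restrict_apply_univ]
    exact lt_of_le_of_lt (le_of_eq (Real.volume_Ioo)) ENNReal.ofReal_lt_top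
  refine Measure.ext_of_Iic _ _ (fun x => ?_)
  rw [Measure.map_apply (measurable_mquant hD hDf) measurableSet_Iic,
    Measure.restrict_apply' measurableSet_Ioo, Measure.restrict_apply' hD]
  have hseteq : mquant D ⁻¹' Iic x ∩ Ioo 0 (volume D).toReal
      = Ioo 0 (volume D).toReal ∩ Iic (mcdf D x) := by
    ext s
    simp only [mem_inter_iff, mem_preimage, mem_Iic, mem_Ioo]
    constructor
    · rintro ⟨h1, h2⟩
      exact ⟨h2, ((mquant_le_iff hD hDf h2.1 h2.2).1 h1)⟩
    · rintro ⟨h2, h1⟩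
      exact ⟨(mquant_le_iff hD hDf h2.1 h2.2).2 h1, h2⟩
  rw [hseteq]
  have hc0 : 0 ≤ mcdf D x := mcdf_nonneg D x
  have hcd : mcdf D x ≤ (volume D).toReal := mcdf_le hDf x
  have : Ioo (0:ℝ) (volume D).toReal ∩ Iic (mcdf D x) = Ioo 0 (mcdf D x) ∪
      (Ioo 0 (volume D).toReal ∩ {(mcdf D x)} ∩ Iic (mcdf D x)) := by
    ext s
    simp only [mem_inter_iff, mem_Ioo, mem_Iic, mem_union, mem_singleton_iff]
    constructor
    · rintro ⟨⟨h1, h2⟩, h3⟩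
      rcases lt_or_eq_of_le h3 with h4 | h4
      · exact Or.inl ⟨h1, h4⟩
      · exact Or.inr ⟨⟨⟨h1, h2⟩, h4⟩, h3⟩
    · rintro (⟨h1, h2⟩ | ⟨⟨h1, h2⟩, h3⟩)
      · exact ⟨⟨h1, lt_of_lt_of_le h2 hcd⟩, h2.le⟩
      · exact ⟨h1, h3⟩
  rw [this]
  have hnull : volume (Ioo (0:ℝ) (volume D).toReal ∩ {(mcdf D x)} ∩ Iic (mcdf D x)) = 0 :=
    measure_mono_null (fun s hs => hs.1.2) (Real.volume_singleton)
  have hu : volume (Ioo 0 (mcdf D x) ∪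
      (Ioo 0 (volume D).toReal ∩ {(mcdf D x)} ∩ Iic (mcdf D x))) = volume (Ioo 0 (mcdf D x)) := by
    refine le_antisymm ?_ (measure_mono subset_union_left)
    calc volume _ ≤ volume (Ioo 0 (mcdf D x)) + volume _ := measure_union_le _ _
    _ = volume (Ioo 0 (mcdf D x)) := by rw [hnull, add_zero]
  rw [hu, Real.volume_Ioo, Set.inter_comm, sub_zero, ofReal_mcdf hDf]

/-- The measure of the sub-level part of `D`. -/
lemma volume_mcdf_le (hD : MeasurableSet D) (hDf : volume D ≠ ⊤) {s : ℝ}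
    (hs0 : 0 < s) (hsd : s < (volume D).toReal) :
    volume (D ∩ {q | mcdf D q ≤ s}) = ENNReal.ofReal s := by
  have hne : {q | s ≤ mcdf D q}.Nonempty := quant_set_nonempty hD hDf hsd
  -- m := sSup {q | mcdf D q ≤ s}; show D ∩ {mcdf ≤ s} = D ∩ Iic m with mcdf m = s
  have hbdd : BddAbove {q | mcdf D q ≤ s} := by
    obtain ⟨x, hx⟩ := exists_lt_mcdf hD hDf hsd
    refine ⟨x, fun y hy => ?_⟩
    by_contra hc
    push_neg at hc
    exact absurd (le_trans (mcdf_mono hDf hc.le) hy) (not_le.2 hx)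
  set m := sSup {q | mcdf D q ≤ s} with hm
  have hne2 : {q | mcdf D q ≤ s}.Nonempty := by
    obtain ⟨x, hx⟩ := exists_mcdf_lt hD hDf hs0
    exact ⟨x, hx.le⟩
  have hclosed : IsClosed {q | mcdf D q ≤ s} := isClosed_le (mcdf_continuous hDf) continuous_const
  have hmem : m ∈ {q | mcdf D q ≤ s} := hclosed.csSup_mem hne2 hbdd
  have hms : mcdf D m = s := by
    refine le_antisymm hmem ?_
    by_contra hc
    push_neg at hc
    have hcont := (mcdf_continuous hDf).continuousAt (x := m)
    have hev : ∀ᶠ y in nhds m, mcdf D y < s := hcont.eventually_lt_const hc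
    obtain ⟨ε, hε, hball⟩ := Metric.eventually_nhds_iff.1 hev
    have : m + ε/2 ∈ {q | mcdf D q ≤ s} := by
      have hd : dist (m + ε/2) m < ε := by
        rw [Real.dist_eq, abs_of_nonneg (by linarith)]; linarith
      exact (hball hd).le
    have := le_csSup hbdd this
    rw [← hm] at this
    linarith
  have hseteq : D ∩ {q | mcdf D q ≤ s} = D ∩ Iic m := by
    ext q
    simp only [mem_inter_iff, mem_setOf_eq, mem_Iic]
    refine and_congr_right (fun _ => ⟨fun h => le_csSup hbdd h, fun h => ?_⟩)
    exact le_trans (mcdf_mono hDf h) hmem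
  rw [hseteq, ← ofReal_mcdf hDf m, hms]

end Quant

section Pollard

lemma volume_preimage_const_sub (c : ℝ) {E : Set ℝ} (hE : MeasurableSet E) :
    volume ((fun y => c - y) ⁻¹' E) = volume E := by
  have h1 : MeasurePreserving (fun y : ℝ => c + y) volume volume :=
    measurePreserving_add_left volume c
  have h2 : MeasurePreserving (Neg.neg : ℝ → ℝ) volume volume :=
    Measure.measurePreserving_neg volume
  have h3 : MeasurePreserving (fun y : ℝ => c - y) volume volume := by
    have h4 := h1.comp h2
    have : ((fun y : ℝ => c + y) ∘ Neg.neg) = fun y : ℝ => c - y := by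
      funext y; simp [sub_eq_add_neg]
    rwa [this] at h4
  exact h3.measure_preimage hE.nullMeasurableSet

variable {A B : Set ℝ}

/-- Continuum Pollard inequality: the truncated mass of the "difference representation
function" `y ↦ vol (A ∩ (y + B))` is at least `t (a + b - t)`. -/
lemma pollard (hA : MeasurableSet A) (hB : MeasurableSet B)
    (hAf : volume A ≠ ⊤) (hBf : volume B ≠ ⊤) (t : ℝ) (ht0 : 0 ≤ t)
    (hta : t ≤ (volume A).toReal) (htb : t ≤ (volume B).toReal) :
    ENNReal.ofReal (t * ((volume A).toReal + (volume B).toReal - t)) ≤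
      ∫⁻ y, min (volume (A ∩ {x | x - y ∈ B})) (ENNReal.ofReal t) := by
  rcases eq_or_lt_of_le ht0 with rfl | htpos
  · simp
  set a := (volume A).toReal with ha
  set b := (volume B).toReal with hb
  set F := mcdf A with hF
  set G := mcdf B with hG
  set α := mquant A with hα
  set β := mquant B with hβ
  have hFm : Measurable F := measurable_mcdf hAf
  have hGm : Measurable G := measurable_mcdf hBf
  have hαm : Measurable α := measurable_mquant hA hAf
  have hβm : Measurable β := measurable_mquant hB hBf
  set W : Set (ℝ × ℝ) := {p | p.1 ∈ Ioo 0 t ∧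
      ((α p.1 - p.2 ∈ B ∧ p.1 < G (α p.1 - p.2)) ∨
       (p.2 + β p.1 ∈ A ∧ p.1 < F (p.2 + β p.1)))} with hW
  have hf1 : Measurable (fun p : ℝ × ℝ => α p.1 - p.2) :=
    (hαm.comp measurable_fst).sub measurable_snd
  have hf2 : Measurable (fun p : ℝ × ℝ => p.2 + β p.1) :=
    measurable_snd.add (hβm.comp measurable_fst)
  have hWm : MeasurableSet W := by
    apply MeasurableSet.inter
    · exact measurable_fst measurableSet_Ioo
    · apply MeasurableSet.union
      · exact (hf1 hB).inter (measurableSet_lt measurable_fst (hGm.comp hf1))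
      · exact (hf2 hA).inter (measurableSet_lt measurable_fst (hFm.comp hf2))
  -- lower bound on vertical sections
  have key1 : ∀ s ∈ Ioo (0:ℝ) t,
      ENNReal.ofReal (a - s) + ENNReal.ofReal (b - s) ≤ volume (Prod.mk s ⁻¹' W) := by
    intro s hs
    have hs0 : 0 < s := hs.1
    have hsa : s < a := lt_of_lt_of_le hs.2 hta
    have hsb : s < b := lt_of_lt_of_le hs.2 htb
    set c := α s - β s with hc
    set S1 : Set ℝ := (fun y => α s - y) ⁻¹' (B ∩ {q | s < G q}) with hS1
    set S2 : Set ℝ := (fun y => y + β s) ⁻¹' (A ∩ {p | s < F p}) with hS2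
    have hS1m : MeasurableSet S1 := (measurable_const.sub measurable_id)
      (hB.inter (measurableSet_lt measurable_const hGm))
    have hS2m : MeasurableSet S2 := (measurable_id.add_const _)
      (hA.inter (measurableSet_lt measurable_const hFm))
    have hsec : Prod.mk s ⁻¹' W = S1 ∪ S2 := by
      ext y
      simp only [hW, mem_preimage, mem_setOf_eq, mem_union, hS1, hS2, mem_inter_iff]
      constructor
      · rintro ⟨-, h⟩; exact h
      · intro h; exact ⟨hs, h⟩
    have hvolS1 : volume S1 = volume B - ENNReal.ofReal s := by
      have hmp : volume S1 = volume (B ∩ {q | s < G q}) := by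
        exact volume_preimage_const_sub (α s) (hB.inter (measurableSet_lt measurable_const hGm))
      rw [hmp]
      have hsplit : volume (B ∩ {q | G q ≤ s}) + volume (B ∩ {q | s < G q}) = volume B := by
        have hdis : Disjoint (B ∩ {q | G q ≤ s}) (B ∩ {q | s < G q}) := by
          apply Set.disjoint_left.2
          rintro q ⟨-, (h1 : G q ≤ s)⟩ ⟨-, (h2 : s < G q)⟩
          exact absurd h1 (not_le.2 h2)
        rw [← measure_union hdis (hB.inter (measurableSet_lt measurable_const hGm))]
        congr 1
        ext q
        simp only [mem_union, mem_inter_iff, mem_setOf_eq]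
        constructor
        · rintro (⟨h, -⟩ | ⟨h, -⟩) <;> exact h
        · intro h
          rcases le_or_gt (G q) s with h2 | h2
          · exact Or.inl ⟨h, h2⟩
          · exact Or.inr ⟨h, h2⟩
      rw [volume_mcdf_le hB hBf hs0 hsb] at hsplit
      rw [← hsplit, ENNReal.add_sub_cancel_left ENNReal.ofReal_ne_top]
    have hvolS2 : volume S2 = volume A - ENNReal.ofReal s := by
      have hmp : volume S2 = volume (A ∩ {p | s < F p}) := by
        have h := measurePreserving_add_right (volume : Measure ℝ) (β s)
        exact h.measure_preimage (hA.inter (measurableSet_lt measurable_const hFm)).nullMeasurableSet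
      rw [hmp]
      have hsplit : volume (A ∩ {p | F p ≤ s}) + volume (A ∩ {p | s < F p}) = volume A := by
        have hdis : Disjoint (A ∩ {p | F p ≤ s}) (A ∩ {p | s < F p}) := by
          apply Set.disjoint_left.2
          rintro p ⟨-, (h1 : F p ≤ s)⟩ ⟨-, (h2 : s < F p)⟩
          exact absurd h1 (not_le.2 h2)
        rw [← measure_union hdis (hA.inter (measurableSet_lt measurable_const hFm))]
        congr 1
        ext p
        simp only [mem_union, mem_inter_iff, mem_setOf_eq]
        constructor
        · rintro (⟨h, -⟩ | ⟨h, -⟩) <;> exact h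
        · intro h
          rcases le_or_gt (F p) s with h2 | h2
          · exact Or.inl ⟨h, h2⟩
          · exact Or.inr ⟨h, h2⟩
      rw [volume_mcdf_le hA hAf hs0 hsa] at hsplit
      rw [← hsplit, ENNReal.add_sub_cancel_left ENNReal.ofReal_ne_top]
    have hS1c : S1 ⊆ Iic c := by
      intro y hy
      have hq : β s ≤ α s - y := (mquant_le_iff hB hBf hs0 hsb).2 hy.2.le
      simp only [mem_Iic, hc]
      linarith
    have hS2c : S2 ⊆ Ici c := by
      intro y hy
      have hp : α s ≤ y + β s := (mquant_le_iff hA hAf hs0 hsa).2 hy.2.le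
      simp only [mem_Ici, hc]
      linarith
    have hd : Disjoint (S1 ∩ Iio c) (S2 ∩ Ioi c) := by
      apply Set.disjoint_left.2
      rintro y ⟨-, h1⟩ ⟨-, h2⟩
      exact absurd (mem_Iio.1 h1) (not_lt.2 (le_of_lt (mem_Ioi.1 h2)))
    have hS1' : volume S1 ≤ volume (S1 ∩ Iio c) := by
      have : S1 ⊆ (S1 ∩ Iio c) ∪ {c} := by
        intro y hy
        rcases lt_or_eq_of_le (mem_Iic.1 (hS1c hy)) with h | h
        · exact Or.inl ⟨hy, h⟩
        · exact Or.inr h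
      calc volume S1 ≤ volume ((S1 ∩ Iio c) ∪ {c}) := measure_mono this
      _ ≤ volume (S1 ∩ Iio c) + volume ({c} : Set ℝ) := measure_union_le _ _
      _ = volume (S1 ∩ Iio c) := by rw [Real.volume_singleton, add_zero]
    have hS2' : volume S2 ≤ volume (S2 ∩ Ioi c) := by
      have : S2 ⊆ (S2 ∩ Ioi c) ∪ {c} := by
        intro y hy
        rcases lt_or_eq_of_le (mem_Ici.1 (hS2c hy)) with h | h
        · exact Or.inl ⟨hy, h⟩
        · exact Or.inr h.symm
      calc volume S2 ≤ volume ((S2 ∩ Ioi c) ∪ {c}) := measure_mono this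
      _ ≤ volume (S2 ∩ Ioi c) + volume ({c} : Set ℝ) := measure_union_le _ _
      _ = volume (S2 ∩ Ioi c) := by rw [Real.volume_singleton, add_zero]
    calc ENNReal.ofReal (a - s) + ENNReal.ofReal (b - s)
        ≤ volume S2 + volume S1 := by
          apply add_le_add
          · rw [hvolS2, ← ENNReal.ofReal_toReal hAf]
            exact le_of_eq (ENNReal.ofReal_sub a hs0.le)
          · rw [hvolS1, ← ENNReal.ofReal_toReal hBf]
            exact le_of_eq (ENNReal.ofReal_sub b hs0.le)
      _ ≤ volume (S2 ∩ Ioi c) + volume (S1 ∩ Iio c) := add_le_add hS2' hS1'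
      _ = volume ((S2 ∩ Ioi c) ∪ (S1 ∩ Iio c)) := by
          rw [measure_union hd.symm (hS1m.inter measurableSet_Iio)]
      _ ≤ volume (Prod.mk s ⁻¹' W) := by
          apply measure_mono
          rw [hsec]
          rintro y (⟨h, -⟩ | ⟨h, -⟩)
          · exact Or.inr h
          · exact Or.inl h
  -- upper bound on horizontal sections
  have key2 : ∀ y : ℝ, volume ((fun s => (s, y)) ⁻¹' W) ≤
      min (volume (A ∩ {x | x - y ∈ B})) (ENNReal.ofReal t) := by
    intro y
    refine le_min ?_ ?_
    · set E1 : Set ℝ := {p | p - y ∈ B ∧ F p < G (p - y)} with hE1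
      set E2 : Set ℝ := {q | y + q ∈ A ∧ G q < F (y + q)} with hE2
      have hE1m : MeasurableSet E1 :=
        ((measurable_id.sub_const y) hB).inter
          (measurableSet_lt hFm (hGm.comp (measurable_id.sub_const y)))
      have hE2m : MeasurableSet E2 :=
        ((measurable_const.add measurable_id) hA).inter
          (measurableSet_lt hGm (hFm.comp (measurable_const.add measurable_id)))
      have hsub : (fun s => (s, y)) ⁻¹' W ⊆
          (Ioo 0 a ∩ α ⁻¹' E1) ∪ (Ioo 0 b ∩ β ⁻¹' E2) := by
        rintro s ⟨hst, hbr⟩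
        have hs0 : 0 < s := hst.1
        have hsa : s < a := lt_of_lt_of_le hst.2 hta
        have hsb : s < b := lt_of_lt_of_le hst.2 htb
        rcases hbr with ⟨h1, h2⟩ | ⟨h1, h2⟩
        · left
          refine ⟨⟨hs0, hsa⟩, h1, ?_⟩
          have h3 : F (α s) = s := mcdf_mquant hA hAf hs0 hsa
          rw [h3]; exact h2
        · right
          refine ⟨⟨hs0, hsb⟩, h1, ?_⟩
          have h3 : G (β s) = s := mcdf_mquant hB hBf hs0 hsb
          rw [h3]; exact h2
      have hv1 : volume (Ioo 0 a ∩ α ⁻¹' E1) = volume (A ∩ E1) := by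
        have := map_mquant hA hAf
        have h2 : Measure.map α (volume.restrict (Ioo 0 a)) E1 = volume.restrict A E1 := by
          rw [this]
        rw [Measure.map_apply hαm hE1m, Measure.restrict_apply' measurableSet_Ioo,
          Measure.restrict_apply' hA] at h2
        rw [Set.inter_comm, h2, Set.inter_comm]
      have hv2 : volume (Ioo 0 b ∩ β ⁻¹' E2) = volume (B ∩ E2) := by
        have := map_mquant hB hBf
        have h2 : Measure.map β (volume.restrict (Ioo 0 b)) E2 = volume.restrict B E2 := by
          rw [this]
        rw [Measure.map_apply hβm hE2m, Measure.restrict_apply' measurableSet_Ioo,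
          Measure.restrict_apply' hB] at h2
        rw [Set.inter_comm, h2, Set.inter_comm]
      set E2' : Set ℝ := {p | p - y ∈ B ∧ G (p - y) < F p} with hE2'
      have hv3 : volume (B ∩ E2) = volume (A ∩ E2') := by
        have hpre : (fun p : ℝ => p - y) ⁻¹' (B ∩ E2) = A ∩ E2' := by
          ext p
          simp only [mem_preimage, mem_inter_iff, hE2, hE2', mem_setOf_eq, add_sub_cancel]
          tauto
        rw [← hpre]
        exact ((measurePreserving_sub_right (volume : Measure ℝ) y).measure_preimage
          (hB.inter hE2m).nullMeasurableSet).symm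
      have hdisj : Disjoint (A ∩ E1) (A ∩ E2') := by
        apply Set.disjoint_left.2
        rintro p ⟨-, -, (h1 : F p < G (p - y))⟩ ⟨-, -, (h2 : G (p - y) < F p)⟩
        exact absurd h1 (not_lt.2 h2.le)
      have hE2'm : MeasurableSet E2' :=
        ((measurable_id.sub_const y) hB).inter
          (measurableSet_lt (hGm.comp (measurable_id.sub_const y)) hFm)
      calc volume ((fun s => (s, y)) ⁻¹' W)
          ≤ volume ((Ioo 0 a ∩ α ⁻¹' E1) ∪ (Ioo 0 b ∩ β ⁻¹' E2)) := measure_mono hsub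
        _ ≤ volume (Ioo 0 a ∩ α ⁻¹' E1) + volume (Ioo 0 b ∩ β ⁻¹' E2) := measure_union_le _ _
        _ = volume (A ∩ E1) + volume (A ∩ E2') := by rw [hv1, hv2, hv3]
        _ = volume ((A ∩ E1) ∪ (A ∩ E2')) := (measure_union hdisj (hA.inter hE2'm)).symm
        _ ≤ volume (A ∩ {x | x - y ∈ B}) := by
            apply measure_mono
            rintro p (⟨hpA, hp1, -⟩ | ⟨hpA, hp1, -⟩) <;> exact ⟨hpA, hp1⟩
    · calc volume ((fun s => (s, y)) ⁻¹' W) ≤ volume (Ioo 0 t) := by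
            apply measure_mono
            rintro s ⟨hst, -⟩
            exact hst
        _ = ENNReal.ofReal t := by rw [Real.volume_Ioo, sub_zero]
  -- Fubini in both orders
  have hWvol1 : (volume : Measure (ℝ × ℝ)) W = ∫⁻ s, volume (Prod.mk s ⁻¹' W) := by
    rw [Measure.volume_eq_prod]
    exact Measure.prod_apply hWm
  have hWvol2 : (volume : Measure (ℝ × ℝ)) W = ∫⁻ y, volume ((fun s => (s, y)) ⁻¹' W) := by
    rw [Measure.volume_eq_prod]
    exact Measure.prod_apply_symm hWm
  -- lower bound for the full integral
  have hlow : ENNReal.ofReal (t * (a + b - t)) ≤ ∫⁻ s, volume (Prod.mk s ⁻¹' W) := by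
    have step1 : ∫⁻ s in Ioo 0 t, (ENNReal.ofReal (a - s) + ENNReal.ofReal (b - s))
        ≤ ∫⁻ s in Ioo 0 t, volume (Prod.mk s ⁻¹' W) := by
      apply setLIntegral_mono' measurableSet_Ioo
      intro s hs
      exact key1 s hs
    have step2 : ∫⁻ s in Ioo 0 t, volume (Prod.mk s ⁻¹' W) ≤ ∫⁻ s, volume (Prod.mk s ⁻¹' W) :=
      setLIntegral_le_lintegral _ _
    refine le_trans ?_ (le_trans step1 step2)
    -- compute the explicit set integral
    have hcongr : ∫⁻ s in Ioo 0 t, (ENNReal.ofReal (a - s) + ENNReal.ofReal (b - s))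
        = ∫⁻ s in Ioo 0 t, ENNReal.ofReal ((a - s) + (b - s)) := by
      apply lintegral_congr_ae
      filter_upwards [ae_restrict_mem measurableSet_Ioo] with s hs
      rw [ENNReal.ofReal_add (by linarith [lt_of_lt_of_le hs.2 hta, hs.1] : (0:ℝ) ≤ a - s)
        (by linarith [lt_of_lt_of_le hs.2 htb, hs.1] : (0:ℝ) ≤ b - s)]
    have hcont : Continuous (fun s : ℝ => (a - s) + (b - s)) := by continuity
    have hInt : IntegrableOn (fun s : ℝ => (a - s) + (b - s)) (Ioo 0 t) := by
      apply (hcont.integrableOn_Icc (a := 0) (b := t)).mono_set Ioo_subset_Icc_self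
    have hae : 0 ≤ᵐ[volume.restrict (Ioo 0 t)] (fun s : ℝ => (a - s) + (b - s)) := by
      filter_upwards [ae_restrict_mem measurableSet_Ioo] with s hs
      have h1 : s < a := lt_of_lt_of_le hs.2 hta
      have h2 : s < b := lt_of_lt_of_le hs.2 htb
      have : (0:ℝ) ≤ (a - s) + (b - s) := by linarith
      exact this
    have hint : ∫⁻ s in Ioo 0 t, (ENNReal.ofReal (a - s) + ENNReal.ofReal (b - s))
        = ENNReal.ofReal (∫ s in Ioo 0 t, ((a - s) + (b - s))) := by
      rw [hcongr, ← ofReal_integral_eq_lintegral_ofReal hInt hae]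
    rw [hint]
    apply ENNReal.ofReal_le_ofReal
    have hval : ∫ s in Ioo 0 t, ((a - s) + (b - s)) = ∫ s in (0:ℝ)..t, ((a - s) + (b - s)) := by
      rw [intervalIntegral.integral_of_le ht0, ← MeasureTheory.integral_Ioc_eq_integral_Ioo]
    rw [hval]
    have hI1 : IntervalIntegrable (fun s : ℝ => a - s) volume 0 t :=
      (continuous_const.sub continuous_id).intervalIntegrable 0 t
    have hI2 : IntervalIntegrable (fun s : ℝ => b - s) volume 0 t :=
      (continuous_const.sub continuous_id).intervalIntegrable 0 t
    rw [intervalIntegral.integral_add hI1 hI2]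
    have e1 : ∫ s in (0:ℝ)..t, (a - s) = a * t - t ^ 2 / 2 := by
      rw [intervalIntegral.integral_sub intervalIntegrable_const
        intervalIntegral.intervalIntegrable_id, intervalIntegral.integral_const, integral_id]
      simp
      ring
    have e2 : ∫ s in (0:ℝ)..t, (b - s) = b * t - t ^ 2 / 2 := by
      rw [intervalIntegral.integral_sub intervalIntegrable_const
        intervalIntegral.intervalIntegrable_id, intervalIntegral.integral_const, integral_id]
      simp
      ring
    rw [e1, e2]
    ring_nf
    nlinarith [sq_nonneg t]
  calc ENNReal.ofReal (t * (a + b - t)) ≤ ∫⁻ s, volume (Prod.mk s ⁻¹' W) := hlow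
    _ = (volume : Measure (ℝ × ℝ)) W := hWvol1.symm
    _ = ∫⁻ y, volume ((fun s => (s, y)) ⁻¹' W) := hWvol2
    _ ≤ ∫⁻ y, min (volume (A ∩ {x | x - y ∈ B})) (ENNReal.ofReal t) := lintegral_mono key2

end Pollard

section Reduction

/-- Rewrite the double integral of a product of indicators as a set integral of slice measures. -/
lemma double_integral_eq (X Y Z : Set ℝ) (hX : MeasurableSet X) (hY : MeasurableSet Y)
    (hZ : MeasurableSet Z) :
    (∫⁻ x, ∫⁻ y, X.indicator (fun _ => (1 : ENNReal)) x *
        Y.indicator (fun _ => (1 : ENNReal)) (x - y) *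
        Z.indicator (fun _ => (1 : ENNReal)) y) =
    ∫⁻ x in X, volume ({y | x - y ∈ Y} ∩ Z) := by
  have hinner : ∀ x : ℝ, (∫⁻ y, X.indicator (fun _ => (1 : ENNReal)) x *
      Y.indicator (fun _ => (1 : ENNReal)) (x - y) *
      Z.indicator (fun _ => (1 : ENNReal)) y)
      = X.indicator (fun _ => (1 : ENNReal)) x * volume ({y | x - y ∈ Y} ∩ Z) := by
    intro x
    have hfe : (fun y => X.indicator (fun _ => (1 : ENNReal)) x *
        Y.indicator (fun _ => (1 : ENNReal)) (x - y) *
        Z.indicator (fun _ => (1 : ENNReal)) y)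
        = fun y => X.indicator (fun _ => (1 : ENNReal)) x *
          ({y | x - y ∈ Y} ∩ Z).indicator (fun _ => (1 : ENNReal)) y := by
      funext y
      by_cases hy1 : x - y ∈ Y <;> by_cases hy2 : y ∈ Z <;>
        simp [Set.indicator_apply, hy1, hy2, mem_inter_iff, mem_setOf_eq, mul_assoc]
    rw [hfe]
    have hset : MeasurableSet ({y | x - y ∈ Y} ∩ Z) :=
      ((measurable_const.sub measurable_id) hY).inter hZ
    have hne : X.indicator (fun _ => (1 : ENNReal)) x ≠ ⊤ := by
      by_cases hx : x ∈ X <;> simp [Set.indicator_apply, hx]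
    rw [lintegral_const_mul' _ _ hne, lintegral_indicator hset, setLIntegral_one]
  have houter : (fun x => X.indicator (fun _ => (1 : ENNReal)) x *
      volume ({y | x - y ∈ Y} ∩ Z))
      = fun x => X.indicator (fun x => volume ({y | x - y ∈ Y} ∩ Z)) x := by
    funext x
    by_cases hx : x ∈ X <;> simp [Set.indicator_apply, hx]
  calc (∫⁻ x, ∫⁻ y, X.indicator (fun _ => (1 : ENNReal)) x *
        Y.indicator (fun _ => (1 : ENNReal)) (x - y) *
        Z.indicator (fun _ => (1 : ENNReal)) y)
      = ∫⁻ x, X.indicator (fun _ => (1 : ENNReal)) x * volume ({y | x - y ∈ Y} ∩ Z) := by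
        apply lintegral_congr hinner
    _ = ∫⁻ x, X.indicator (fun x => volume ({y | x - y ∈ Y} ∩ Z)) x := by rw [houter]
    _ = ∫⁻ x in X, volume ({y | x - y ∈ Y} ∩ Z) := lintegral_indicator hX _

/-- The slice function is measurable. -/
lemma measurable_slice (Y Z : Set ℝ) (hY : MeasurableSet Y) (hZ : MeasurableSet Z) :
    Measurable (fun x => volume ({y | x - y ∈ Y} ∩ Z)) := by
  have hS : MeasurableSet {p : ℝ × ℝ | p.1 - p.2 ∈ Y ∧ p.2 ∈ Z} :=
    ((measurable_fst.sub measurable_snd) hY).inter (measurable_snd hZ)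
  have heq : ∀ x : ℝ, {y | x - y ∈ Y} ∩ Z
      = Prod.mk x ⁻¹' {p : ℝ × ℝ | p.1 - p.2 ∈ Y ∧ p.2 ∈ Z} := by
    intro x; ext y; simp [mem_inter_iff]
  have h2 : (fun x : ℝ => volume ({y | x - y ∈ Y} ∩ Z))
      = fun x : ℝ => volume (Prod.mk x ⁻¹' {p : ℝ × ℝ | p.1 - p.2 ∈ Y ∧ p.2 ∈ Z}) := by
    funext x; rw [heq x]
  rw [h2]
  exact measurable_measure_prodMk_left hS

/-- Total mass of the slice function. -/
lemma lintegral_slice (Y Z : Set ℝ) (hY : MeasurableSet Y) (hZ : MeasurableSet Z) :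
    ∫⁻ x, volume ({y | x - y ∈ Y} ∩ Z) = volume Y * volume Z := by
  have hS : MeasurableSet {p : ℝ × ℝ | p.1 - p.2 ∈ Y ∧ p.2 ∈ Z} :=
    ((measurable_fst.sub measurable_snd) hY).inter (measurable_snd hZ)
  have h1 : (volume : Measure (ℝ × ℝ)) {p : ℝ × ℝ | p.1 - p.2 ∈ Y ∧ p.2 ∈ Z}
      = ∫⁻ x, volume ({y | x - y ∈ Y} ∩ Z) := by
    rw [Measure.volume_eq_prod, Measure.prod_apply hS]
    apply lintegral_congr
    intro x
    congr 1
  have h2 : (volume : Measure (ℝ × ℝ)) {p : ℝ × ℝ | p.1 - p.2 ∈ Y ∧ p.2 ∈ Z}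
      = volume Y * volume Z := by
    rw [Measure.volume_eq_prod, Measure.prod_apply_symm hS]
    have hfe : (fun y => volume ((fun x => (x, y)) ⁻¹' {p : ℝ × ℝ | p.1 - p.2 ∈ Y ∧ p.2 ∈ Z}))
        = fun y => Z.indicator (fun _ => volume Y) y := by
      funext y
      by_cases hy : y ∈ Z
      · have : ((fun x => (x, y)) ⁻¹' {p : ℝ × ℝ | p.1 - p.2 ∈ Y ∧ p.2 ∈ Z})
            = (fun x => x - y) ⁻¹' Y := by
          ext x
          simp [hy]
        rw [this, Set.indicator_of_mem hy,
          (measurePreserving_sub_right (volume : Measure ℝ) y).measure_preimage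
            hY.nullMeasurableSet]
      · have : ((fun x => (x, y)) ⁻¹' {p : ℝ × ℝ | p.1 - p.2 ∈ Y ∧ p.2 ∈ Z}) = ∅ := by
          ext x
          simp [hy]
        rw [this, Set.indicator_of_notMem hy, measure_empty]
    rw [hfe, lintegral_indicator hZ, setLIntegral_const, mul_comm]
  rw [← h1, h2]

/-- Main upper bound on the Riesz functional, via the continuum Pollard inequality. -/
lemma main_bound (X Y Z : Set ℝ) (hX : MeasurableSet X) (hY : MeasurableSet Y)
    (hZ : MeasurableSet Z) (hXf : volume X ≠ ⊤) (hYf : volume Y ≠ ⊤) (hZf : volume Z ≠ ⊤)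
    (t : ℝ) (ht0 : 0 ≤ t) (hty : t ≤ (volume Y).toReal) (htz : t ≤ (volume Z).toReal) :
    ∫⁻ x in X, volume ({y | x - y ∈ Y} ∩ Z) ≤
      ENNReal.ofReal ((volume X).toReal * t + (volume Y).toReal * (volume Z).toReal
        - t * ((volume Y).toReal + (volume Z).toReal - t)) := by
  set xv := (volume X).toReal
  set yv := (volume Y).toReal
  set zv := (volume Z).toReal
  have hxv0 : (0:ℝ) ≤ (volume X).toReal := ENNReal.toReal_nonneg
  have hyv0 : (0:ℝ) ≤ (volume Y).toReal := ENNReal.toReal_nonneg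
  have hzv0 : (0:ℝ) ≤ (volume Z).toReal := ENNReal.toReal_nonneg
  set K : ℝ → ENNReal := fun x => volume ({y | x - y ∈ Y} ∩ Z) with hK
  have hKm : Measurable K := measurable_slice Y Z hY hZ
  set T : ENNReal := ENNReal.ofReal t with hT
  -- Pollard applied to (Z, -Y)
  set Yn : Set ℝ := Neg.neg ⁻¹' Y with hYn
  have hYnm : MeasurableSet Yn := measurable_neg hY
  have hYnf : volume Yn ≠ ⊤ := by
    have : volume Yn = volume Y := Measure.measure_neg volume Y
    rw [this]; exact hYf
  have hYnv : (volume Yn).toReal = yv := by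
    have : volume Yn = volume Y := Measure.measure_neg volume Y
    rw [this]
  have hpol := pollard hZ hYnm hZf hYnf t ht0 htz (by rw [hYnv]; exact hty)
  have hpol2 : ENNReal.ofReal (t * (zv + yv - t)) ≤ ∫⁻ x, min (K x) T := by
    rw [hYnv] at hpol
    refine le_trans hpol (le_of_eq ?_)
    apply lintegral_congr
    intro x
    congr 2
    ext q
    simp only [mem_inter_iff, mem_setOf_eq, hYn, mem_preimage, neg_sub, hK]
    constructor
    · rintro ⟨h1, h2⟩; exact ⟨h2, h1⟩
    · rintro ⟨h1, h2⟩; exact ⟨h2, h1⟩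
  -- split K
  have hsplit : ∀ x, K x ≤ T + (K x - T) := fun x => le_add_tsub
  have step1 : ∫⁻ x in X, K x ≤ ∫⁻ x in X, (T + (K x - T)) :=
    lintegral_mono fun x => hsplit x
  have step2 : ∫⁻ x in X, (T + (K x - T)) = T * volume X + ∫⁻ x in X, (K x - T) := by
    rw [lintegral_add_left measurable_const, setLIntegral_const]
  have step3 : ∫⁻ x in X, (K x - T) ≤ ∫⁻ x, (K x - T) := setLIntegral_le_lintegral _ _
  have htot : ∫⁻ x, K x = volume Y * volume Z := lintegral_slice Y Z hY hZ
  have hfin : ∫⁻ x, min (K x) T ≠ ⊤ := by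
    refine ne_top_of_le_ne_top ?_ (lintegral_mono fun x => min_le_left _ _)
    rw [htot]
    exact ENNReal.mul_ne_top hYf hZf
  have hdecomp : (∫⁻ x, min (K x) T) + ∫⁻ x, (K x - T) = volume Y * volume Z := by
    rw [← htot,
      ← lintegral_add_left (μ := (volume : Measure ℝ)) (hKm.min measurable_const)
        (fun x => K x - T)]
    apply lintegral_congr
    intro x
    rcases le_total (K x) T with h | h
    · rw [min_eq_left h, tsub_eq_zero_of_le h, add_zero]
    · rw [min_eq_right h, add_tsub_cancel_of_le h]
  have step4 : ∫⁻ x, (K x - T) = volume Y * volume Z - ∫⁻ x, min (K x) T := by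
    rw [← hdecomp, ENNReal.add_sub_cancel_left hfin]
  have step5 : ∫⁻ x, (K x - T) ≤ ENNReal.ofReal (yv * zv) - ENNReal.ofReal (t * (zv + yv - t)) := by
    rw [step4]
    have hyz : volume Y * volume Z = ENNReal.ofReal (yv * zv) := by
      rw [ENNReal.ofReal_mul (ENNReal.toReal_nonneg), ENNReal.ofReal_toReal hYf,
        ENNReal.ofReal_toReal hZf]
    rw [hyz]
    exact tsub_le_tsub_left hpol2 _
  have hsub : ENNReal.ofReal (yv * zv) - ENNReal.ofReal (t * (zv + yv - t))
      = ENNReal.ofReal (yv * zv - t * (zv + yv - t)) := by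
    rw [← ENNReal.ofReal_sub _ (by nlinarith : (0:ℝ) ≤ t * (zv + yv - t))]
  have hXv : volume X = ENNReal.ofReal xv := (ENNReal.ofReal_toReal hXf).symm
  calc ∫⁻ x in X, K x ≤ T * volume X + ∫⁻ x in X, (K x - T) := le_trans step1 (le_of_eq step2)
    _ ≤ T * volume X + ENNReal.ofReal (yv * zv - t * (zv + yv - t)) := by
        refine add_le_add le_rfl ?_
        exact le_trans step3 (le_trans step5 (le_of_eq hsub))
    _ = ENNReal.ofReal (xv * t) + ENNReal.ofReal (yv * zv - t * (zv + yv - t)) := by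
        rw [hXv, hT, ← ENNReal.ofReal_mul ht0, mul_comm]
    _ ≤ ENNReal.ofReal (xv * t + (yv * zv - t * (zv + yv - t))) := by
        rw [ENNReal.ofReal_add (by positivity) (by nlinarith : (0:ℝ) ≤ yv * zv - t * (zv + yv - t))]
    _ = ENNReal.ofReal (xv * t + yv * zv - t * (yv + zv - t)) := by ring_nf

end Reduction

section RHS

/-- The elementary real inequality comparing the optimal Pollard bound with the explicit
integral of the tent function over the centered interval. -/
lemma key_core (a b c u t m L : ℝ) (ha : 0 ≤ a) (hu0 : 0 ≤ u) (hub : u ≤ b) (huc : u ≤ c)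
    (hbc : (b - u) * (c - u) = 0)
    (ht : t = min u (max 0 ((b + c) / 2 - a / 2)))
    (hm : m = min (a / 2) ((b + c) / 2 - u))
    (hL : L = min (a / 2) ((b + c) / 2)) :
    a * t + b * c - t * (b + c - t)
      ≤ 2 * u * m + 2 * ((b + c) / 2 * (L - m) - (L ^ 2 - m ^ 2) / 2) := by
  by_cases hA : (b + c) / 2 ≤ a / 2
  · have hmax : max 0 ((b + c) / 2 - a / 2) = 0 := max_eq_left (by linarith)
    have ht' : t = 0 := by rw [ht, hmax, min_eq_right hu0]
    have hL' : L = (b + c) / 2 := by rw [hL, min_eq_right hA]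
    have hm' : m = (b + c) / 2 - u := by rw [hm, min_eq_right (by linarith)]
    rw [ht', hL', hm']
    nlinarith [hbc]
  · push_neg at hA
    by_cases hB : u ≤ (b + c) / 2 - a / 2
    · have hmax : max 0 ((b + c) / 2 - a / 2) = (b + c) / 2 - a / 2 :=
        max_eq_right (by linarith)
      have ht' : t = u := by rw [ht, hmax, min_eq_left hB]
      have hm' : m = a / 2 := by rw [hm, min_eq_left (by linarith)]
      have hL' : L = a / 2 := by rw [hL, min_eq_left (by linarith)]
      rw [ht', hL', hm']
      nlinarith [hbc]
    · push_neg at hB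
      have hmax : max 0 ((b + c) / 2 - a / 2) = (b + c) / 2 - a / 2 :=
        max_eq_right (by linarith)
      have ht' : t = (b + c) / 2 - a / 2 := by rw [ht, hmax, min_eq_right (by linarith)]
      have hm' : m = (b + c) / 2 - u := by rw [hm, min_eq_right (by linarith)]
      have hL' : L = a / 2 := by rw [hL, min_eq_left (by linarith)]
      rw [ht', hL', hm']
      nlinarith [hbc]

lemma key_real (a b c : ℝ) (ha : 0 ≤ a) (hb : 0 ≤ b) (hc : 0 ≤ c) :
    a * min (min b c) (max 0 ((b + c) / 2 - a / 2)) + b * c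
      - min (min b c) (max 0 ((b + c) / 2 - a / 2))
        * (b + c - min (min b c) (max 0 ((b + c) / 2 - a / 2)))
    ≤ 2 * min b c * min (a / 2) ((b + c) / 2 - min b c)
      + 2 * ((b + c) / 2 * (min (a / 2) ((b + c) / 2) - min (a / 2) ((b + c) / 2 - min b c))
        - ((min (a / 2) ((b + c) / 2)) ^ 2 - (min (a / 2) ((b + c) / 2 - min b c)) ^ 2) / 2) := by
  have hbc : (b - min b c) * (c - min b c) = 0 := by
    rcases min_cases b c with ⟨h1, -⟩ | ⟨h1, -⟩ <;> rw [h1] <;> ring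
  exact key_core a b c (min b c) _ _ _ ha (le_min hb hc) (min_le_left _ _) (min_le_right _ _)
    hbc rfl rfl rfl

/-- Lower bound for the rearranged side. -/
lemma rhs_lower (a b c : ℝ) (ha : 0 ≤ a) (hb : 0 ≤ b) (hc : 0 ≤ c) :
    ENNReal.ofReal (a * min (min b c) (max 0 ((b + c) / 2 - a / 2)) + b * c
        - min (min b c) (max 0 ((b + c) / 2 - a / 2))
          * (b + c - min (min b c) (max 0 ((b + c) / 2 - a / 2)))) ≤
      ∫⁻ x in Ioo (-(a / 2)) (a / 2),
        volume ({y | x - y ∈ Ioo (-(b / 2)) (b / 2)} ∩ Ioo (-(c / 2)) (c / 2)) := by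
  set u := min b c with hu_def
  set h := (b + c) / 2 with hh_def
  set m := min (a / 2) (h - u) with hm_def
  set L := min (a / 2) h with hL_def
  have hu0 : 0 ≤ u := le_min hb hc
  have hub : u ≤ b := min_le_left _ _
  have huc : u ≤ c := min_le_right _ _
  have huh : u ≤ h := by rw [hh_def, hu_def]; rcases min_cases b c with ⟨h1,h2⟩|⟨h1,h2⟩ <;>
    rw [h1] <;> linarith
  have hm0 : 0 ≤ m := le_min (by linarith) (by linarith)
  have hmL : m ≤ L := min_le_min le_rfl (by linarith)
  have hLa : L ≤ a / 2 := min_le_left _ _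
  have hLh : L ≤ h := min_le_right _ _
  have hma : m ≤ a / 2 := min_le_left _ _
  -- the integrand evaluates to the tent function
  have hinner : ∀ x : ℝ,
      volume ({y | x - y ∈ Ioo (-(b / 2)) (b / 2)} ∩ Ioo (-(c / 2)) (c / 2))
      = ENNReal.ofReal (min (x + b / 2) (c / 2) - max (x - b / 2) (-(c / 2))) := by
    intro x
    have h1 : {y | x - y ∈ Ioo (-(b / 2)) (b / 2)} = Ioo (x - b / 2) (x + b / 2) := by
      ext y
      simp only [mem_setOf_eq, mem_Ioo]
      constructor
      · rintro ⟨h1, h2⟩; constructor <;> linarith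
      · rintro ⟨h1, h2⟩; constructor <;> linarith
    rw [h1, Ioo_inter_Ioo, Real.volume_Ioo]
  rw [setLIntegral_congr_fun measurableSet_Ioo
    (fun x _ => hinner x)]
  -- three pieces
  set tent : ℝ → ℝ := fun x => min (x + b / 2) (c / 2) - max (x - b / 2) (-(c / 2)) with htent
  have hP2 : ENNReal.ofReal (u * (2 * m)) ≤ ∫⁻ x in Ioo (-m) m, ENNReal.ofReal (tent x) := by
    have hpt : ∀ x ∈ Ioo (-m) m, ENNReal.ofReal u ≤ ENNReal.ofReal (tent x) := by
      intro x hx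
      apply ENNReal.ofReal_le_ofReal
      have hx1 : -m < x := hx.1
      have hx2 : x < m := hx.2
      have hm1 : m ≤ h - u := min_le_right _ _
      simp only [htent]
      rcases min_cases (x + b / 2) (c / 2) with ⟨e1, e2⟩ | ⟨e1, e2⟩ <;>
        rcases max_cases (x - b / 2) (-(c / 2)) with ⟨f1, f2⟩ | ⟨f1, f2⟩ <;>
        simp only [htent, e1, f1] <;> simp only [hh_def] at hm1 ⊢ <;> linarith
    calc ENNReal.ofReal (u * (2 * m)) = ENNReal.ofReal u * volume (Ioo (-m) m) := by
          rw [Real.volume_Ioo, ← ENNReal.ofReal_mul hu0]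
          congr 1
          ring
      _ = ∫⁻ _ in Ioo (-m) m, ENNReal.ofReal u := by rw [setLIntegral_const, mul_comm]
      _ ≤ ∫⁻ x in Ioo (-m) m, ENNReal.ofReal (tent x) := setLIntegral_mono' measurableSet_Ioo hpt
  have hmhu : ∀ x, x ∈ Ioo m L → m = h - u := by
    intro x hx
    rcases min_cases (a / 2) (h - u) with ⟨h1, h2⟩ | ⟨h1, h2⟩
    · exfalso
      have : m < L := lt_trans hx.1 hx.2
      rw [hm_def, h1] at this
      exact absurd (lt_of_lt_of_le this hLa) (lt_irrefl _)
    · rw [hm_def, h1]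
  have hP3 : ENNReal.ofReal (h * (L - m) - (L ^ 2 - m ^ 2) / 2)
      ≤ ∫⁻ x in Ioo m L, ENNReal.ofReal (tent x) := by
    have hval : ∫⁻ x in Ioo m L, ENNReal.ofReal (h - x)
        = ENNReal.ofReal (h * (L - m) - (L ^ 2 - m ^ 2) / 2) := by
      have hInt : IntegrableOn (fun x : ℝ => h - x) (Ioo m L) :=
        ((continuous_const.sub continuous_id).integrableOn_Icc (a := m) (b := L)).mono_set
          Ioo_subset_Icc_self
      have hae : 0 ≤ᵐ[volume.restrict (Ioo m L)] (fun x : ℝ => h - x) := by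
        filter_upwards [ae_restrict_mem measurableSet_Ioo] with x hx
        have : x < L := hx.2
        have : (0:ℝ) ≤ h - x := by linarith
        exact this
      rw [← ofReal_integral_eq_lintegral_ofReal hInt hae]
      congr 1
      have hio : ∫ x in Ioo m L, (h - x) = ∫ x in m..L, (h - x) := by
        rw [intervalIntegral.integral_of_le hmL, ← MeasureTheory.integral_Ioc_eq_integral_Ioo]
      rw [hio, intervalIntegral.integral_sub intervalIntegrable_const
        intervalIntegral.intervalIntegrable_id, intervalIntegral.integral_const, integral_id]
      simp only [smul_eq_mul]
      ring
    rw [← hval]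
    apply setLIntegral_mono' measurableSet_Ioo
    intro x hx
    apply ENNReal.ofReal_le_ofReal
    have hmeq : m = h - u := hmhu x hx
    have hx1 : m < x := hx.1
    have hx2 : x < L := hx.2
    simp only [htent]
    rcases min_cases (x + b / 2) (c / 2) with ⟨e1, e2⟩ | ⟨e1, e2⟩ <;>
      rcases max_cases (x - b / 2) (-(c / 2)) with ⟨f1, f2⟩ | ⟨f1, f2⟩ <;>
      simp only [htent, e1, f1] <;> simp only [hh_def] at hmeq hx1 hx2 hLh ⊢ <;>
      simp only [hu_def] at hmeq <;>
      rcases min_cases b c with ⟨g1, g2⟩ | ⟨g1, g2⟩ <;> rw [g1] at hmeq <;> linarith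
  have hP1 : ENNReal.ofReal (h * (L - m) - (L ^ 2 - m ^ 2) / 2)
      ≤ ∫⁻ x in Ioo (-L) (-m), ENNReal.ofReal (tent x) := by
    have hval : ∫⁻ x in Ioo (-L) (-m), ENNReal.ofReal (h + x)
        = ENNReal.ofReal (h * (L - m) - (L ^ 2 - m ^ 2) / 2) := by
      have hInt : IntegrableOn (fun x : ℝ => h + x) (Ioo (-L) (-m)) :=
        ((continuous_const.add continuous_id).integrableOn_Icc (a := -L) (b := -m)).mono_set
          Ioo_subset_Icc_self
      have hae : 0 ≤ᵐ[volume.restrict (Ioo (-L) (-m))] (fun x : ℝ => h + x) := by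
        filter_upwards [ae_restrict_mem measurableSet_Ioo] with x hx
        have : -L < x := hx.1
        have : (0:ℝ) ≤ h + x := by linarith
        exact this
      rw [← ofReal_integral_eq_lintegral_ofReal hInt hae]
      congr 1
      have hio : ∫ x in Ioo (-L) (-m), (h + x) = ∫ x in (-L)..(-m), (h + x) := by
        rw [intervalIntegral.integral_of_le (by linarith), ← MeasureTheory.integral_Ioc_eq_integral_Ioo]
      rw [hio, intervalIntegral.integral_add intervalIntegrable_const
        intervalIntegral.intervalIntegrable_id, intervalIntegral.integral_const, integral_id]
      simp only [smul_eq_mul]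
      ring
    rw [← hval]
    apply setLIntegral_mono' measurableSet_Ioo
    intro x hx
    apply ENNReal.ofReal_le_ofReal
    have hmeq : m = h - u := by
      apply hmhu (-x)
      constructor
      · have := hx.2; simp only [mem_Ioo] at hx; linarith [hx.2]
      · have := hx.1; simp only [mem_Ioo] at hx; linarith [hx.1]
    have hx1 : -L < x := hx.1
    have hx2 : x < -m := hx.2
    simp only [htent]
    rcases min_cases (x + b / 2) (c / 2) with ⟨e1, e2⟩ | ⟨e1, e2⟩ <;>
      rcases max_cases (x - b / 2) (-(c / 2)) with ⟨f1, f2⟩ | ⟨f1, f2⟩ <;>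
      simp only [htent, e1, f1] <;> simp only [hh_def] at hmeq hx1 hx2 hLh ⊢ <;>
      simp only [hu_def] at hmeq <;>
      rcases min_cases b c with ⟨g1, g2⟩ | ⟨g1, g2⟩ <;> rw [g1] at hmeq <;> linarith
  -- assemble the pieces
  have hdisj1 : Disjoint (Ioo (-m) m) (Ioo m L) := by
    apply Set.disjoint_left.2
    rintro x ⟨-, h1⟩ ⟨h2, -⟩
    exact absurd h1 (not_lt.2 h2.le)
  have hdisj2 : Disjoint (Ioo (-L) (-m)) (Ioo (-m) m ∪ Ioo m L) := by
    apply Set.disjoint_left.2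
    intro x hx hy
    simp only [mem_Ioo, mem_union] at hx hy
    rcases hy with hy | hy <;> linarith [hm0, hx.2, hy.1]
  have hunion : ∫⁻ x in (Ioo (-L) (-m) ∪ (Ioo (-m) m ∪ Ioo m L)), ENNReal.ofReal (tent x)
      = (∫⁻ x in Ioo (-L) (-m), ENNReal.ofReal (tent x))
        + ((∫⁻ x in Ioo (-m) m, ENNReal.ofReal (tent x))
          + ∫⁻ x in Ioo m L, ENNReal.ofReal (tent x)) := by
    rw [lintegral_union (measurableSet_Ioo.union measurableSet_Ioo) hdisj2,
      lintegral_union measurableSet_Ioo hdisj1]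
  have hsubset : (Ioo (-L) (-m) ∪ (Ioo (-m) m ∪ Ioo m L)) ⊆ Ioo (-(a / 2)) (a / 2) := by
    intro x hx
    simp only [mem_union, mem_Ioo] at hx ⊢
    rcases hx with hx | hx | hx <;> constructor <;> linarith [hx.1, hx.2, hm0, hLa]
  calc ENNReal.ofReal (a * min (min b c) (max 0 ((b + c) / 2 - a / 2)) + b * c
        - min (min b c) (max 0 ((b + c) / 2 - a / 2))
          * (b + c - min (min b c) (max 0 ((b + c) / 2 - a / 2))))
      ≤ ENNReal.ofReal (u * (2 * m) + ((h * (L - m) - (L ^ 2 - m ^ 2) / 2)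
          + (h * (L - m) - (L ^ 2 - m ^ 2) / 2))) := by
        apply ENNReal.ofReal_le_ofReal
        have := key_real a b c ha hb hc
        rw [← hu_def, ← hh_def, ← hm_def, ← hL_def] at this
        linarith
    _ ≤ ENNReal.ofReal (u * (2 * m)) + (ENNReal.ofReal (h * (L - m) - (L ^ 2 - m ^ 2) / 2)
          + ENNReal.ofReal (h * (L - m) - (L ^ 2 - m ^ 2) / 2)) := by
        refine le_trans ENNReal.ofReal_add_le (add_le_add le_rfl ENNReal.ofReal_add_le)
    _ ≤ (∫⁻ x in Ioo (-m) m, ENNReal.ofReal (tent x))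
          + ((∫⁻ x in Ioo (-L) (-m), ENNReal.ofReal (tent x))
            + ∫⁻ x in Ioo m L, ENNReal.ofReal (tent x)) := by
        exact add_le_add hP2 (add_le_add hP1 hP3)
    _ = ∫⁻ x in (Ioo (-L) (-m) ∪ (Ioo (-m) m ∪ Ioo m L)), ENNReal.ofReal (tent x) := by
        rw [hunion]
        ring
    _ ≤ ∫⁻ x in Ioo (-(a / 2)) (a / 2), ENNReal.ofReal (tent x) := lintegral_mono_set hsubset

end RHS

end RieszAux

open RieszAux

/-- The symmetric rearrangement of a set of finite Lebesgue measure: the open interval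
centered at `0` with the same Lebesgue measure. -/
noncomputable def symmRearrange (S : Set ℝ) : Set ℝ :=
  Set.Ioo (-((volume S).toReal / 2)) ((volume S).toReal / 2)

/-- F. Riesz's rearrangement inequality for indicator functions on `ℝ`. -/
theorem stmt_13 (A B C : Set ℝ)
    (hA : MeasurableSet A) (hB : MeasurableSet B) (hC : MeasurableSet C)
    (hAf : volume A ≠ ⊤) (hBf : volume B ≠ ⊤) (hCf : volume C ≠ ⊤) :
    (∫⁻ x, ∫⁻ y, A.indicator (fun _ => (1 : ENNReal)) x *
        B.indicator (fun _ => (1 : ENNReal)) (x - y) *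
        C.indicator (fun _ => (1 : ENNReal)) y) ≤
    (∫⁻ x, ∫⁻ y, (symmRearrange A).indicator (fun _ => (1 : ENNReal)) x *
        (symmRearrange B).indicator (fun _ => (1 : ENNReal)) (x - y) *
        (symmRearrange C).indicator (fun _ => (1 : ENNReal)) y) := by
  have ha0 : (0:ℝ) ≤ (volume A).toReal := ENNReal.toReal_nonneg
  have hb0 : (0:ℝ) ≤ (volume B).toReal := ENNReal.toReal_nonneg
  have hc0 : (0:ℝ) ≤ (volume C).toReal := ENNReal.toReal_nonneg
  set a := (volume A).toReal with ha
  set b := (volume B).toReal with hb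
  set c := (volume C).toReal with hc
  set t := min (min b c) (max 0 ((b + c) / 2 - a / 2)) with htdef
  have ht0 : 0 ≤ t := le_min (le_min hb0 hc0) (le_max_left _ _)
  have htb : t ≤ b := le_trans (min_le_left _ _) (min_le_left _ _)
  have htc : t ≤ c := le_trans (min_le_left _ _) (min_le_right _ _)
  have hAs : symmRearrange A = Set.Ioo (-(a / 2)) (a / 2) := rfl
  have hBs : symmRearrange B = Set.Ioo (-(b / 2)) (b / 2) := rfl
  have hCs : symmRearrange C = Set.Ioo (-(c / 2)) (c / 2) := rfl
  rw [double_integral_eq A B C hA hB hC, hAs, hBs, hCs,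
    double_integral_eq _ _ _ measurableSet_Ioo measurableSet_Ioo measurableSet_Ioo]
  calc ∫⁻ x in A, volume ({y | x - y ∈ B} ∩ C)
      ≤ ENNReal.ofReal (a * t + b * c - t * (b + c - t)) :=
        main_bound A B C hA hB hC hAf hBf hCf t ht0 htb htc
    _ ≤ ∫⁻ x in Set.Ioo (-(a / 2)) (a / 2),
          volume ({y | x - y ∈ Set.Ioo (-(b / 2)) (b / 2)} ∩ Set.Ioo (-(c / 2)) (c / 2)) := by
        have := rhs_lower a b c ha0 hb0 hc0
        rw [← htdef] at this
        exact this
end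

section
/- Fix b > 0 and N ≥ 1/(2b), and let 𝓕(b) denote the convex set of all probability distributions on ℝ that are symmetric, supported on [−N, N], and whose distribution functions are Lipschitz with constant b (equivalently, absolutely continuous with density bounded by b almost everywhere). Then the extreme points of 𝓕(b) are exactly the distributions whose density equals (up to a set of Lebesgue measure zero) b·1_B for some symmetric Borel set B ⊆ [−N, N] with Lebesgue measure λ(B) = 1/b. -/
open MeasureTheory

open Set
open scoped ENNReal NNReal

lemma measure_Ioc_eq_ofReal (μ : Measure ℝ) [IsFiniteMeasure μ] {a c : ℝ} (h : a ≤ c) :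
    μ (Set.Ioc a c) = ENNReal.ofReal ((μ (Set.Iic c)).toReal - (μ (Set.Iic a)).toReal) := by
  have hsub : Set.Iic a ⊆ Set.Iic c := Set.Iic_subset_Iic.2 h
  have hd : μ (Set.Ioc a c) = μ (Set.Iic c) - μ (Set.Iic a) := by
    rw [← Set.Iic_sdiff_Iic, measure_sdiff hsub measurableSet_Iic.nullMeasurableSet
      (measure_ne_top μ _)]
  rw [hd, ← ENNReal.toReal_sub_of_le (measure_mono hsub) (measure_ne_top μ _),
    ENNReal.ofReal_toReal]
  exact (tsub_le_self.trans_lt (measure_lt_top μ _)).ne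

lemma le_smul_vol {b : ℝ} (hb : 0 < b) (μ : Measure ℝ) [IsFiniteMeasure μ]
    (hL : LipschitzWith (Real.toNNReal b) (fun x => (μ (Set.Iic x)).toReal)) :
    μ ≤ ENNReal.ofReal b • volume := by
  set F : ℝ → ℝ := fun x => (μ (Set.Iic x)).toReal with hF
  have hmono : ∀ ⦃a c : ℝ⦄, a ≤ c → F c - F a ≤ b * (c - a) := by
    intro a c h
    have h1 := hL.dist_le_mul c a
    rw [Real.dist_eq, Real.dist_eq, Real.coe_toNNReal b hb.le] at h1
    calc F c - F a ≤ |F c - F a| := le_abs_self _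
      _ ≤ b * |c - a| := h1
      _ = b * (c - a) := by rw [abs_of_nonneg (sub_nonneg.2 h)]
  set G : StieltjesFunction ℝ :=
    { toFun := fun x => b * x - F x
      mono' := fun a c h => by have := hmono h; simp only; linarith
      right_continuous' := fun x =>
        ((continuous_const.mul continuous_id).sub hL.continuous).continuousWithinAt } with hG
  have key : ENNReal.ofReal b • (volume : Measure ℝ) = μ + G.measure := by
    refine Measure.ext_of_Ioc' _ _ (fun a c h => ?_) (fun a c h => ?_)
    · rw [Measure.smul_apply, smul_eq_mul, Real.volume_Ioc]
      exact ENNReal.mul_ne_top ENNReal.ofReal_ne_top ENNReal.ofReal_ne_top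
    · rw [Measure.add_apply, Measure.smul_apply, smul_eq_mul, Real.volume_Ioc,
        G.measure_Ioc, measure_Ioc_eq_ofReal μ h.le, ← ENNReal.ofReal_mul hb.le]
      have h1 : (0:ℝ) ≤ F c - F a := by
        refine sub_nonneg.2 (ENNReal.toReal_mono (measure_ne_top μ _)
          (measure_mono (Set.Iic_subset_Iic.2 h.le)))
      rw [← ENNReal.ofReal_add h1 (sub_nonneg.2 (G.mono h.le))]
      congr 1
      show b * (c - a) = (F c - F a) + ((b * c - F c) - (b * a - F a))
      ring
  calc μ ≤ μ + G.measure := Measure.le_add_right le_rfl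
    _ = ENNReal.ofReal b • volume := key.symm

lemma lip_of_le {b : ℝ} (hb : 0 ≤ b) (μ : Measure ℝ) [IsFiniteMeasure μ]
    (h : μ ≤ ENNReal.ofReal b • volume) :
    LipschitzWith (Real.toNNReal b) (fun x => (μ (Set.Iic x)).toReal) := by
  have key : ∀ ⦃x y : ℝ⦄, y ≤ x →
      (μ (Set.Iic x)).toReal - (μ (Set.Iic y)).toReal ≤ b * (x - y) := by
    intro x y hxy
    have h1 : μ (Set.Ioc y x) ≤ ENNReal.ofReal (b * (x - y)) := by
      calc μ (Set.Ioc y x) ≤ (ENNReal.ofReal b • (volume : Measure ℝ)) (Set.Ioc y x) := h _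
        _ = ENNReal.ofReal b * ENNReal.ofReal (x - y) := by
            rw [Measure.smul_apply, smul_eq_mul, Real.volume_Ioc]
        _ = ENNReal.ofReal (b * (x - y)) := (ENNReal.ofReal_mul hb).symm
    have h2 := measure_Ioc_eq_ofReal μ hxy
    rw [h2] at h1
    have h0 : (0:ℝ) ≤ (μ (Set.Iic x)).toReal - (μ (Set.Iic y)).toReal :=
      sub_nonneg.2 (ENNReal.toReal_mono (measure_ne_top μ _)
        (measure_mono (Set.Iic_subset_Iic.2 hxy)))
    have h3 := ENNReal.toReal_mono ENNReal.ofReal_ne_top h1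
    rwa [ENNReal.toReal_ofReal h0, ENNReal.toReal_ofReal (mul_nonneg hb (sub_nonneg.2 hxy))] at h3
  have hmono : ∀ ⦃x y : ℝ⦄, y ≤ x → (μ (Set.Iic y)).toReal ≤ (μ (Set.Iic x)).toReal :=
    fun x y hxy => ENNReal.toReal_mono (measure_ne_top μ _)
      (measure_mono (Set.Iic_subset_Iic.2 hxy))
  refine LipschitzWith.of_dist_le_mul fun x y => ?_
  rw [Real.dist_eq, Real.dist_eq, Real.coe_toNNReal b hb]
  rcases le_total y x with h' | h'
  · rw [abs_of_nonneg (sub_nonneg.2 (hmono h')), abs_of_nonneg (sub_nonneg.2 h')]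
    exact key h'
  · rw [abs_of_nonpos (sub_nonpos.2 (hmono h')), abs_of_nonpos (sub_nonpos.2 h'),
      neg_sub, neg_sub]
    exact key h'

lemma map_neg_withDensity (f : ℝ → ℝ≥0∞) (hf : Measurable f) :
    ((volume : Measure ℝ).withDensity f).map (fun x => -x) =
      volume.withDensity (fun x => f (-x)) := by
  ext s hs
  rw [Measure.map_apply measurable_neg hs, withDensity_apply _ (measurable_neg hs),
    withDensity_apply _ hs]
  have := (Measure.measurePreserving_neg (volume : Measure ℝ)).setLIntegral_comp_preimage_emb
    (MeasurableEquiv.neg ℝ).measurableEmbedding (fun x => f (-x)) s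
  simpa using this

lemma map_neg_restrict (B : Set ℝ) (hBm : MeasurableSet B) (hBsym : B = -B) :
    ((volume : Measure ℝ).restrict B).map (fun x => -x) = volume.restrict B := by
  ext s hs
  rw [Measure.map_apply measurable_neg hs, Measure.restrict_apply (measurable_neg hs),
    Measure.restrict_apply hs]
  have hset : (fun x : ℝ => -x) ⁻¹' s ∩ B = (fun x : ℝ => -x) ⁻¹' (s ∩ B) := by
    ext x
    simp only [Set.mem_inter_iff, Set.mem_preimage]
    constructor
    · rintro ⟨h1, h2⟩
      refine ⟨h1, ?_⟩
      rw [hBsym] at h2; exact Set.mem_neg.mp h2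
    · rintro ⟨h1, h2⟩
      refine ⟨h1, ?_⟩
      rw [hBsym]; exact Set.mem_neg.mpr h2
  rw [hset]
  exact (Measure.measurePreserving_neg (volume : Measure ℝ)).measure_preimage
    ((hs.inter hBm).nullMeasurableSet)

/-- `μ` is an extreme point of the set `S` of probability measures: it belongs to `S`
and cannot be written as a nontrivial convex combination of two distinct members of `S`. -/
def ExtremePt (S : Set (Measure ℝ)) (μ : Measure ℝ) : Prop :=
  μ ∈ S ∧ ∀ μ₁ ∈ S, ∀ μ₂ ∈ S, ∀ β : ℝ, 0 < β → β < 1 →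
    μ = ENNReal.ofReal (1 - β) • μ₁ + ENNReal.ofReal β • μ₂ → μ₁ = μ₂

set_option maxHeartbeats 2000000 in
theorem stmt_14 (b N : ℝ) (hb : 0 < b) (hN : 1 / (2 * b) ≤ N) (μ : Measure ℝ) :
    ExtremePt {ν | IsProbabilityMeasure ν ∧ SymmetricDist ν ∧
        ν (Set.Icc (-N) N)ᶜ = 0 ∧
        LipschitzWith (Real.toNNReal b) (fun x => (ν (Set.Iic x)).toReal)} μ ↔
      ∃ B : Set ℝ, MeasurableSet B ∧ B ⊆ Set.Icc (-N) N ∧ B = -B ∧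
        volume B = ENNReal.ofReal (1 / b) ∧
        μ = ENNReal.ofReal b • volume.restrict B := by
  have hb0 : (ENNReal.ofReal b) ≠ 0 := by simp [hb, not_le]
  have hbtop : (ENNReal.ofReal b) ≠ ⊤ := ENNReal.ofReal_ne_top
  constructor
  · intro hext
    obtain ⟨⟨hprob, hsymm, hsupp, hlip⟩, hexc⟩ := hext
    haveI := hprob
    have hle : μ ≤ ENNReal.ofReal b • volume := le_smul_vol hb μ hlip
    have hac : μ ≪ (volume : Measure ℝ) := by
      intro s hs0
      refine le_antisymm ?_ (zero_le)
      have h1 := Measure.le_iff'.mp hle s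
      rwa [Measure.smul_apply, smul_eq_mul, hs0, mul_zero] at h1
    set f := μ.rnDeriv volume with hfdef
    have hfmeas : Measurable f := Measure.measurable_rnDeriv μ volume
    have hμf : volume.withDensity f = μ := Measure.withDensity_rnDeriv_eq μ volume hac
    have hint : ∫⁻ x, f x ∂(volume : Measure ℝ) = 1 := by
      have := congrArg (fun ν : Measure ℝ => ν Set.univ) hμf
      simpa [withDensity_apply _ MeasurableSet.univ] using this
    haveI : SigmaFinite (ENNReal.ofReal b • (volume : Measure ℝ)) := by
      have : ENNReal.ofReal b • (volume : Measure ℝ) = (b.toNNReal : ℝ≥0) • volume := by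
        rw [ENNReal.smul_def]; rfl
      rw [this]; infer_instance
    have hfle : ∀ᵐ x ∂(volume : Measure ℝ), f x ≤ ENNReal.ofReal b := by
      have h1 := Measure.rnDeriv_le_one_of_le hle
      have h1' : ∀ᵐ x ∂(volume : Measure ℝ),
          μ.rnDeriv (ENNReal.ofReal b • volume) x ≤ 1 :=
        (Measure.ae_ennreal_smul_measure_eq hb0 _).ge h1
      have h2 := Measure.rnDeriv_smul_right_of_ne_top μ volume hb0 hbtop
      filter_upwards [h1', h2] with x hx1 hx2
      rw [hx2, Pi.smul_apply, smul_eq_mul] at hx1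
      calc f x = ENNReal.ofReal b * ((ENNReal.ofReal b)⁻¹ * f x) := by
            rw [← mul_assoc, ENNReal.mul_inv_cancel hb0 hbtop, one_mul]
        _ ≤ ENNReal.ofReal b * 1 := mul_le_mul_right hx1 _
        _ = ENNReal.ofReal b := mul_one _
    have hsym' : ∀ᵐ x ∂(volume : Measure ℝ), f (-x) = f x := by
      have h1 : volume.withDensity (fun x => f (-x)) = volume.withDensity f := by
        rw [← map_neg_withDensity f hfmeas, hμf]
        exact hsymm
      have hfi : ∫⁻ x, f (-x) ∂(volume : Measure ℝ) ≠ ⊤ := by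
        rw [(Measure.measurePreserving_neg (volume : Measure ℝ)).lintegral_comp hfmeas, hint]
        exact ENNReal.one_ne_top
      exact (withDensity_eq_iff (hfmeas.comp measurable_neg).aemeasurable
        hfmeas.aemeasurable hfi).mp h1
    have hout : ∀ᵐ x ∂(volume : Measure ℝ), x ∉ Set.Icc (-N) N → f x = 0 := by
      have h0 : ∫⁻ x in (Set.Icc (-N) N)ᶜ, f x ∂(volume : Measure ℝ) = 0 := by
        rw [← withDensity_apply _ measurableSet_Icc.compl, hμf]; exact hsupp
      have h1 := (setLIntegral_eq_zero_iff measurableSet_Icc.compl hfmeas).mp h0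
      filter_upwards [h1] with x hx hx'
      exact hx hx'
    have hdich : ∀ᵐ x ∂(volume : Measure ℝ), f x = 0 ∨ f x = ENNReal.ofReal b := by
      by_contra hcon
      set S : ℕ → Set ℝ := fun n => (Set.Icc (-N) N ∩
          {x | ENNReal.ofReal (1/((n:ℝ)+1)) ≤ f x}) ∩
          {x | f x + ENNReal.ofReal (1/((n:ℝ)+1)) ≤ ENNReal.ofReal b} with hSdef
      have hSm : ∀ n, MeasurableSet (S n) := fun n =>
        (measurableSet_Icc.inter (measurableSet_le measurable_const hfmeas)).inter
          (measurableSet_le (hfmeas.add measurable_const) measurable_const)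
      have hSmem : ∀ n x, x ∈ S n ↔ x ∈ Set.Icc (-N) N ∧
          ENNReal.ofReal (1/((n:ℝ)+1)) ≤ f x ∧
          f x + ENNReal.ofReal (1/((n:ℝ)+1)) ≤ ENNReal.ofReal b := by
        intro n x
        simp only [hSdef, Set.mem_inter_iff, Set.mem_setOf_eq, and_assoc]
      have hpos : ∃ n, volume (S n) ≠ 0 := by
        by_contra hzero
        push_neg at hzero
        have hU : ∀ᵐ x ∂(volume : Measure ℝ), x ∉ ⋃ n, S n :=
          compl_mem_ae_iff.mpr (measure_iUnion_null hzero)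
        apply hcon
        filter_upwards [hfle, hout, hU] with x hx1 hx2 hx3
        by_contra hne
        push_neg at hne
        obtain ⟨hne0, hneb⟩ := hne
        have hxIcc : x ∈ Set.Icc (-N) N := by
          by_contra hc
          exact hne0 (hx2 hc)
        have hflt : f x < ENNReal.ofReal b := lt_of_le_of_ne hx1 hneb
        have hffin : f x ≠ ⊤ := (hflt.trans_le le_top).ne
        have hδ1 : 0 < (f x).toReal := ENNReal.toReal_pos hne0 hffin
        have hsub0 : ENNReal.ofReal b - f x ≠ 0 := by
          rw [ne_eq, tsub_eq_zero_iff_le]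
          exact not_le.mpr hflt
        have hsubfin : ENNReal.ofReal b - f x ≠ ⊤ :=
          (tsub_le_self.trans_lt (ENNReal.ofReal_lt_top)).ne
        have hδ2 : 0 < (ENNReal.ofReal b - f x).toReal := ENNReal.toReal_pos hsub0 hsubfin
        obtain ⟨n, hn⟩ := exists_nat_one_div_lt (lt_min hδ1 hδ2)
        apply hx3
        refine Set.mem_iUnion.mpr ⟨n, (hSmem n x).mpr ⟨hxIcc, ?_, ?_⟩⟩
        · have h1 : (1:ℝ)/((n:ℝ)+1) ≤ (f x).toReal := (hn.trans_le (min_le_left _ _)).le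
          calc ENNReal.ofReal (1/((n:ℝ)+1)) ≤ ENNReal.ofReal ((f x).toReal) :=
                ENNReal.ofReal_le_ofReal h1
            _ = f x := ENNReal.ofReal_toReal hffin
        · have h2 : (1:ℝ)/((n:ℝ)+1) ≤ (ENNReal.ofReal b - f x).toReal :=
            (hn.trans_le (min_le_right _ _)).le
          have h3 : ENNReal.ofReal (1/((n:ℝ)+1)) ≤ ENNReal.ofReal b - f x := by
            calc ENNReal.ofReal (1/((n:ℝ)+1))
                ≤ ENNReal.ofReal ((ENNReal.ofReal b - f x).toReal) :=
                  ENNReal.ofReal_le_ofReal h2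
              _ = _ := ENNReal.ofReal_toReal hsubfin
          calc f x + ENNReal.ofReal (1/((n:ℝ)+1))
              ≤ f x + (ENNReal.ofReal b - f x) := add_le_add_right h3 _
            _ = ENNReal.ofReal b := add_tsub_cancel_of_le hflt.le
      obtain ⟨n, hSn0⟩ := hpos
      set ε : ℝ := 1/((n:ℝ)+1) with hεdef
      have hεpos : 0 < ε := by rw [hεdef]; positivity
      set εE : ℝ≥0∞ := ENNReal.ofReal ε with hεE
      have hεE0 : εE ≠ 0 := by simp [hεE, hεpos, not_le]
      have hεEtop : εE ≠ ⊤ := ENNReal.ofReal_ne_top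
      -- symmetrize the exceptional set
      set E : Set ℝ := S n ∩ (fun x : ℝ => -x) ⁻¹' (S n) with hEdef
      have hEm : MeasurableSet E := (hSm n).inter (measurable_neg (hSm n))
      have hEsub : E ⊆ Set.Icc (-N) N := fun x hx => ((hSmem n x).mp hx.1).1
      have hfE : ∀ x ∈ E, εE ≤ f x ∧ f x + εE ≤ ENNReal.ofReal b := fun x hx =>
        ⟨((hSmem n x).mp hx.1).2.1, ((hSmem n x).mp hx.1).2.2⟩
      have hEsym : ∀ x : ℝ, -x ∈ E ↔ x ∈ E := by
        intro x
        simp only [hEdef, Set.mem_inter_iff, Set.mem_preimage, neg_neg]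
        tauto
      have hEpos : volume E ≠ 0 := by
        intro hE0
        have hT : volume {x : ℝ | ¬ f (-x) = f x} = 0 := ae_iff.mp hsym'
        have hsubset : S n \ E ⊆ {x : ℝ | ¬ f (-x) = f x} := by
          intro x hx
          obtain ⟨hx0, hxE⟩ := hx
          by_contra hcc
          rw [Set.mem_setOf_eq, not_not] at hcc
          apply hxE
          refine ⟨hx0, ?_⟩
          rw [Set.mem_preimage, hSmem]
          obtain ⟨hIcc, h1, h2⟩ := (hSmem n x).mp hx0
          refine ⟨?_, by rw [hcc]; exact h1, by rw [hcc]; exact h2⟩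
          obtain ⟨ha, hb'⟩ := hIcc
          exact ⟨by linarith, by linarith⟩
        apply hSn0
        have : volume (S n) ≤ volume E + volume (S n \ E) := by
          calc volume (S n) ≤ volume (E ∪ S n \ E) :=
                measure_mono (fun x hx => by
                  by_cases hxE : x ∈ E
                  · exact Or.inl hxE
                  · exact Or.inr ⟨hx, hxE⟩)
            _ ≤ volume E + volume (S n \ E) := measure_union_le _ _
        rw [hE0, zero_add] at this
        exact le_antisymm (this.trans ((measure_mono hsubset).trans_eq hT)) (zero_le)
      have hEfin : volume E ≠ ⊤ := by
        refine ((measure_mono hEsub).trans_lt ?_).ne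
        rw [Real.volume_Icc]
        exact ENNReal.ofReal_lt_top
      -- split E into two symmetric halves via IVT
      have h0N : (0:ℝ) ≤ N := le_trans (by positivity) hN
      set φ : ℝ → ℝ := fun t => (volume (E ∩ Set.Icc (-t) t)).toReal with hφdef
      have hfinEt : ∀ t : ℝ, volume (E ∩ Set.Icc (-t) t) ≠ ⊤ := fun t =>
        ((measure_mono Set.inter_subset_left).trans_lt (lt_top_iff_ne_top.mpr hEfin)).ne
      have hkey : ∀ s t : ℝ, s ≤ t → φ s ≤ φ t ∧ φ t ≤ φ s + 2*(t - s) := by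
        intro s t hst
        have hmono : volume (E ∩ Set.Icc (-s) s) ≤ volume (E ∩ Set.Icc (-t) t) :=
          measure_mono (Set.inter_subset_inter_right _ (Set.Icc_subset_Icc (by linarith) hst))
        constructor
        · exact ENNReal.toReal_mono (hfinEt t) hmono
        · have hsub2 : E ∩ Set.Icc (-t) t ⊆
              (E ∩ Set.Icc (-s) s) ∪ (Set.Icc (-t) (-s) ∪ Set.Icc s t) := by
            rintro x ⟨hxE, hx1, hx2⟩
            by_cases h1 : x ∈ Set.Icc (-s) s
            · exact Or.inl ⟨hxE, h1⟩
            · right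
              rw [Set.mem_Icc, not_and_or, not_le, not_le] at h1
              rcases h1 with h1 | h1
              · exact Or.inl ⟨hx1, h1.le⟩
              · exact Or.inr ⟨h1.le, hx2⟩
          have hvle : volume (E ∩ Set.Icc (-t) t) ≤
              volume (E ∩ Set.Icc (-s) s) + ENNReal.ofReal (2*(t - s)) := by
            calc volume (E ∩ Set.Icc (-t) t)
                ≤ volume (E ∩ Set.Icc (-s) s) + volume (Set.Icc (-t) (-s) ∪ Set.Icc s t) :=
                  (measure_mono hsub2).trans (measure_union_le _ _)
              _ ≤ volume (E ∩ Set.Icc (-s) s) +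
                  (volume (Set.Icc (-t) (-s)) + volume (Set.Icc s t)) :=
                  add_le_add_right (measure_union_le _ _) _
              _ = volume (E ∩ Set.Icc (-s) s) + ENNReal.ofReal (2*(t - s)) := by
                  rw [Real.volume_Icc, Real.volume_Icc, ← ENNReal.ofReal_add
                    (by linarith) (by linarith)]
                  congr 2
                  ring
          have := ENNReal.toReal_mono (by
            exact ENNReal.add_ne_top.mpr ⟨hfinEt s, ENNReal.ofReal_ne_top⟩) hvle
          rw [ENNReal.toReal_add (hfinEt s) ENNReal.ofReal_ne_top,
            ENNReal.toReal_ofReal (by linarith)] at this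
          exact this
      have hφcont : Continuous φ := by
        refine LipschitzWith.continuous (K := 2) (LipschitzWith.of_dist_le_mul fun s t => ?_)
        rw [Real.dist_eq, Real.dist_eq]
        rcases le_total s t with h | h
        · obtain ⟨h1, h2⟩ := hkey s t h
          rw [abs_of_nonpos (by linarith), abs_of_nonpos (by linarith)]
          push_cast
          linarith
        · obtain ⟨h1, h2⟩ := hkey t s h
          rw [abs_of_nonneg (by linarith), abs_of_nonneg (by linarith)]
          push_cast
          linarith
      have hφ0 : φ 0 = 0 := by
        have h1 : volume (E ∩ Set.Icc (-(0:ℝ)) 0) = 0 := by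
          refine le_antisymm ?_ (zero_le)
          calc volume (E ∩ Set.Icc (-(0:ℝ)) 0) ≤ volume (Set.Icc (-(0:ℝ)) 0) :=
                measure_mono Set.inter_subset_right
            _ = 0 := by rw [Real.volume_Icc]; simp
        show (volume (E ∩ Set.Icc (-(0:ℝ)) 0)).toReal = 0
        rw [h1, ENNReal.toReal_zero]
      have hφN : φ N = (volume E).toReal := by
        rw [hφdef]
        simp only
        rw [Set.inter_eq_self_of_subset_left hEsub]
      have hmem2 : (volume E).toReal/2 ∈ Set.Icc (φ 0) (φ N) := by
        rw [hφ0, hφN]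
        constructor
        · positivity
        · linarith [ENNReal.toReal_nonneg (a := volume E)]
      obtain ⟨t₀, ht₀mem, ht₀⟩ := intermediate_value_Icc h0N hφcont.continuousOn hmem2
      set A : Set ℝ := E ∩ Set.Icc (-t₀) t₀ with hAdef
      set C : Set ℝ := E \ A with hCdef
      have hAm : MeasurableSet A := hEm.inter measurableSet_Icc
      have hCm : MeasurableSet C := hEm.diff hAm
      have hAsub : A ⊆ E := Set.inter_subset_left
      have hCsub : C ⊆ E := Set.diff_subset
      have hAfin : volume A ≠ ⊤ := ((measure_mono hAsub).trans_lt
        (lt_top_iff_ne_top.mpr hEfin)).ne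
      have hCfin : volume C ≠ ⊤ := ((measure_mono hCsub).trans_lt
        (lt_top_iff_ne_top.mpr hEfin)).ne
      have hvolAC : volume A + volume C = volume E := by
        rw [hAdef, hCdef]
        rw [show E \ (E ∩ Set.Icc (-t₀) t₀) = E \ Set.Icc (-t₀) t₀ from
          Set.diff_self_inter]
        exact measure_inter_add_diff E measurableSet_Icc
      have htoReal : (volume A).toReal = (volume E).toReal/2 := ht₀
      have hEtpos : 0 < (volume E).toReal := ENNReal.toReal_pos hEpos hEfin
      have hApos : volume A ≠ 0 := by
        intro h0
        rw [h0] at htoReal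
        simp at htoReal
        linarith
      have hCtoReal : (volume C).toReal = (volume E).toReal/2 := by
        have := congrArg ENNReal.toReal hvolAC
        rw [ENNReal.toReal_add hAfin hCfin, htoReal] at this
        linarith
      have hCpos : volume C ≠ 0 := by
        intro h0
        rw [h0] at hCtoReal
        simp at hCtoReal
        linarith
      have hvolCA : volume C = volume A :=
        (ENNReal.toReal_eq_toReal_iff' hCfin hAfin).mp (by rw [htoReal, hCtoReal])
      have hAsym : ∀ x : ℝ, -x ∈ A ↔ x ∈ A := by
        intro x
        simp only [hAdef, Set.mem_inter_iff, Set.mem_Icc, hEsym]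
        constructor
        · rintro ⟨h1, h2, h3⟩; exact ⟨h1, by linarith, by linarith⟩
        · rintro ⟨h1, h2, h3⟩; exact ⟨h1, by linarith, by linarith⟩
      have hCsym : ∀ x : ℝ, -x ∈ C ↔ x ∈ C := by
        intro x
        simp only [hCdef, Set.mem_diff, hEsym, hAsym]
      have hACdisj : ∀ x : ℝ, x ∈ A → x ∈ C → False := fun x hxA hxC => hxC.2 hxA
      -- the perturbed densities
      set g₁ : ℝ → ℝ≥0∞ := fun x =>
        (f x + A.indicator (fun _ => εE) x) - C.indicator (fun _ => εE) x with hg₁def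
      set g₂ : ℝ → ℝ≥0∞ := fun x =>
        (f x + C.indicator (fun _ => εE) x) - A.indicator (fun _ => εE) x with hg₂def
      have hg₁m : Measurable g₁ :=
        (hfmeas.add (measurable_const.indicator hAm)).sub (measurable_const.indicator hCm)
      have hg₂m : Measurable g₂ :=
        (hfmeas.add (measurable_const.indicator hCm)).sub (measurable_const.indicator hAm)
      have hvalA : ∀ x ∈ A, g₁ x = f x + εE ∧ g₂ x = f x - εE := by
        intro x hx
        have hxC : x ∉ C := fun hc => hACdisj x hx hc
        rw [hg₁def, hg₂def]
        simp [Set.indicator_of_mem hx, Set.indicator_of_notMem hxC]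
      have hvalC : ∀ x ∈ C, g₁ x = f x - εE ∧ g₂ x = f x + εE := by
        intro x hx
        have hxA : x ∉ A := fun ha => hACdisj x ha hx
        rw [hg₁def, hg₂def]
        simp [Set.indicator_of_mem hx, Set.indicator_of_notMem hxA]
      have hvalO : ∀ x, x ∉ A → x ∉ C → g₁ x = f x ∧ g₂ x = f x := by
        intro x hxA hxC
        rw [hg₁def, hg₂def]
        simp [Set.indicator_of_notMem hxA, Set.indicator_of_notMem hxC]
      have hsum : ∀ x, g₁ x + g₂ x = f x + f x := by
        intro x
        by_cases hxA : x ∈ A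
        · obtain ⟨h1, h2⟩ := hvalA x hxA
          rw [h1, h2, add_assoc, add_tsub_cancel_of_le (hfE x (hAsub hxA)).1]
        · by_cases hxC : x ∈ C
          · obtain ⟨h1, h2⟩ := hvalC x hxC
            rw [h1, h2, add_comm, add_assoc, add_tsub_cancel_of_le (hfE x (hCsub hxC)).1]
          · obtain ⟨h1, h2⟩ := hvalO x hxA hxC
            rw [h1, h2]
      -- integral computations
      have hindA : ∫⁻ x, A.indicator (fun _ => εE) x ∂(volume : Measure ℝ) = εE * volume A :=
        lintegral_indicator_const hAm εE
      have hindC : ∫⁻ x, C.indicator (fun _ => εE) x ∂(volume : Measure ℝ) = εE * volume C :=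
        lintegral_indicator_const hCm εE
      have hεAfin : εE * volume A ≠ ⊤ := ENNReal.mul_ne_top hεEtop hAfin
      have hεCfin : εE * volume C ≠ ⊤ := ENNReal.mul_ne_top hεEtop hCfin
      have hleC : ∀ x, C.indicator (fun _ => εE) x ≤ f x + A.indicator (fun _ => εE) x := by
        intro x
        by_cases hx : x ∈ C
        · rw [Set.indicator_of_mem hx]
          exact le_trans (hfE x (hCsub hx)).1 le_self_add
        · rw [Set.indicator_of_notMem hx]; exact zero_le
      have hleA : ∀ x, A.indicator (fun _ => εE) x ≤ f x + C.indicator (fun _ => εE) x := by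
        intro x
        by_cases hx : x ∈ A
        · rw [Set.indicator_of_mem hx]
          exact le_trans (hfE x (hAsub hx)).1 le_self_add
        · rw [Set.indicator_of_notMem hx]; exact zero_le
      have hg₁int : ∫⁻ x, g₁ x ∂(volume : Measure ℝ) = 1 := by
        rw [hg₁def]
        rw [lintegral_sub (measurable_const.indicator hCm) (by rw [hindC]; exact hεCfin)
          (Filter.Eventually.of_forall hleC)]
        rw [lintegral_add_right _ (measurable_const.indicator hAm), hint, hindA, hindC,
          hvolCA]
        exact ENNReal.add_sub_cancel_right hεAfin
      have hg₂int : ∫⁻ x, g₂ x ∂(volume : Measure ℝ) = 1 := by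
        rw [hg₂def]
        rw [lintegral_sub (measurable_const.indicator hAm) (by rw [hindA]; exact hεAfin)
          (Filter.Eventually.of_forall hleA)]
        rw [lintegral_add_right _ (measurable_const.indicator hCm), hint, hindA, hindC,
          hvolCA]
        exact ENNReal.add_sub_cancel_right hεAfin
      set μ₁ : Measure ℝ := volume.withDensity g₁ with hμ₁def
      set μ₂ : Measure ℝ := volume.withDensity g₂ with hμ₂def
      haveI hμ₁prob : IsProbabilityMeasure μ₁ := ⟨by
        rw [hμ₁def, withDensity_apply _ MeasurableSet.univ, setLIntegral_univ, hg₁int]⟩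
      haveI hμ₂prob : IsProbabilityMeasure μ₂ := ⟨by
        rw [hμ₂def, withDensity_apply _ MeasurableSet.univ, setLIntegral_univ, hg₂int]⟩
      have hg₁le : ∀ᵐ x ∂(volume : Measure ℝ), g₁ x ≤ ENNReal.ofReal b := by
        filter_upwards [hfle] with x hx
        by_cases hxA : x ∈ A
        · rw [(hvalA x hxA).1]
          exact (hfE x (hAsub hxA)).2
        · by_cases hxC : x ∈ C
          · rw [(hvalC x hxC).1]
            exact le_trans tsub_le_self hx
          · rw [(hvalO x hxA hxC).1]
            exact hx
      have hg₂le : ∀ᵐ x ∂(volume : Measure ℝ), g₂ x ≤ ENNReal.ofReal b := by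
        filter_upwards [hfle] with x hx
        by_cases hxA : x ∈ A
        · rw [(hvalA x hxA).2]
          exact le_trans tsub_le_self hx
        · by_cases hxC : x ∈ C
          · rw [(hvalC x hxC).2]
            exact (hfE x (hCsub hxC)).2
          · rw [(hvalO x hxA hxC).2]
            exact hx
      have hμle : ∀ g : ℝ → ℝ≥0∞, Measurable g →
          (∀ᵐ x ∂(volume : Measure ℝ), g x ≤ ENNReal.ofReal b) →
          volume.withDensity g ≤ ENNReal.ofReal b • volume := by
        intro g hgm hgle
        refine Measure.le_iff.mpr fun s hs => ?_
        rw [withDensity_apply _ hs, Measure.smul_apply, smul_eq_mul]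
        calc ∫⁻ x in s, g x ∂volume ≤ ∫⁻ _ in s, ENNReal.ofReal b ∂volume :=
              lintegral_mono_ae (ae_restrict_of_ae hgle)
          _ = ENNReal.ofReal b * volume s := setLIntegral_const s _
      have hindAneg : ∀ x : ℝ, A.indicator (fun _ => εE) (-x) = A.indicator (fun _ => εE) x := by
        intro x
        by_cases hx : x ∈ A
        · rw [Set.indicator_of_mem hx, Set.indicator_of_mem ((hAsym x).mpr hx)]
        · rw [Set.indicator_of_notMem hx,
            Set.indicator_of_notMem (fun h => hx ((hAsym x).mp h))]
      have hindCneg : ∀ x : ℝ, C.indicator (fun _ => εE) (-x) = C.indicator (fun _ => εE) x := by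
        intro x
        by_cases hx : x ∈ C
        · rw [Set.indicator_of_mem hx, Set.indicator_of_mem ((hCsym x).mpr hx)]
        · rw [Set.indicator_of_notMem hx,
            Set.indicator_of_notMem (fun h => hx ((hCsym x).mp h))]
      have hμ₁sym : SymmetricDist μ₁ := by
        show μ₁.map (fun x => -x) = μ₁
        rw [hμ₁def, map_neg_withDensity g₁ hg₁m]
        refine withDensity_congr_ae ?_
        filter_upwards [hsym'] with x hx
        simp only [hg₁def]
        rw [hx, hindAneg, hindCneg]
      have hμ₂sym : SymmetricDist μ₂ := by
        show μ₂.map (fun x => -x) = μ₂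
        rw [hμ₂def, map_neg_withDensity g₂ hg₂m]
        refine withDensity_congr_ae ?_
        filter_upwards [hsym'] with x hx
        simp only [hg₂def]
        rw [hx, hindAneg, hindCneg]
      have hsupp' : ∀ g : ℝ → ℝ≥0∞, Measurable g →
          (∀ᵐ x ∂(volume : Measure ℝ), x ∉ Set.Icc (-N) N → g x = 0) →
          (volume.withDensity g) (Set.Icc (-N) N)ᶜ = 0 := by
        intro g hgm hg0
        rw [withDensity_apply _ measurableSet_Icc.compl]
        rw [setLIntegral_eq_zero_iff measurableSet_Icc.compl hgm]
        filter_upwards [hg0] with x hx hx'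
        exact hx hx'
      have hg₁out : ∀ᵐ x ∂(volume : Measure ℝ), x ∉ Set.Icc (-N) N → g₁ x = 0 := by
        filter_upwards [hout] with x hx hx'
        have hxA : x ∉ A := fun h => hx' (hEsub (hAsub h))
        have hxC : x ∉ C := fun h => hx' (hEsub (hCsub h))
        rw [(hvalO x hxA hxC).1, hx hx']
      have hg₂out : ∀ᵐ x ∂(volume : Measure ℝ), x ∉ Set.Icc (-N) N → g₂ x = 0 := by
        filter_upwards [hout] with x hx hx'
        have hxA : x ∉ A := fun h => hx' (hEsub (hAsub h))
        have hxC : x ∉ C := fun h => hx' (hEsub (hCsub h))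
        rw [(hvalO x hxA hxC).2, hx hx']
      have hhalf : ENNReal.ofReal ((2:ℝ)⁻¹) * 2 = 1 := by
        rw [show ((2:ℝ≥0∞)) = ENNReal.ofReal (2:ℝ) from (ENNReal.ofReal_ofNat 2).symm,
          ← ENNReal.ofReal_mul (by norm_num)]
        norm_num
      have hmixeq : μ = ENNReal.ofReal (1 - 2⁻¹) • μ₁ + ENNReal.ofReal 2⁻¹ • μ₂ := by
        have h12 : (1 - 2⁻¹ : ℝ) = 2⁻¹ := by norm_num
        rw [h12, ← smul_add]
        have hsum' : μ₁ + μ₂ = volume.withDensity (fun x => f x + f x) := by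
          rw [hμ₁def, hμ₂def, ← withDensity_add_left hg₁m g₂]
          exact congrArg _ (funext hsum)
        rw [hsum']
        rw [show (fun x => f x + f x) = f + f from rfl, withDensity_add_left hfmeas f, hμf,
          ← two_smul ℝ≥0∞ μ, smul_smul, hhalf, one_smul]
      have h12 := hexc μ₁ ⟨hμ₁prob, hμ₁sym, hsupp' g₁ hg₁m hg₁out,
          lip_of_le hb.le μ₁ (hμle g₁ hg₁m hg₁le)⟩
        μ₂ ⟨hμ₂prob, hμ₂sym, hsupp' g₂ hg₂m hg₂out,
          lip_of_le hb.le μ₂ (hμle g₂ hg₂m hg₂le)⟩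
        2⁻¹ (by norm_num) (by norm_num) hmixeq
      have hμ₁A : μ₁ A = (∫⁻ x in A, f x ∂volume) + εE * volume A := by
        rw [hμ₁def, withDensity_apply _ hAm]
        rw [setLIntegral_congr_fun hAm
          (fun x hx => (hvalA x hx).1)]
        rw [lintegral_add_right _ measurable_const, setLIntegral_const]
      have hμ₂A : μ₂ A ≤ ∫⁻ x in A, f x ∂volume := by
        rw [hμ₂def, withDensity_apply _ hAm]
        rw [setLIntegral_congr_fun hAm
          (fun x hx => (hvalA x hx).2)]
        exact lintegral_mono fun x => tsub_le_self
      have hIAfin : (∫⁻ x in A, f x ∂(volume : Measure ℝ)) ≠ ⊤ := by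
        refine ((setLIntegral_le_lintegral A f).trans_lt ?_).ne
        rw [hint]
        exact ENNReal.one_lt_top
      have hlt : (∫⁻ x in A, f x ∂volume) < μ₁ A := by
        rw [hμ₁A]
        exact ENNReal.lt_add_right hIAfin (mul_ne_zero hεE0 hApos)
      rw [h12] at hlt
      exact absurd hμ₂A (not_le.mpr hlt)
    -- assemble B
    set B₀ : Set ℝ := Set.Icc (-N) N ∩ f ⁻¹' {ENNReal.ofReal b} with hB₀
    set B : Set ℝ := B₀ ∩ (fun x : ℝ => -x) ⁻¹' B₀ with hBdef
    have hB₀m : MeasurableSet B₀ := measurableSet_Icc.inter (hfmeas (measurableSet_singleton _))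
    have hBm : MeasurableSet B := hB₀m.inter (measurable_neg hB₀m)
    have hBsub : B ⊆ Set.Icc (-N) N := fun x hx => hx.1.1
    have hBsym : B = -B := by
      ext x
      simp only [hBdef, Set.mem_neg, Set.mem_inter_iff, Set.mem_preimage, neg_neg]
      tauto
    have hfeq : f =ᵐ[(volume : Measure ℝ)] B.indicator (fun _ => ENNReal.ofReal b) := by
      filter_upwards [hdich, hsym', hout] with x hdx hsx hox
      by_cases hxB : x ∈ B
      · rw [Set.indicator_of_mem hxB]
        exact hxB.1.2
      · rw [Set.indicator_of_notMem hxB]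
        rcases hdx with h | h
        · exact h
        · exfalso
          have hxIcc : x ∈ Set.Icc (-N) N := by
            by_contra hc
            rw [hox hc] at h
            exact hb0 h.symm
          have hxB₀ : x ∈ B₀ := ⟨hxIcc, h⟩
          have hnxB₀ : -x ∈ B₀ := by
            refine ⟨?_, ?_⟩
            · obtain ⟨h1, h2⟩ := hxIcc
              exact ⟨by linarith, by linarith⟩
            · exact Set.mem_preimage.mpr (by rw [Set.mem_singleton_iff, hsx]; exact h)
          exact hxB ⟨hxB₀, by simpa using hnxB₀⟩
    have hμeq : μ = ENNReal.ofReal b • volume.restrict B := by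
      rw [← hμf, withDensity_congr_ae hfeq, withDensity_indicator hBm, withDensity_const]
    have hvolB : volume B = ENNReal.ofReal (1 / b) := by
      have h1 : ENNReal.ofReal b * volume B = 1 := by
        have := congrArg (fun ν : Measure ℝ => ν Set.univ) hμeq
        simp only [measure_univ, Measure.smul_apply, smul_eq_mul,
          Measure.restrict_apply MeasurableSet.univ, Set.univ_inter] at this
        exact this.symm
      have h2 : volume B = (ENNReal.ofReal b)⁻¹ := by
        calc volume B = (ENNReal.ofReal b)⁻¹ * (ENNReal.ofReal b * volume B) := by
              rw [← mul_assoc, ENNReal.inv_mul_cancel hb0 hbtop, one_mul]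
          _ = (ENNReal.ofReal b)⁻¹ := by rw [h1, mul_one]
      rw [h2, one_div, ENNReal.ofReal_inv_of_pos hb]
    exact ⟨B, hBm, hBsub, hBsym, hvolB, hμeq⟩
  · rintro ⟨B, hBm, hBsub, hBsym, hBvol, rfl⟩
    set μB : Measure ℝ := ENNReal.ofReal b • volume.restrict B with hμB
    have hBfin : volume B ≠ ⊤ := by rw [hBvol]; exact ENNReal.ofReal_ne_top
    have hμBprob : IsProbabilityMeasure μB := by
      constructor
      rw [hμB, Measure.smul_apply, smul_eq_mul, Measure.restrict_apply MeasurableSet.univ,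
        Set.univ_inter, hBvol, ← ENNReal.ofReal_mul hb.le, mul_one_div_cancel hb.ne',
        ENNReal.ofReal_one]
    have hμBle : μB ≤ ENNReal.ofReal b • volume := by
      intro s
      rw [Measure.smul_apply, Measure.smul_apply, smul_eq_mul, smul_eq_mul]
      exact mul_le_mul_right (Measure.restrict_le_self s) _
    have hμBmem : μB ∈ {ν : Measure ℝ | IsProbabilityMeasure ν ∧ SymmetricDist ν ∧
        ν (Set.Icc (-N) N)ᶜ = 0 ∧
        LipschitzWith (Real.toNNReal b) (fun x => (ν (Set.Iic x)).toReal)} := by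
      refine ⟨hμBprob, ?_, ?_, lip_of_le hb.le μB hμBle⟩
      · show μB.map (fun x => -x) = μB
        rw [hμB, Measure.map_smul, map_neg_restrict B hBm hBsym]
      · rw [hμB, Measure.smul_apply, smul_eq_mul,
          Measure.restrict_apply (measurableSet_Icc.compl)]
        have : (Set.Icc (-N) N)ᶜ ∩ B = ∅ := by
          ext x; simp only [Set.mem_inter_iff, Set.mem_compl_iff, Set.mem_empty_iff_false,
            iff_false, not_and]
          exact fun hx hxB => hx (hBsub hxB)
        rw [this, measure_empty, mul_zero]
    refine ⟨hμBmem, ?_⟩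
    rintro μ₁ ⟨hμ₁p, -, -, hμ₁lip⟩ μ₂ ⟨hμ₂p, -, -, hμ₂lip⟩ β hβ0 hβ1 hmix
    have hμ₁le := le_smul_vol hb μ₁ hμ₁lip
    have hμ₂le := le_smul_vol hb μ₂ hμ₂lip
    -- key: for every measurable s, μᵢ s = μB s
    have hzero : ∀ s : Set ℝ, MeasurableSet s → μ₁ (s ∩ Bᶜ) = 0 ∧ μ₂ (s ∩ Bᶜ) = 0 := by
      intro s hs
      have hμBz : μB (s ∩ Bᶜ) = 0 := by
        rw [hμB, Measure.smul_apply, smul_eq_mul, Measure.restrict_apply (hs.inter hBm.compl)]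
        have : s ∩ Bᶜ ∩ B = ∅ := by
          ext x; simp only [Set.mem_inter_iff, Set.mem_compl_iff, Set.mem_empty_iff_false,
            iff_false, not_and]
          tauto
        rw [this, measure_empty, mul_zero]
      have := congrArg (fun ν : Measure ℝ => ν (s ∩ Bᶜ)) hmix
      simp only [Measure.add_apply, Measure.smul_apply, smul_eq_mul] at this
      rw [hμBz] at this
      have h2 := (add_eq_zero.mp this.symm)
      constructor
      · rcases mul_eq_zero.mp h2.1 with h | h
        · exact absurd h (by simp only [ENNReal.ofReal_eq_zero, not_le]; linarith)
        · exact h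
      · rcases mul_eq_zero.mp h2.2 with h | h
        · exact absurd h (by simp only [ENNReal.ofReal_eq_zero, not_le]; linarith)
        · exact h
    have hinB : ∀ s : Set ℝ, MeasurableSet s → μ₁ (s ∩ B) = μB (s ∩ B) ∧
        μ₂ (s ∩ B) = μB (s ∩ B) := by
      intro s hs
      have hm : μB (s ∩ B) = ENNReal.ofReal b * volume (s ∩ B) := by
        rw [hμB, Measure.smul_apply, smul_eq_mul, Measure.restrict_apply (hs.inter hBm),
          Set.inter_assoc, Set.inter_self]
      have h1le : μ₁ (s ∩ B) ≤ μB (s ∩ B) := by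
        rw [hm]; exact (hμ₁le (s ∩ B)).trans_eq (by rw [Measure.smul_apply, smul_eq_mul])
      have h2le : μ₂ (s ∩ B) ≤ μB (s ∩ B) := by
        rw [hm]; exact (hμ₂le (s ∩ B)).trans_eq (by rw [Measure.smul_apply, smul_eq_mul])
      have hmixs := congrArg (fun ν : Measure ℝ => ν (s ∩ B)) hmix
      simp only [Measure.add_apply, Measure.smul_apply, smul_eq_mul] at hmixs
      -- pass to reals
      have hfin1 : μ₁ (s ∩ B) ≠ ⊤ := measure_ne_top μ₁ _
      have hfin2 : μ₂ (s ∩ B) ≠ ⊤ := measure_ne_top μ₂ _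
      have hfinB : μB (s ∩ B) ≠ ⊤ := measure_ne_top μB _
      set x₁ := (μ₁ (s ∩ B)).toReal
      set x₂ := (μ₂ (s ∩ B)).toReal
      set y := (μB (s ∩ B)).toReal
      have hx1 : x₁ ≤ y := ENNReal.toReal_mono hfinB h1le
      have hx2 : x₂ ≤ y := ENNReal.toReal_mono hfinB h2le
      have heq : y = (1 - β) * x₁ + β * x₂ := by
        have := congrArg ENNReal.toReal hmixs
        rwa [ENNReal.toReal_add (ENNReal.mul_ne_top ENNReal.ofReal_ne_top hfin1)
          (ENNReal.mul_ne_top ENNReal.ofReal_ne_top hfin2), ENNReal.toReal_mul,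
          ENNReal.toReal_mul, ENNReal.toReal_ofReal (by linarith), ENNReal.toReal_ofReal hβ0.le]
          at this
      have hx1' : x₁ = y := by nlinarith
      have hx2' : x₂ = y := by nlinarith
      exact ⟨(ENNReal.toReal_eq_toReal_iff' hfin1 hfinB).mp hx1',
        (ENNReal.toReal_eq_toReal_iff' hfin2 hfinB).mp hx2'⟩
    ext s hs
    have d1 : μ₁ s = μ₁ (s ∩ B) + μ₁ (s ∩ Bᶜ) := by
      rw [← measure_inter_add_diff s hBm, Set.diff_eq]
    have d2 : μ₂ s = μ₂ (s ∩ B) + μ₂ (s ∩ Bᶜ) := by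
      rw [← measure_inter_add_diff s hBm, Set.diff_eq]
    rw [d1, d2, (hzero s hs).1, (hzero s hs).2, (hinB s hs).1, (hinB s hs).2]
end
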